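/- arXiv:math/0505550 — 10 statements merged into one kernel-verified Lean document; each statement's English description precedes it below -/
import Mathlib

section
/- Let H be a subgroup of a group G. If H is 2-subnormal in G, i.e., there is a subgroup N with H normal in N and N normal in G, then H is protonormal in G: for every x ∈ G, the subgroups x⁻¹Hx and H commute, that is, (x⁻¹Hx)H = H(x⁻¹Hx). -/
open scoped Pointwise

/-- If `H` is 2-subnormal in `G` (there is a subgroup `N` with `H ◁ N ◁ G`), then `H`
is protonormal in `G`: for every `x ∈ G` the subgroups `x⁻¹Hx` and `H` commute as sets,
i.e. `(x⁻¹Hx)H = H(x⁻¹Hx)`. -/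
theorem stmt4 {G : Type*} [Group G] (H : Subgroup G)
    (hsub : ∃ N : Subgroup G, H ≤ N ∧ (∀ n ∈ N, ∀ h ∈ H, n * h * n⁻¹ ∈ H) ∧ N.Normal) :
    ∀ x : G,
      ((fun g => x⁻¹ * g * x) '' (H : Set G)) * (H : Set G)
        = (H : Set G) * ((fun g => x⁻¹ * g * x) '' (H : Set G)) := by
  obtain ⟨N, hHN, hnorm, hN⟩ := hsub
  intro x
  -- any conjugate x⁻¹ h x with h ∈ H lies in N
  have hkN : ∀ h ∈ H, x⁻¹ * h * x ∈ N := by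
    intro h hh
    simpa using hN.conj_mem h (hHN hh) x⁻¹
  ext z
  constructor
  · rintro ⟨_, ⟨h, hh, rfl⟩, b, hb, rfl⟩
    refine ⟨(x⁻¹ * h * x) * b * (x⁻¹ * h * x)⁻¹, hnorm _ (hkN h hh) b hb,
      x⁻¹ * h * x, ⟨h, hh, rfl⟩, by group⟩
  · rintro ⟨b, hb, _, ⟨h, hh, rfl⟩, rfl⟩
    refine ⟨x⁻¹ * h * x, ⟨h, hh, rfl⟩,
      (x⁻¹ * h * x)⁻¹ * b * (x⁻¹ * h * x), ?_, by group⟩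
    simpa using hnorm _ (N.inv_mem (hkN h hh)) b hb
end

section
/- Let H be a protonormal subgroup of a group G and let x₁, …, xₙ ∈ G. Then the product of conjugates (x₁⁻¹Hx₁)(x₂⁻¹Hx₂)⋯(xₙ⁻¹Hxₙ) is itself a protonormal subgroup of G. -/
open scoped Pointwise

namespace Stmt6Aux

variable {G : Type*} [Group G]

/-- The conjugate set `a⁻¹ H a`. -/
def cs (H : Subgroup G) (a : G) : Set G := (fun g => a⁻¹ * g * a) '' (H : Set G)

lemma conj_fun_eq (a : G) : (fun g : G => a⁻¹ * g * a) = ⇑(MulAut.conj a⁻¹) := by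
  funext g; simp [MulAut.conj_apply]

lemma cs_eq_coe (H : Subgroup G) (a : G) :
    cs H a = ↑(H.map (MulAut.conj a⁻¹).toMonoidHom) := by
  rw [Subgroup.coe_map, cs, conj_fun_eq]
  rfl

lemma image_conj_mul (a : G) (s t : Set G) :
    (fun g : G => a⁻¹ * g * a) '' (s * t)
      = ((fun g : G => a⁻¹ * g * a) '' s) * ((fun g : G => a⁻¹ * g * a) '' t) := by
  rw [conj_fun_eq]
  exact Set.image_mul _

lemma image_conj_one (a : G) :
    (fun g : G => a⁻¹ * g * a) '' (1 : Set G) = 1 := by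
  ext g
  simp [conj_fun_eq]

lemma conj_comp (H : Subgroup G) (a c : G) :
    (fun g : G => a⁻¹ * g * a) '' (cs H c) = cs H (c * a) := by
  unfold cs
  rw [Set.image_image]
  apply Set.image_congr
  intro g _
  group

lemma cs_comm (H : Subgroup G)
    (hproto : ∀ x : G,
      ((fun g => x⁻¹ * g * x) '' (H : Set G)) * (H : Set G)
        = (H : Set G) * ((fun g => x⁻¹ * g * x) '' (H : Set G)))
    (a b : G) : cs H a * cs H b = cs H b * cs H a := by
  have hb : cs H b = (fun g : G => a⁻¹ * g * a) '' (cs H (b * a⁻¹)) := by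
    rw [conj_comp]; group
  have ha : cs H a = (fun g : G => a⁻¹ * g * a) '' (H : Set G) := rfl
  rw [hb, ha, ← image_conj_mul, ← image_conj_mul]
  exact congrArg ((fun g : G => a⁻¹ * g * a) '' ·) (hproto (b * a⁻¹)).symm

lemma cs_prod_comm (H : Subgroup G)
    (hproto : ∀ x : G,
      ((fun g => x⁻¹ * g * x) '' (H : Set G)) * (H : Set G)
        = (H : Set G) * ((fun g => x⁻¹ * g * x) '' (H : Set G)))
    (l : List G) (b : G) :
    (l.map (cs H)).prod * cs H b = cs H b * (l.map (cs H)).prod := by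
  induction l with
  | nil => simp
  | cons a l ih =>
      simp only [List.map_cons, List.prod_cons]
      rw [mul_assoc, ih, ← mul_assoc, cs_comm H hproto, mul_assoc]

lemma prod_prod_comm (H : Subgroup G)
    (hproto : ∀ x : G,
      ((fun g => x⁻¹ * g * x) '' (H : Set G)) * (H : Set G)
        = (H : Set G) * ((fun g => x⁻¹ * g * x) '' (H : Set G)))
    (l m : List G) :
    (l.map (cs H)).prod * (m.map (cs H)).prod
      = (m.map (cs H)).prod * (l.map (cs H)).prod := by
  induction m with
  | nil => simp
  | cons b m ih =>
      simp only [List.map_cons, List.prod_cons]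
      rw [← mul_assoc, cs_prod_comm H hproto, mul_assoc, ih, ← mul_assoc]

/-- Product of two commuting subgroups is a subgroup. -/
lemma mul_subgroup (A B : Subgroup G)
    (h : (A : Set G) * (B : Set G) = (B : Set G) * (A : Set G)) :
    ∃ K : Subgroup G, (K : Set G) = (A : Set G) * (B : Set G) := by
  refine ⟨{ carrier := (A : Set G) * (B : Set G), mul_mem' := ?_, one_mem' := ?_,
            inv_mem' := ?_ }, rfl⟩
  · rintro z1 z2 ⟨a1, ha1, b1, hb1, rfl⟩ ⟨a2, ha2, b2, hb2, rfl⟩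
    have hmem : b1 * a2 ∈ (A : Set G) * (B : Set G) := by
      rw [h]; exact Set.mul_mem_mul hb1 ha2
    obtain ⟨a', ha', b', hb', heq⟩ := hmem
    have h2 : b1 * a2 = a' * b' := heq.symm
    have h3 : a1 * b1 * (a2 * b2) = (a1 * a') * (b' * b2) := by
      calc a1 * b1 * (a2 * b2) = a1 * (b1 * a2) * b2 := by group
        _ = a1 * (a' * b') * b2 := by rw [h2]
        _ = (a1 * a') * (b' * b2) := by group
    rw [h3]
    exact Set.mul_mem_mul (mul_mem ha1 ha') (mul_mem hb' hb2)
  · exact ⟨1, one_mem A, 1, one_mem B, by simp⟩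
  · rintro z ⟨a, ha, b, hb, rfl⟩
    have h1 : (a * b)⁻¹ = b⁻¹ * a⁻¹ := by group
    show (a * b)⁻¹ ∈ (A : Set G) * (B : Set G)
    rw [h1, h]
    exact Set.mul_mem_mul (inv_mem hb) (inv_mem ha)

lemma exists_subgroup (H : Subgroup G)
    (hproto : ∀ x : G,
      ((fun g => x⁻¹ * g * x) '' (H : Set G)) * (H : Set G)
        = (H : Set G) * ((fun g => x⁻¹ * g * x) '' (H : Set G)))
    (l : List G) :
    ∃ K : Subgroup G, (K : Set G) = (l.map (cs H)).prod := by
  induction l with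
  | nil => exact ⟨⊥, by simp [Set.singleton_one]⟩
  | cons a l ih =>
      obtain ⟨K', hK'⟩ := ih
      set A := H.map (MulAut.conj a⁻¹).toMonoidHom with hA
      have hAcoe : (A : Set G) = cs H a := (cs_eq_coe H a).symm
      have hcomm : (A : Set G) * (K' : Set G) = (K' : Set G) * (A : Set G) := by
        rw [hAcoe, hK']
        exact (cs_prod_comm H hproto l a).symm
      obtain ⟨K, hK⟩ := mul_subgroup A K' hcomm
      refine ⟨K, ?_⟩
      rw [hK, hAcoe, hK']
      simp [List.prod_cons]

lemma image_prod (H : Subgroup G) (y : G) (l : List G) :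
    (fun g : G => y⁻¹ * g * y) '' (l.map (cs H)).prod
      = ((l.map (fun a => a * y)).map (cs H)).prod := by
  induction l with
  | nil => simpa using image_conj_one y
  | cons a l ih =>
      simp only [List.map_cons, List.prod_cons]
      rw [image_conj_mul, conj_comp, ih]

end Stmt6Aux

/-- If `H` is a protonormal subgroup of `G` and `x₁, …, xₙ ∈ G`, then the set product
`(x₁⁻¹Hx₁)(x₂⁻¹Hx₂)⋯(xₙ⁻¹Hxₙ)` is a subgroup of `G` which is itself protonormal. -/
theorem stmt6 {G : Type*} [Group G] (H : Subgroup G)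
    (hproto : ∀ x : G,
      ((fun g => x⁻¹ * g * x) '' (H : Set G)) * (H : Set G)
        = (H : Set G) * ((fun g => x⁻¹ * g * x) '' (H : Set G)))
    (n : ℕ) (x : Fin n → G) :
    ∃ K : Subgroup G,
      (K : Set G) = (List.ofFn fun i : Fin n => (fun g => (x i)⁻¹ * g * (x i)) '' (H : Set G)).prod ∧
      ∀ y : G,
        ((fun g => y⁻¹ * g * y) '' (K : Set G)) * (K : Set G)
          = (K : Set G) * ((fun g => y⁻¹ * g * y) '' (K : Set G)) := by
  classical
  set l : List G := List.ofFn x with hl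
  have hlist : (List.ofFn fun i : Fin n => (fun g => (x i)⁻¹ * g * (x i)) '' (H : Set G))
      = l.map (Stmt6Aux.cs H) := by
    rw [hl, List.map_ofFn]
    rfl
  obtain ⟨K, hK⟩ := Stmt6Aux.exists_subgroup H hproto l
  refine ⟨K, by rw [hK, hlist], ?_⟩
  intro y
  rw [hK, Stmt6Aux.image_prod H y l]
  exact Stmt6Aux.prod_prod_comm H hproto _ _
end

section
/- Let H be a subgroup of a group G. The following are equivalent: (i) for every x ∈ G and h, k ∈ H, (xhx⁻¹)k(xhx⁻¹)⁻¹ ∈ H; (ii) for every x ∈ G and h ∈ H, H(xhx⁻¹) = (xhx⁻¹)H; (iii) H is normal in the intersection of all normal subgroups of G containing H; (iv) there exists a subgroup N of G with H normal in N and N normal in G. -/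
open scoped Pointwise

/-- For a subgroup `H` of a group `G` the following are equivalent:
(i) for every `x ∈ G` and `h, k ∈ H`, `(xhx⁻¹)k(xhx⁻¹)⁻¹ ∈ H`;
(ii) for every `x ∈ G` and `h ∈ H`, `H(xhx⁻¹) = (xhx⁻¹)H`;
(iii) `H` is normal in the intersection of all normal subgroups of `G` containing `H`;
(iv) there exists a subgroup `N` of `G` with `H ◁ N ◁ G`. -/
theorem stmt7 {G : Type*} [Group G] (H : Subgroup G) :
    List.TFAE
      [ ∀ x : G, ∀ h ∈ H, ∀ k ∈ H, (x * h * x⁻¹) * k * (x * h * x⁻¹)⁻¹ ∈ H,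
        ∀ x : G, ∀ h ∈ H,
          (H : Set G) * {x * h * x⁻¹} = ({x * h * x⁻¹} : Set G) * (H : Set G),
        ∀ n ∈ (⨅ N ∈ {N : Subgroup G | N.Normal ∧ H ≤ N}, N), ∀ h ∈ H, n * h * n⁻¹ ∈ H,
        ∃ N : Subgroup G, H ≤ N ∧ (∀ n ∈ N, ∀ h ∈ H, n * h * n⁻¹ ∈ H) ∧ N.Normal ] := by
  -- the infimum equals the normal closure of H
  have hinf : (⨅ N ∈ {N : Subgroup G | N.Normal ∧ H ≤ N}, N) =
      Subgroup.normalClosure (H : Set G) := by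
    apply le_antisymm
    · exact iInf_le_of_le (Subgroup.normalClosure (H : Set G))
        (iInf_le_of_le ⟨Subgroup.normalClosure_normal, Subgroup.subset_normalClosure⟩ le_rfl)
    · exact le_iInf fun N => le_iInf fun ⟨hN, hHN⟩ =>
        Subgroup.normalClosure_le_normal hHN
  have key : (∀ x : G, ∀ h ∈ H, ∀ k ∈ H, (x * h * x⁻¹) * k * (x * h * x⁻¹)⁻¹ ∈ H) →
      ∀ x : G, ∀ h ∈ H, ∀ k ∈ H, (x * h * x⁻¹)⁻¹ * k * (x * h * x⁻¹) ∈ H := by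
    intro h1 x h hh k hk
    have := h1 x h⁻¹ (H.inv_mem hh) k hk
    simpa [mul_assoc] using this
  tfae_have 1 → 2 := by
    intro h1 x h hh
    ext a
    rw [Set.mem_mul, Set.mem_mul]
    constructor
    · rintro ⟨y, hy, z, hz, rfl⟩
      rw [Set.mem_singleton_iff] at hz; subst hz
      exact ⟨x * h * x⁻¹, rfl, (x * h * x⁻¹)⁻¹ * y * (x * h * x⁻¹),
        key h1 x h hh y hy, by group⟩
    · rintro ⟨z, hz, y, hy, rfl⟩
      rw [Set.mem_singleton_iff] at hz; subst hz
      exact ⟨(x * h * x⁻¹) * y * (x * h * x⁻¹)⁻¹, h1 x h hh y hy,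
        x * h * x⁻¹, rfl, by group⟩
  tfae_have 2 → 1 := by
    intro h2 x h hh k hk
    have := h2 x h hh
    have hmem : (x * h * x⁻¹) * k ∈ (({x * h * x⁻¹} : Set G) * (H : Set G)) :=
      ⟨x * h * x⁻¹, rfl, k, hk, rfl⟩
    rw [← this] at hmem
    obtain ⟨y, hy, z, hz, hyz⟩ := hmem
    simp only [Set.mem_singleton_iff] at hz
    subst hz
    have : (x * h * x⁻¹) * k * (x * h * x⁻¹)⁻¹ = y := by
      rw [← hyz]; group
    rw [this]; exact hy
  tfae_have 1 → 3 := by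
    intro h1 n hn h hh
    -- use the subgroup of elements normalizing H in both directions
    let K : Subgroup G :=
      { carrier := {g | ∀ k ∈ H, g * k * g⁻¹ ∈ H ∧ g⁻¹ * k * g ∈ H}
        one_mem' := by
          intro k hk
          simp only [one_mul, inv_one, mul_one]
          exact ⟨hk, hk⟩
        mul_mem' := by
          rintro a b ha hb k hk
          constructor
          · have := (ha (b * k * b⁻¹) (hb k hk).1).1
            simpa [mul_assoc] using this
          · have := (hb (a⁻¹ * k * a) (ha k hk).2).2
            simpa [mul_assoc] using this
        inv_mem' := by
          rintro a ha k hk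
          exact ⟨by simpa using (ha k hk).2, by simpa using (ha k hk).1⟩ }
    have hle : Subgroup.normalClosure (H : Set G) ≤ K := by
      rw [Subgroup.normalClosure]
      apply (Subgroup.closure_le K).2
      intro g hg
      rw [Group.mem_conjugatesOfSet_iff] at hg
      obtain ⟨a, haH, hconj⟩ := hg
      rw [isConj_iff] at hconj
      obtain ⟨c, hc⟩ := hconj
      subst hc
      intro k hk
      exact ⟨h1 c a haH k hk, key h1 c a haH k hk⟩
    rw [hinf] at hn
    exact (hle hn h hh).1
  tfae_have 3 → 4 := by
    intro h3
    refine ⟨⨅ N ∈ {N : Subgroup G | N.Normal ∧ H ≤ N}, N, ?_, h3, ?_⟩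
    · rw [hinf]; exact Subgroup.subset_normalClosure
    · rw [hinf]; exact Subgroup.normalClosure_normal
  tfae_have 4 → 1 := by
    rintro ⟨N, hHN, hconj, hNnorm⟩ x h hh k hk
    exact hconj (x * h * x⁻¹) (hNnorm.conj_mem h (hHN hh) x) k hk
  tfae_finish
end

section
/- Let H be a subnormal subgroup of a group G and let x, y ∈ G. If S is a family of representatives for the right coset space (H ∩ H^x H^{y⁻¹})\H, then HxHyH is the disjoint union over h ∈ S of the double cosets HxhyH. Conversely, any subset S of H for which HxHyH is the disjoint union of the HxhyH, h ∈ S, is a family of representatives for (H ∩ H^x H^{y⁻¹})\H. -/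
open scoped Pointwise

/-- Let `H` be subnormal in `G` and `x, y ∈ G`.  A subset `S ⊆ H` is a family of
representatives for the right coset space `(H ∩ H^x H^{y⁻¹})\H` if and only if
`HxHyH` is the disjoint union over `h ∈ S` of the double cosets `HxhyH`. -/
theorem stmt9 {G : Type*} [Group G] (H : Subgroup G)
    (hsub : ∃ N : Subgroup G, H ≤ N ∧ (∀ n ∈ N, ∀ h ∈ H, n * h * n⁻¹ ∈ H) ∧ N.Normal)
    (x y : G) (S : Set G) (hS : S ⊆ H) :
    (∀ g ∈ H, ∃! s, s ∈ S ∧ g * s⁻¹ ∈ H ∧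
        g * s⁻¹ ∈ ((fun g => x⁻¹ * g * x) '' (H : Set G)) *
          ((fun g => y * g * y⁻¹) '' (H : Set G))) ↔
    ((H : Set G) * {x} * (H : Set G) * {y} * (H : Set G)
        = ⋃ h ∈ S, (H : Set G) * {x * h * y} * (H : Set G)) ∧
      S.PairwiseDisjoint (fun h => (H : Set G) * {x * h * y} * (H : Set G)) := by
  obtain ⟨N, hHN, hconj, hN⟩ := hsub
  set P : Set G := ((fun g => x⁻¹ * g * x) '' (H : Set G)) *
      ((fun g => y * g * y⁻¹) '' (H : Set G)) with hPdef
  have memP : ∀ g : G, g ∈ P ↔ ∃ a ∈ H, ∃ b ∈ H, g = (x⁻¹ * a * x) * (y * b * y⁻¹) := by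
    intro g
    constructor
    · rintro ⟨u, ⟨a, ha, rfl⟩, v, ⟨b, hb, rfl⟩, rfl⟩
      exact ⟨a, ha, b, hb, rfl⟩
    · rintro ⟨a, ha, b, hb, rfl⟩
      exact ⟨_, ⟨a, ha, rfl⟩, _, ⟨b, hb, rfl⟩, rfl⟩
  have mem_doub : ∀ c g : G,
      (g ∈ (H : Set G) * {c} * (H : Set G)) ↔ ∃ p ∈ H, ∃ q ∈ H, p * c * q = g := by
    intro c g
    constructor
    · rintro ⟨u, ⟨p, hp, m, rfl, rfl⟩, q, hq, rfl⟩
      exact ⟨p, hp, q, hq, rfl⟩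
    · rintro ⟨p, hp, q, hq, rfl⟩
      exact ⟨p * c, ⟨p, hp, c, rfl, rfl⟩, q, hq, rfl⟩
  have mem_big : ∀ g : G,
      (g ∈ (H : Set G) * {x} * (H : Set G) * {y} * (H : Set G)) ↔
        ∃ p ∈ H, ∃ h ∈ H, ∃ q ∈ H, p * x * h * y * q = g := by
    intro g
    constructor
    · rintro ⟨u, ⟨v, ⟨w, ⟨p, hp, m, rfl, rfl⟩, h, hh, rfl⟩, m', rfl, rfl⟩, q, hq, rfl⟩
      exact ⟨p, hp, h, hh, q, hq, rfl⟩
    · rintro ⟨p, hp, h, hh, q, hq, rfl⟩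
      exact ⟨p * x * h * y, ⟨p * x * h, ⟨p * x, ⟨p, hp, x, rfl, rfl⟩, h, hh, rfl⟩,
        y, rfl, rfl⟩, q, hq, rfl⟩
  -- conjugating y b y⁻¹ by elements of N stays in y H y⁻¹
  have conjmem : ∀ b ∈ H, ∀ n ∈ N, ∃ b' ∈ H, n⁻¹ * (y * b * y⁻¹) * n = y * b' * y⁻¹ := by
    intro b hb n hn
    have hm : y⁻¹ * n⁻¹ * y ∈ N := by
      have := hN.conj_mem n⁻¹ (inv_mem hn) y⁻¹
      simpa using this
    refine ⟨(y⁻¹ * n⁻¹ * y) * b * (y⁻¹ * n⁻¹ * y)⁻¹, hconj _ hm b hb, ?_⟩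
    group
  have keyF : ∀ h ∈ H, ∀ h' ∈ H, ∀ a ∈ H, ∀ b ∈ H,
      a * (x * h * y) * b = x * h' * y → h' * h⁻¹ ∈ P := by
    intro h hh h' hh' a ha b hb eq1
    obtain ⟨b', hb', eq2⟩ := conjmem b hb h⁻¹ (inv_mem (hHN hh))
    refine (memP _).mpr ⟨a, ha, b', hb', ?_⟩
    have hh'e : h' = x⁻¹ * (a * (x * h * y) * b) * y⁻¹ := by rw [eq1]; group
    rw [hh'e, ← eq2]; group
  have keyB : ∀ h ∈ H, ∀ h' ∈ H, h' * h⁻¹ ∈ P →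
      ∃ a ∈ H, ∃ b ∈ H, a * (x * h * y) * b = x * h' * y := by
    intro h hh h' hh' hP'
    obtain ⟨a, ha, b, hb, eqP⟩ := (memP _).mp hP'
    obtain ⟨b', hb', eq2⟩ := conjmem b hb h (hHN hh)
    refine ⟨a, ha, b', hb', ?_⟩
    have hh'e : h' = (x⁻¹ * a * x) * (y * b * y⁻¹) * h := by rw [← eqP]; group
    have hb'e : b' = y⁻¹ * (h⁻¹ * (y * b * y⁻¹) * h) * y := by rw [eq2]; group
    rw [hh'e, hb'e]; group
  constructor
  · intro hL
    constructor
    · ext w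
      simp only [Set.mem_iUnion]
      constructor
      · intro hw
        obtain ⟨p, hp, h, hh, q, hq, rfl⟩ := (mem_big w).mp hw
        obtain ⟨s, ⟨hsS, _, hsP⟩, _⟩ := hL h hh
        obtain ⟨a, ha, b, hb, heq⟩ := keyB s (hS hsS) h hh hsP
        refine ⟨s, hsS, (mem_doub _ _).mpr ⟨p * a, mul_mem hp ha, b * q, mul_mem hb hq, ?_⟩⟩
        have e : p * a * (x * s * y) * (b * q) = p * (a * (x * s * y) * b) * q := by group
        rw [e, heq]; group
      · rintro ⟨s, hsS, hw⟩
        obtain ⟨p, hp, q, hq, rfl⟩ := (mem_doub _ w).mp hw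
        exact (mem_big _).mpr ⟨p, hp, s, hS hsS, q, hq, by group⟩
    · intro s hsS t htS hst
      rw [Function.onFun, Set.disjoint_left]
      intro w hws hwt
      obtain ⟨p, hp, q, hq, he1⟩ := (mem_doub _ w).mp hws
      obtain ⟨p', hp', q', hq', he2⟩ := (mem_doub _ w).mp hwt
      have heq : (p'⁻¹ * p) * (x * s * y) * (q * q'⁻¹) = x * t * y := by
        have h2 : x * t * y = p'⁻¹ * w * q'⁻¹ := by rw [← he2]; group
        rw [h2, ← he1]; group
      have htP : t * s⁻¹ ∈ P :=
        keyF s (hS hsS) t (hS htS) _ (mul_mem (inv_mem hp') hp) _ (mul_mem hq (inv_mem hq')) heq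
      obtain ⟨u, hu, huniq⟩ := hL t (hS htS)
      have e1 : s = u := huniq s ⟨hsS, mul_mem (hS htS) (inv_mem (hS hsS)), htP⟩
      have e2 : t = u := by
        refine huniq t ⟨htS, ?_, ?_⟩
        · simpa using one_mem H
        · have h1 : t * t⁻¹ = (1 : G) := by group
          rw [h1]
          exact (memP _).mpr ⟨1, one_mem _, 1, one_mem _, by group⟩
      exact hst (e1.trans e2.symm)
  · rintro ⟨hun, hdis⟩ g hg
    have hmem : x * g * y ∈ (H : Set G) * {x} * (H : Set G) * {y} * (H : Set G) :=
      (mem_big _).mpr ⟨1, one_mem _, g, hg, 1, one_mem _, by group⟩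
    rw [hun] at hmem
    simp only [Set.mem_iUnion] at hmem
    obtain ⟨s, hsS, hws⟩ := hmem
    obtain ⟨p, hp, q, hq, heq⟩ := (mem_doub _ _).mp hws
    have hgP : g * s⁻¹ ∈ P := keyF s (hS hsS) g hg p hp q hq heq
    refine ⟨s, ⟨hsS, mul_mem hg (inv_mem (hS hsS)), hgP⟩, ?_⟩
    rintro t ⟨htS, _, htP⟩
    obtain ⟨a1, ha1, b1, hb1, e1⟩ := keyB s (hS hsS) g hg hgP
    obtain ⟨a2, ha2, b2, hb2, e2⟩ := keyB t (hS htS) g hg htP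
    by_contra hne
    have hdisj := hdis htS hsS hne
    rw [Function.onFun, Set.disjoint_left] at hdisj
    exact hdisj ((mem_doub _ _).mpr ⟨a2, ha2, b2, hb2, e2⟩)
      ((mem_doub _ _).mpr ⟨a1, ha1, b1, hb1, e1⟩)
end

section
/- Let (G,H) be a Hecke pair over a field F of characteristic zero, and for a ∈ H(G,H) let f_a : G → F be defined by f_a(t) = the coefficient of δ_{Ht} in a(δ_H). Then for every a in the Hecke algebra, f_a is constant on each double coset HgH, and its support is contained in a finite union of double cosets. -/
open scoped Pointwise Classical


/-- The free `F`-vector space on the right coset space `H\G`. -/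
abbrev HeckeModule {G : Type*} [Group G] (H : Subgroup G) (F : Type*) [Field F] :=
  Quotient (QuotientGroup.rightRel H) →₀ F

/-- The basis vector `δ_{Ht}` of `F(H\G)`. -/
noncomputable def deltaH {G : Type*} [Group G] (H : Subgroup G) (F : Type*) [Field F]
    (t : G) : HeckeModule H F :=
  Finsupp.single (Quotient.mk (QuotientGroup.rightRel H) t) 1

/-- `T` is the Hecke operator `σ_x`: there is a (finite) family of representatives `S`
for the right coset space `(H ∩ x⁻¹Hx)\H` such that
`T(δ_{Ht}) = |S|⁻¹ • Σ_{h ∈ S} δ_{Hxht}` for all `t ∈ G`. -/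
def IsSigma {G : Type*} [Group G] (H : Subgroup G) (F : Type*) [Field F] (x : G)
    (T : Module.End F (HeckeModule H F)) : Prop :=
  ∃ S : Finset G, (↑S : Set G) ⊆ (H : Set G) ∧
    (∀ g ∈ H, ∃! s, s ∈ S ∧ g * s⁻¹ ∈ H ∧ x * (g * s⁻¹) * x⁻¹ ∈ H) ∧
    ∀ t : G, T (deltaH H F t) = (S.card : F)⁻¹ • ∑ h ∈ S, deltaH H F (x * h * t)

/-- `(G, H)` is a Hecke pair: `[H : H ∩ x⁻¹Hx] < ∞` for all `x ∈ G`. -/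
def IsHeckePair {G : Type*} [Group G] (H : Subgroup G) : Prop :=
  ∀ x : G, (H ⊓ H.comap (MulAut.conj x).toMonoidHom).relIndex H ≠ 0

section Aux

variable {G : Type*} [Group G] (H : Subgroup G) (F : Type*) [Field F]

/-- Right translation by `k` on the coset space. -/
noncomputable def phiH (k : G) :
    Quotient (QuotientGroup.rightRel H) → Quotient (QuotientGroup.rightRel H) :=
  Quotient.map' (· * k) (fun a b hab => by
    rw [QuotientGroup.rightRel_apply] at hab ⊢
    simpa [mul_assoc] using hab)

lemma phiH_mk (k t : G) : phiH H k (Quotient.mk (QuotientGroup.rightRel H) t)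
    = Quotient.mk (QuotientGroup.rightRel H) (t * k) := rfl

lemma phiH_injective (k : G) : Function.Injective (phiH H k) := by
  have : Function.LeftInverse (phiH H k⁻¹) (phiH H k) := by
    intro c
    induction c using Quotient.inductionOn' with
    | h t => show phiH H k⁻¹ (phiH H k (Quotient.mk _ t)) = _
             rw [phiH_mk, phiH_mk, mul_inv_cancel_right]
  exact this.injective

/-- Right translation by `k` on the Hecke module. -/
noncomputable def rmulH (k : G) : Module.End F (HeckeModule H F) :=
  Finsupp.lmapDomain F F (phiH H k)

lemma deltaH_congr {t t' : G} (h : Quotient.mk (QuotientGroup.rightRel H) t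
    = Quotient.mk (QuotientGroup.rightRel H) t') : deltaH H F t = deltaH H F t' := by
  unfold deltaH; rw [h]

lemma rmulH_deltaH (k t : G) : rmulH H F k (deltaH H F t) = deltaH H F (t * k) := by
  simp [rmulH, deltaH, Finsupp.mapDomain_single, phiH_mk]

lemma rmulH_apply (k t : G) (v : HeckeModule H F) :
    rmulH H F k v (Quotient.mk (QuotientGroup.rightRel H) (t * k))
      = v (Quotient.mk (QuotientGroup.rightRel H) t) := by
  rw [rmulH, Finsupp.lmapDomain_apply, ← phiH_mk H k t,
    Finsupp.mapDomain_apply (phiH_injective H k)]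

lemma sigma_comm {x : G} {T : Module.End F (HeckeModule H F)} (hT : IsSigma H F x T)
    (k : G) : T * rmulH H F k = rmulH H F k * T := by
  obtain ⟨S, hS, htrans, hform⟩ := hT
  refine Finsupp.lhom_ext fun c b => ?_
  induction c using Quotient.inductionOn' with
  | h t =>
    have hb : (Finsupp.single (Quotient.mk'' t) b : HeckeModule H F) = b • deltaH H F t := by
      simp [deltaH, Finsupp.smul_single]
    rw [hb, map_smul, map_smul]
    congr 1
    show T (rmulH H F k (deltaH H F t)) = rmulH H F k (T (deltaH H F t))
    rw [rmulH_deltaH, hform, hform, map_smul, map_sum]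
    simp only [rmulH_deltaH, mul_assoc]

/-- The support-in-finitely-many-double-cosets property. -/
def FSupp {G : Type*} [Group G] (H : Subgroup G) {F : Type*} [Field F]
    (v : HeckeModule H F) : Prop :=
  ∃ D : Finset G, ∀ t : G, v (Quotient.mk (QuotientGroup.rightRel H) t) ≠ 0 →
    ∃ d ∈ D, t ∈ (H : Set G) * {d} * (H : Set G)

lemma sigma_fsupp {x : G} {T : Module.End F (HeckeModule H F)} (hT : IsSigma H F x T)
    (v : HeckeModule H F) (hv : FSupp H v) : FSupp H (T v) := by
  obtain ⟨S, hS, htrans, hform⟩ := hT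
  obtain ⟨D, hD⟩ := hv
  refine ⟨(S ×ˢ D).image (fun p => x * p.1 * p.2), fun t ht => ?_⟩
  -- decompose v into basis vectors
  have hv' : v = ∑ c ∈ v.support, Finsupp.single c (v c) := (Finsupp.sum_single v).symm
  rw [hv', map_sum, Finsupp.finset_sum_apply] at ht
  obtain ⟨c, hc, hne⟩ := Finset.exists_ne_zero_of_sum_ne_zero ht
  have hcout : (Finsupp.single c (v c) : HeckeModule H F) = v c • deltaH H F c.out := by
    simp [deltaH, Finsupp.smul_single, Quotient.out_eq]
  rw [hcout, map_smul, hform, Finsupp.smul_apply, Finsupp.smul_apply,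
    Finsupp.finset_sum_apply] at hne
  have hne2 : ∑ h ∈ S, (deltaH H F (x * h * c.out))
      (Quotient.mk (QuotientGroup.rightRel H) t) ≠ 0 := by
    intro h0; rw [h0] at hne; simp at hne
  obtain ⟨h, hhS, hdne⟩ := Finset.exists_ne_zero_of_sum_ne_zero hne2
  -- the coset of t equals that of x*h*c.out
  have hqq : Quotient.mk (QuotientGroup.rightRel H) t
      = Quotient.mk (QuotientGroup.rightRel H) (x * h * c.out) := by
    by_contra hc0
    exact hdne (Finsupp.single_eq_of_ne hc0)
  have h1mem : (x * h * c.out) * t⁻¹ ∈ H := by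
    have := Quotient.exact' hqq
    rwa [QuotientGroup.rightRel_apply] at this
  -- c.out lies in a double coset H d H
  have hvcout : v (Quotient.mk (QuotientGroup.rightRel H) c.out) ≠ 0 := by
    rw [Quotient.out_eq]; exact Finsupp.mem_support_iff.mp hc
  obtain ⟨d, hdD, hmem⟩ := hD c.out hvcout
  obtain ⟨p, ⟨a, haH, b, hb, rfl⟩, q, hqH, heq⟩ := hmem
  have hbd : b = d := Set.mem_singleton_iff.mp hb
  rw [hbd] at heq
  -- h * a ∈ H; pick its representative s in S
  obtain ⟨s, ⟨hsS, hs1, hs2⟩, -⟩ := htrans (h * a) (H.mul_mem (hS hhS) haH)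
  refine ⟨x * s * d, Finset.mem_image.mpr ⟨(s, d), Finset.mem_product.mpr ⟨hsS, hdD⟩, rfl⟩, ?_⟩
  have hteq : t = ((((x * h * c.out) * t⁻¹)⁻¹ * (x * (h * a * s⁻¹) * x⁻¹)) * (x * s * d)) * q := by
    have hco : c.out = a * d * q := heq.symm
    rw [hco]
    group
  rw [hteq]
  exact Set.mul_mem_mul
    (Set.mul_mem_mul (H.mul_mem (H.inv_mem h1mem) hs2) rfl) hqH

end Aux

/-- For every `a` in the Hecke algebra (the subalgebra of `End(F(H\G))` generated by
the operators `σ_x`), the function `f_a(t) = coefficient of δ_{Ht} in a(δ_H)` is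
constant on each double coset `HgH`, and its support is contained in a finite union
of double cosets. -/
theorem stmt12 {G : Type*} [Group G] (H : Subgroup G) (F : Type*) [Field F] [CharZero F]
    (hH : IsHeckePair H) :
    ∀ a ∈ Algebra.adjoin F {T : Module.End F (HeckeModule H F) | ∃ x : G, IsSigma H F x T},
      (∀ g : G, ∀ h ∈ H, ∀ k ∈ H,
          (a (deltaH H F 1)) (Quotient.mk (QuotientGroup.rightRel H) (h * g * k))
            = (a (deltaH H F 1)) (Quotient.mk (QuotientGroup.rightRel H) g)) ∧
      (∃ D : Finset G, ∀ t : G,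
          (a (deltaH H F 1)) (Quotient.mk (QuotientGroup.rightRel H) t) ≠ 0 →
            ∃ d ∈ D, t ∈ (H : Set G) * {d} * (H : Set G)) := by
  intro a ha
  -- part 1: every element of the adjoin commutes with the right translations
  have hcomm : ∀ k : G, a * rmulH H F k = rmulH H F k * a := by
    intro k
    induction ha using Algebra.adjoin_induction with
    | mem T hT => obtain ⟨x, hx⟩ := hT; exact sigma_comm H F hx k
    | algebraMap r => exact (Algebra.commutes r _)
    | add x y hx hy ihx ihy => rw [add_mul, mul_add, ihx, ihy]
    | mul x y hx hy ihx ihy =>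
        rw [mul_assoc, ihy, ← mul_assoc, ihx, mul_assoc]
  -- part 2: every element of the adjoin preserves FSupp
  have hfs : ∀ v : HeckeModule H F, FSupp H v → FSupp H (a v) := by
    clear hcomm
    induction ha using Algebra.adjoin_induction with
    | mem T hT => obtain ⟨x, hx⟩ := hT; exact sigma_fsupp H F hx
    | algebraMap r =>
        intro v ⟨D, hD⟩
        refine ⟨D, fun t ht => hD t ?_⟩
        rw [Module.algebraMap_end_apply, Finsupp.smul_apply] at ht
        exact fun h0 => ht (by rw [h0, smul_zero])
    | add x y hx hy ihx ihy =>
        intro v hv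
        obtain ⟨D1, hD1⟩ := ihx v hv
        obtain ⟨D2, hD2⟩ := ihy v hv
        refine ⟨D1 ∪ D2, fun t ht => ?_⟩
        rw [LinearMap.add_apply, Finsupp.add_apply] at ht
        by_cases h0 : x v (Quotient.mk (QuotientGroup.rightRel H) t) = 0
        · rw [h0, zero_add] at ht
          obtain ⟨d, hd, hm⟩ := hD2 t ht
          exact ⟨d, Finset.mem_union_right _ hd, hm⟩
        · obtain ⟨d, hd, hm⟩ := hD1 t h0
          exact ⟨d, Finset.mem_union_left _ hd, hm⟩
    | mul x y hx hy ihx ihy =>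
        intro v hv
        exact ihx _ (ihy v hv)
  constructor
  · intro g h hh k hk
    -- left H-invariance : H(hgk) = H(gk)
    have h1 : Quotient.mk (QuotientGroup.rightRel H) (h * g * k)
        = Quotient.mk (QuotientGroup.rightRel H) (g * k) := by
      apply Quotient.sound'
      rw [QuotientGroup.rightRel_apply]
      simpa [mul_assoc] using H.inv_mem hh
    rw [h1]
    -- right H-invariance via commuting with rmulH k
    have hfix : rmulH H F k (deltaH H F 1) = deltaH H F 1 := by
      rw [rmulH_deltaH]
      refine deltaH_congr H F (Quotient.sound' ?_)
      rw [QuotientGroup.rightRel_apply]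
      simpa using H.inv_mem hk
    have key : a (deltaH H F 1) = rmulH H F k (a (deltaH H F 1)) := by
      have h2 := LinearMap.congr_fun (hcomm k) (deltaH H F 1)
      rw [Module.End.mul_apply, Module.End.mul_apply, hfix] at h2
      exact h2
    conv_lhs => rw [key]
    rw [rmulH_apply]
  · have hδ : FSupp H (deltaH H F (1 : G)) := by
      refine ⟨{1}, fun t ht => ⟨1, Finset.mem_singleton_self 1, ?_⟩⟩
      have h1 : Quotient.mk (QuotientGroup.rightRel H) t
          = Quotient.mk (QuotientGroup.rightRel H) (1 : G) := by
        by_contra hc0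
        exact ht (Finsupp.single_eq_of_ne hc0)
      have htH : t ∈ H := by
        have := Quotient.exact' h1
        rw [QuotientGroup.rightRel_apply] at this
        simpa using this
      exact ⟨1 * 1, Set.mul_mem_mul H.one_mem rfl, t, htH, by group⟩
    exact hfs _ hδ
end

section
/- Let (G,H) be a Hecke pair and define the hermitian form on F(H\G) by ⟪δ_{Ht}, δ_{Hs}⟫ = Δ(s) if Ht = Hs and 0 otherwise, where Δ(s) = R(s)/R(s⁻¹). Then for every x ∈ G and all ξ, η ∈ F(H\G), ⟪σ_x(ξ), η⟫ = ⟪ξ, σ_{x⁻¹}(η)⟫. -/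
open scoped Pointwise Classical


section Stmt14Aux
set_option linter.unusedSectionVars false
open Subgroup
variable {G : Type*} [Group G]

noncomputable def cnj (H : Subgroup G) (g : G) : Subgroup G :=
  H.comap (MulAut.conj g).toMonoidHom

lemma mem_cnj {H : Subgroup G} {g a : G} : a ∈ cnj H g ↔ g * a * g⁻¹ ∈ H := by
  simp [cnj, Subgroup.mem_comap]

lemma cnj_cnj (H : Subgroup G) (x y : G) : cnj (cnj H x) y = cnj H (x*y) := by
  ext a; simp [mem_cnj, mul_assoc]

lemma cnj_one (H : Subgroup G) : cnj H 1 = H := by ext a; simp [mem_cnj]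

lemma cnj_inf (A B : Subgroup G) (g : G) : cnj (A ⊓ B) g = cnj A g ⊓ cnj B g :=
  Subgroup.comap_inf A B _

lemma cnj_eq_of_mem {H : Subgroup G} {h : G} (hh : h ∈ H) : cnj H h = H := by
  ext a
  rw [mem_cnj]
  constructor
  · intro ha
    have := mul_mem (mul_mem (inv_mem hh) ha) hh
    simpa [mul_assoc] using this
  · intro ha; exact mul_mem (mul_mem hh ha) (inv_mem hh)

lemma relindex_cnj (A B : Subgroup G) (g : G) :
    (cnj A g).relIndex (cnj B g) = A.relIndex B := by
  unfold cnj
  rw [Subgroup.relIndex_comap,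
    Subgroup.map_comap_eq_self_of_surjective (MulAut.conj g).surjective]

variable (F : Type*) [Field F] [CharZero F]

noncomputable def ind (F : Type*) [Field F] {G : Type*} [Group G] (A B : Subgroup G) : F :=
  ((A ⊓ B).relIndex A : F) / ((A ⊓ B).relIndex B : F)

lemma ind_eq_div {A B D : Subgroup G} (hD : D ≤ A ⊓ B) (h1 : D.relIndex A ≠ 0) :
    ind F A B = (D.relIndex A : F) / (D.relIndex B : F) := by
  have e1 : D.relIndex (A ⊓ B) * (A ⊓ B).relIndex A = D.relIndex A :=
    relIndex_mul_relIndex _ _ _ hD inf_le_left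
  have e2 : D.relIndex (A ⊓ B) * (A ⊓ B).relIndex B = D.relIndex B :=
    relIndex_mul_relIndex _ _ _ hD inf_le_right
  have hm : (D.relIndex (A ⊓ B) : F) ≠ 0 := by
    have : D.relIndex (A ⊓ B) ≠ 0 := fun h => h1 (by rw [← e1, h, zero_mul])
    exact_mod_cast Nat.cast_ne_zero.mpr this
  rw [← e1, ← e2, ind, Nat.cast_mul, Nat.cast_mul, mul_div_mul_left _ _ hm]

lemma ind_mul {A B C : Subgroup G}
    (hAB : (A ⊓ B).relIndex A ≠ 0) (hBA : (A ⊓ B).relIndex B ≠ 0)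
    (hBC : (B ⊓ C).relIndex B ≠ 0) (hAC : (A ⊓ C).relIndex A ≠ 0) :
    ind F A B * ind F B C = ind F A C := by
  set D := A ⊓ (B ⊓ C) with hDdef
  have hDA : D.relIndex A ≠ 0 := by
    have h1 : ((A ⊓ B) ⊓ (A ⊓ C)).relIndex A ≠ 0 := relIndex_inf_ne_zero hAB hAC
    have : (A ⊓ B) ⊓ (A ⊓ C) = D := by
      ext a; simp only [Subgroup.mem_inf, hDdef]; tauto
    rwa [this] at h1
  have hDB : D.relIndex B ≠ 0 := by
    have hBA' : (B ⊓ A).relIndex B ≠ 0 := by rwa [inf_comm] at hBA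
    have h1 : ((B ⊓ A) ⊓ (B ⊓ C)).relIndex B ≠ 0 := relIndex_inf_ne_zero hBA' hBC
    have : (B ⊓ A) ⊓ (B ⊓ C) = D := by
      ext a; simp only [Subgroup.mem_inf, hDdef]; tauto
    rwa [this] at h1
  have hDleAB : D ≤ A ⊓ B :=
    le_inf inf_le_left (le_trans inf_le_right inf_le_left)
  have hDleBC : D ≤ B ⊓ C := inf_le_right
  have hDleAC : D ≤ A ⊓ C :=
    le_inf inf_le_left (le_trans inf_le_right inf_le_right)
  rw [ind_eq_div F hDleAB hDA, ind_eq_div F hDleBC hDB, ind_eq_div F hDleAC hDA]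
  have hb : (D.relIndex B : F) ≠ 0 := Nat.cast_ne_zero.mpr hDB
  field_simp

lemma ind_cnj (A B : Subgroup G) (g : G) : ind F (cnj A g) (cnj B g) = ind F A B := by
  rw [ind, ind, ← cnj_inf, relindex_cnj, relindex_cnj]

/-- `Δ(g) = R(g)/R(g⁻¹)` as an element of `F`. -/
noncomputable def dd {G : Type*} [Group G] (H : Subgroup G) (F : Type*) [Field F] (g : G) : F :=
  ind F H (cnj H g)

lemma relindex_inf_cnj (H : Subgroup G) (g : G) :
    (H ⊓ cnj H g).relIndex (cnj H g) = (H ⊓ cnj H g⁻¹).relIndex H := by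
  have := relindex_cnj (H ⊓ cnj H g) (cnj H g) g⁻¹
  rw [cnj_inf, cnj_cnj, mul_inv_cancel, cnj_one, inf_comm (cnj H g⁻¹) H] at this
  exact this.symm

lemma dd_eq (H : Subgroup G) (g : G) :
    dd H F g = ((H ⊓ cnj H g).relIndex H : F) / ((H ⊓ cnj H g⁻¹).relIndex H : F) := by
  rw [dd, ind, relindex_inf_cnj]

lemma dd_mul (H : Subgroup G) (hH : ∀ g : G, (H ⊓ cnj H g).relIndex H ≠ 0) (x y : G) :
    dd H F (x * y) = dd H F x * dd H F y := by
  have hBC : (cnj H y ⊓ cnj H (x*y)).relIndex (cnj H y) ≠ 0 := by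
    rw [← cnj_cnj H x y, ← cnj_inf, relindex_cnj]; exact hH x
  have hBA : (H ⊓ cnj H y).relIndex (cnj H y) ≠ 0 := by
    rw [relindex_inf_cnj]; exact hH y⁻¹
  have key := ind_mul F (A := H) (B := cnj H y) (C := cnj H (x*y))
    (hH y) hBA hBC (hH (x*y))
  have e2 : ind F (cnj H y) (cnj H (x*y)) = ind F H (cnj H x) := by
    rw [← cnj_cnj H x y, ind_cnj]
  rw [e2] at key
  rw [dd, ← key, dd, dd, mul_comm]

lemma dd_left (H : Subgroup G) {h : G} (hh : h ∈ H) (g : G) :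
    dd H F (h * g) = dd H F g := by
  rw [dd, ← cnj_cnj, cnj_eq_of_mem hh, dd]

section Transversal
variable {H : Subgroup G} {x : G} {S : Finset G}

lemma mk_eq_mk {a b : G} :
    Quotient.mk (QuotientGroup.rightRel H) a = Quotient.mk (QuotientGroup.rightRel H) b
      ↔ b * a⁻¹ ∈ H := by
  rw [Quotient.eq]
  exact QuotientGroup.rightRel_apply

variable (hS1 : (↑S : Set G) ⊆ (H : Set G))
  (hS2 : ∀ g ∈ H, ∃! s, s ∈ S ∧ g * s⁻¹ ∈ H ∧ x * (g * s⁻¹) * x⁻¹ ∈ H)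

include hS1 hS2 in
lemma card_S : S.card = (H ⊓ cnj H x).relIndex H := by
  classical
  set K : Subgroup H := (H ⊓ cnj H x).subgroupOf H with hK
  let f : S → Quotient (QuotientGroup.rightRel K) :=
    fun s => Quotient.mk _ ⟨s.1, hS1 s.2⟩
  have hfbij : Function.Bijective f := by
    constructor
    · rintro ⟨s1, h1⟩ ⟨s2, h2⟩ heq
      have hrel : (⟨s2, hS1 h2⟩ : H) * (⟨s1, hS1 h1⟩ : H)⁻¹ ∈ K := by
        rw [← QuotientGroup.rightRel_apply, ← Quotient.eq]
        exact heq
      rw [hK, Subgroup.mem_subgroupOf] at hrel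
      have hmem : s2 * s1⁻¹ ∈ H ⊓ cnj H x := hrel
      rw [Subgroup.mem_inf, mem_cnj] at hmem
      have hu := hS2 s2 (hS1 h2)
      have e1 : s1 = s2 := by
        have c1 : s1 ∈ S ∧ s2 * s1⁻¹ ∈ H ∧ x * (s2 * s1⁻¹) * x⁻¹ ∈ H :=
          ⟨h1, hmem.1, hmem.2⟩
        have c2 : s2 ∈ S ∧ s2 * s2⁻¹ ∈ H ∧ x * (s2 * s2⁻¹) * x⁻¹ ∈ H := by
          simp [h2, one_mem]
        exact (hu.unique c1 c2)
      exact Subtype.ext e1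
    · intro q
      induction q using Quotient.ind with
      | _ g =>
        obtain ⟨s, ⟨hsS, hs1, hs2⟩, -⟩ := hS2 g.1 g.2
        refine ⟨⟨s, hsS⟩, ?_⟩
        show Quotient.mk _ _ = _
        rw [Quotient.eq]
        rw [QuotientGroup.rightRel_apply]
        rw [hK, Subgroup.mem_subgroupOf]
        show (g : G) * s⁻¹ ∈ H ⊓ cnj H x
        rw [Subgroup.mem_inf, mem_cnj]
        exact ⟨hs1, hs2⟩
  calc S.card = Nat.card S := (Nat.card_eq_finsetCard S).symm
    _ = Nat.card (Quotient (QuotientGroup.rightRel K)) :=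
        Nat.card_congr (Equiv.ofBijective f hfbij)
    _ = Nat.card (H ⧸ K) :=
        Nat.card_congr (QuotientGroup.quotientRightRelEquivQuotientLeftRel K)
    _ = K.index := rfl
    _ = (H ⊓ cnj H x).relIndex H := rfl

include hS1 hS2 in
lemma unique_h {t s : G} {h1 h2 : G} (hh1 : h1 ∈ S) (hh2 : h2 ∈ S)
    (e1 : Quotient.mk (QuotientGroup.rightRel H) (x * h1 * t)
        = Quotient.mk (QuotientGroup.rightRel H) s)
    (e2 : Quotient.mk (QuotientGroup.rightRel H) (x * h2 * t)
        = Quotient.mk (QuotientGroup.rightRel H) s) : h1 = h2 := by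
  rw [mk_eq_mk] at e1 e2
  have key : x * (h2 * h1⁻¹) * x⁻¹ ∈ H := by
    have := mul_mem (inv_mem e2) e1
    have e : (s * (x * h2 * t)⁻¹)⁻¹ * (s * (x * h1 * t)⁻¹) = x * (h2 * h1⁻¹) * x⁻¹ := by
      group
    rwa [e] at this
  have hmem : h2 * h1⁻¹ ∈ H := mul_mem (hS1 hh2) (inv_mem (hS1 hh1))
  have hu := hS2 h2 (hS1 hh2)
  exact hu.unique ⟨hh1, hmem, key⟩ (by simp [hh2, one_mem])

include hS1 hS2 in
lemma cond_iff {t s : G} :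
    (∃ h ∈ S, Quotient.mk (QuotientGroup.rightRel H) (x * h * t)
        = Quotient.mk (QuotientGroup.rightRel H) s)
      ↔ ∃ a ∈ H, ∃ b ∈ H, s = a * x * b * t := by
  constructor
  · rintro ⟨h, hhS, he⟩
    rw [mk_eq_mk] at he
    refine ⟨s * (x * h * t)⁻¹, he, h, hS1 hhS, by group⟩
  · rintro ⟨a, ha, b, hb, rfl⟩
    obtain ⟨h, ⟨hhS, hb1, hb2⟩, -⟩ := hS2 b hb
    refine ⟨h, hhS, ?_⟩
    rw [mk_eq_mk]
    have e : a * x * b * t * (x * h * t)⁻¹ = a * (x * (b * h⁻¹) * x⁻¹) := by group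
    rw [e]
    exact mul_mem ha hb2

end Transversal


end Stmt14Aux

/-- Let `(G, H)` be a Hecke pair, `R(x) = [H : H ∩ x⁻¹Hx]`, and let `B` be the
hermitian form on `F(H\G)` determined by `⟪δ_{Ht}, δ_{Hs}⟫ = Δ(s) = R(s)/R(s⁻¹)` if
`Ht = Hs` and `0` otherwise.  Then `⟪σ_x ξ, η⟫ = ⟪ξ, σ_{x⁻¹} η⟫` for all `ξ, η`. -/
theorem stmt14 {G : Type*} [Group G] (H : Subgroup G) (F : Type*) [Field F] [CharZero F]
    (hH : IsHeckePair H)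
    (B : HeckeModule H F →ₗ[F] HeckeModule H F →ₗ[F] F)
    (hB : ∀ t s : G,
      B (deltaH H F t) (deltaH H F s)
        = if Quotient.mk (QuotientGroup.rightRel H) t
              = Quotient.mk (QuotientGroup.rightRel H) s
          then ((H ⊓ H.comap (MulAut.conj s).toMonoidHom).relIndex H : F) /
               ((H ⊓ H.comap (MulAut.conj s⁻¹).toMonoidHom).relIndex H : F)
          else 0)
    (x : G) (σx σxi : Module.End F (HeckeModule H F))
    (hx : IsSigma H F x σx) (hxi : IsSigma H F x⁻¹ σxi) :
    ∀ ξ η : HeckeModule H F, B (σx ξ) η = B ξ (σxi η) := by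
  classical
  obtain ⟨Sx, hx1, hx2, hx3⟩ := hx
  obtain ⟨Si, hi1, hi2, hi3⟩ := hxi
  have hHc : ∀ g : G, (H ⊓ cnj H g).relIndex H ≠ 0 := hH
  have hB' : ∀ t s : G, B (deltaH H F t) (deltaH H F s)
      = if Quotient.mk (QuotientGroup.rightRel H) t
            = Quotient.mk (QuotientGroup.rightRel H) s
        then dd H F s else 0 := by
    intro t s
    rw [hB t s, dd_eq]
    rfl
  have key : ∀ t s : G, B (σx (deltaH H F t)) (deltaH H F s)
      = B (deltaH H F t) (σxi (deltaH H F s)) := by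
    intro t s
    rw [hx3 t, hi3 s, map_smul, LinearMap.smul_apply, map_sum, LinearMap.sum_apply,
      map_smul, map_sum]
    simp only [hB']
    -- rewrite the RHS summand values to `dd H F t`
    have hR : ∀ h ∈ Si,
        (if Quotient.mk (QuotientGroup.rightRel H) t
            = Quotient.mk (QuotientGroup.rightRel H) (x⁻¹ * h * s)
         then dd H F (x⁻¹ * h * s) else 0)
        = (if Quotient.mk (QuotientGroup.rightRel H) (x⁻¹ * h * s)
            = Quotient.mk (QuotientGroup.rightRel H) t
           then dd H F t else 0) := by
      intro h hh
      by_cases hcond : Quotient.mk (QuotientGroup.rightRel H) (x⁻¹ * h * s)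
          = Quotient.mk (QuotientGroup.rightRel H) t
      · rw [if_pos hcond.symm, if_pos hcond]
        have hmem : t * (x⁻¹ * h * s)⁻¹ ∈ H := mk_eq_mk.mp hcond
        have : dd H F t = dd H F ((t * (x⁻¹ * h * s)⁻¹) * (x⁻¹ * h * s)) := by group
        rw [this, dd_left F H hmem]
      · rw [if_neg (fun hh' => hcond hh'.symm), if_neg hcond]
    rw [Finset.sum_congr rfl hR]
    have hsum1 : (∑ h ∈ Sx, if Quotient.mk (QuotientGroup.rightRel H) (x * h * t)
          = Quotient.mk (QuotientGroup.rightRel H) s then dd H F s else 0)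
        = ((Sx.filter (fun h => Quotient.mk (QuotientGroup.rightRel H) (x * h * t)
            = Quotient.mk (QuotientGroup.rightRel H) s)).card : F) * dd H F s := by
      rw [← Finset.sum_filter, Finset.sum_const, nsmul_eq_mul]
    have hsum2 : (∑ h ∈ Si, if Quotient.mk (QuotientGroup.rightRel H) (x⁻¹ * h * s)
          = Quotient.mk (QuotientGroup.rightRel H) t then dd H F t else 0)
        = ((Si.filter (fun h => Quotient.mk (QuotientGroup.rightRel H) (x⁻¹ * h * s)
            = Quotient.mk (QuotientGroup.rightRel H) t)).card : F) * dd H F t := by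
      rw [← Finset.sum_filter, Finset.sum_const, nsmul_eq_mul]
    rw [hsum1, hsum2]
    by_cases hc : ∃ h ∈ Sx, Quotient.mk (QuotientGroup.rightRel H) (x * h * t)
        = Quotient.mk (QuotientGroup.rightRel H) s
    · -- both filters are singletons
      obtain ⟨a, ha, b, hb, hs⟩ := (cond_iff hx1 hx2).mp hc
      have hc' : ∃ h ∈ Si, Quotient.mk (QuotientGroup.rightRel H) (x⁻¹ * h * s)
          = Quotient.mk (QuotientGroup.rightRel H) t := by
        apply (cond_iff hi1 hi2).mpr
        refine ⟨b⁻¹, inv_mem hb, a⁻¹, inv_mem ha, ?_⟩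
        rw [hs]; group
      obtain ⟨h0, hh0, he0⟩ := hc
      obtain ⟨h1, hh1, he1⟩ := hc'
      have hcard1 : (Sx.filter (fun h => Quotient.mk (QuotientGroup.rightRel H) (x * h * t)
            = Quotient.mk (QuotientGroup.rightRel H) s)).card = 1 := by
        rw [Finset.card_eq_one]
        refine ⟨h0, ?_⟩
        ext h
        simp only [Finset.mem_filter, Finset.mem_singleton]
        constructor
        · rintro ⟨hhS, he⟩; exact unique_h hx1 hx2 hhS hh0 he he0
        · rintro rfl; exact ⟨hh0, he0⟩
      have hcard2 : (Si.filter (fun h => Quotient.mk (QuotientGroup.rightRel H) (x⁻¹ * h * s)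
            = Quotient.mk (QuotientGroup.rightRel H) t)).card = 1 := by
        rw [Finset.card_eq_one]
        refine ⟨h1, ?_⟩
        ext h
        simp only [Finset.mem_filter, Finset.mem_singleton]
        constructor
        · rintro ⟨hhS, he⟩; exact unique_h hi1 hi2 hhS hh1 he he1
        · rintro rfl; exact ⟨hh1, he1⟩
      rw [hcard1, hcard2, card_S hx1 hx2, card_S hi1 hi2]
      -- dd H F s = dd H F x * dd H F t
      have hdds : dd H F s = dd H F x * dd H F t := by
        rw [hs]
        have e : a * x * b * t = a * (x * (b * t)) := by group
        rw [e, dd_left F H ha, dd_mul F H hHc, dd_left F H hb]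
      rw [hdds, dd_eq]
      have h1 : ((H ⊓ cnj H x).relIndex H : F) ≠ 0 := Nat.cast_ne_zero.mpr (hHc x)
      have h2 : ((H ⊓ cnj H x⁻¹).relIndex H : F) ≠ 0 := Nat.cast_ne_zero.mpr (hHc x⁻¹)
      rw [smul_eq_mul, smul_eq_mul]
      field_simp
    · have hc' : ¬ ∃ h ∈ Si, Quotient.mk (QuotientGroup.rightRel H) (x⁻¹ * h * s)
          = Quotient.mk (QuotientGroup.rightRel H) t := by
        intro hcc
        apply hc
        obtain ⟨a, ha, b, hb, ht⟩ := (cond_iff hi1 hi2).mp hcc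
        apply (cond_iff hx1 hx2).mpr
        refine ⟨b⁻¹, inv_mem hb, a⁻¹, inv_mem ha, ?_⟩
        rw [ht]; group
      have e1 : (Sx.filter (fun h => Quotient.mk (QuotientGroup.rightRel H) (x * h * t)
            = Quotient.mk (QuotientGroup.rightRel H) s)) = ∅ := by
        rw [Finset.filter_eq_empty_iff]
        intro h hh he
        exact hc ⟨h, hh, he⟩
      have e2 : (Si.filter (fun h => Quotient.mk (QuotientGroup.rightRel H) (x⁻¹ * h * s)
            = Quotient.mk (QuotientGroup.rightRel H) t)) = ∅ := by
        rw [Finset.filter_eq_empty_iff]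
        intro h hh he
        exact hc' ⟨h, hh, he⟩
      rw [e1, e2]
      simp
  -- extend by linearity
  have key2 : ∀ t : G, ∀ η : HeckeModule H F,
      B (σx (deltaH H F t)) η = B (deltaH H F t) (σxi η) := by
    intro t η
    induction η using Finsupp.induction_linear with
    | zero => simp
    | add f g hf hg => rw [map_add, map_add, map_add, hf, hg]
    | single a b =>
      obtain ⟨s, rfl⟩ := Quotient.exists_rep a
      have hsingle : (Finsupp.single (Quotient.mk (QuotientGroup.rightRel H) s) b
          : HeckeModule H F) = b • deltaH H F s := by
        rw [deltaH, Finsupp.smul_single, smul_eq_mul, mul_one]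
      rw [hsingle, map_smul, map_smul, map_smul, key]
  intro ξ η
  induction ξ using Finsupp.induction_linear with
  | zero => simp
  | add f g hf hg => rw [map_add, map_add, map_add, LinearMap.add_apply, hf, hg,
      LinearMap.add_apply]
  | single a b =>
    obtain ⟨t, rfl⟩ := Quotient.exists_rep a
    have hsingle : (Finsupp.single (Quotient.mk (QuotientGroup.rightRel H) t) b
        : HeckeModule H F) = b • deltaH H F t := by
      rw [deltaH, Finsupp.smul_single, smul_eq_mul, mul_one]
    rw [hsingle, map_smul, map_smul, map_smul, LinearMap.smul_apply, LinearMap.smul_apply,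
      key2]
end

section
/- Let (G,H) be a Hecke pair with H protonormal in G. Then the map x ↦ σ_x from G to the Hecke algebra H(G,H) is a partial representation: σ_1 = 1, σ_{x⁻¹}σ_xσ_y = σ_{x⁻¹}σ_{xy}, and σ_xσ_yσ_{y⁻¹} = σ_{xy}σ_{y⁻¹} for all x, y ∈ G. -/
open scoped Pointwise Classical


set_option maxHeartbeats 2000000

namespace HeckeAux

variable {G : Type*} [Group G]

/-- `H ∩ x⁻¹Hx` as a subgroup. -/
def KK (H : Subgroup G) (x : G) : Subgroup G :=
  H ⊓ H.comap (MulAut.conj x).toMonoidHom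

lemma mem_KK {H : Subgroup G} {x g : G} : g ∈ KK H x ↔ g ∈ H ∧ x * g * x⁻¹ ∈ H := by
  simp [KK, Subgroup.mem_inf, Subgroup.mem_comap]

lemma KK_le {H : Subgroup G} {x : G} : (KK H x : Set G) ⊆ (H : Set G) := by
  intro g hg
  exact ((mem_KK).1 hg).1

/-- `S` is a transversal of `K\H`. -/
def IsTransversal (H K : Subgroup G) (S : Finset G) : Prop :=
  (↑S : Set G) ⊆ (H : Set G) ∧ ∀ g ∈ H, ∃! s, s ∈ S ∧ g * s⁻¹ ∈ K

namespace IsTransversal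

variable {H K : Subgroup G} {S : Finset G}

/-- the representative of `g` in `S`. -/
noncomputable def rep (hS : IsTransversal H K S) (g : G) : G :=
  if hg : g ∈ H then (hS.2 g hg).choose else 1

lemma rep_mem (hS : IsTransversal H K S) {g : G} (hg : g ∈ H) : hS.rep g ∈ S := by
  rw [rep, dif_pos hg]
  exact (hS.2 g hg).choose_spec.1.1

lemma rep_rel (hS : IsTransversal H K S) {g : G} (hg : g ∈ H) : g * (hS.rep g)⁻¹ ∈ K := by
  rw [rep, dif_pos hg]
  exact (hS.2 g hg).choose_spec.1.2

lemma rep_eq (hS : IsTransversal H K S) {g s : G} (hg : g ∈ H) (hs : s ∈ S)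
    (hrel : g * s⁻¹ ∈ K) : s = hS.rep g := by
  rw [rep, dif_pos hg]
  exact (hS.2 g hg).choose_spec.2 s ⟨hs, hrel⟩

lemma nonempty (hS : IsTransversal H K S) : S.Nonempty :=
  ⟨hS.rep 1, hS.rep_mem H.one_mem⟩

lemma card_ne_zero (hS : IsTransversal H K S) : S.card ≠ 0 :=
  Finset.card_ne_zero_of_mem hS.nonempty.choose_spec

lemma mem_of_mem (hS : IsTransversal H K S) {s : G} (hs : s ∈ S) : s ∈ H :=
  hS.1 hs

end IsTransversal

/-- counting members of a `K`-stable set against two transversals gives the same count. -/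
lemma trans_count_eq {H K : Subgroup G} {S S' : Finset G}
    (hS : IsTransversal H K S) (hS' : IsTransversal H K S') (A : Set G)
    (hA : ∀ κ ∈ K, ∀ a ∈ A, κ * a ∈ A) :
    (S.filter (· ∈ A)).card = (S'.filter (· ∈ A)).card := by
  have key : ∀ (T T' : Finset G) (hT : IsTransversal H K T) (hT' : IsTransversal H K T')
      (s : G), s ∈ T.filter (· ∈ A) → hT'.rep s ∈ T'.filter (· ∈ A) := by
    intro T T' hT hT' s hs
    rw [Finset.mem_filter] at hs ⊢
    have hsH : s ∈ H := hT.mem_of_mem hs.1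
    refine ⟨hT'.rep_mem hsH, ?_⟩
    have hκ : s * (hT'.rep s)⁻¹ ∈ K := hT'.rep_rel hsH
    have : hT'.rep s = (s * (hT'.rep s)⁻¹)⁻¹ * s := by group
    rw [this]
    exact hA _ (K.inv_mem hκ) s hs.2
  have inv : ∀ (T T' : Finset G) (hT : IsTransversal H K T) (hT' : IsTransversal H K T')
      (s : G), s ∈ T.filter (· ∈ A) → hT.rep (hT'.rep s) = s := by
    intro T T' hT hT' s hs
    rw [Finset.mem_filter] at hs
    have hsH : s ∈ H := hT.mem_of_mem hs.1
    have hrH : hT'.rep s ∈ H := hT'.mem_of_mem (hT'.rep_mem hsH)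
    refine (hT.rep_eq hrH hs.1 ?_).symm
    have : hT'.rep s * s⁻¹ = (s * (hT'.rep s)⁻¹)⁻¹ := by group
    rw [this]
    exact K.inv_mem (hT'.rep_rel hsH)
  refine Finset.card_bij' (fun s _ => hS'.rep s) (fun s _ => hS.rep s) ?_ ?_ ?_ ?_
  · intro s hs; exact key S S' hS hS' s hs
  · intro s hs; exact key S' S hS' hS s hs
  · intro s hs; exact inv S S' hS hS' s hs
  · intro s hs; exact inv S' S hS' hS s hs


/-- A finite transversal of the quotient `(K₁ ⊓ K₂)\\K₁` exists. -/
lemma exists_subtrans (H K₁ K₂ : Subgroup G) (hK₁ : (K₁ : Set G) ⊆ (H : Set G))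
    {S₂ : Finset G} (hS₂ : IsTransversal H K₂ S₂) :
    ∃ R : Finset G, R.Nonempty ∧ (↑R : Set G) ⊆ (K₁ : Set G) ∧
      ∀ k ∈ K₁, ∃! r, r ∈ R ∧ k * r⁻¹ ∈ K₁ ⊓ K₂ := by
  classical
  set P : G → Prop := fun s => ∃ k, k ∈ K₁ ∧ k * s⁻¹ ∈ K₂ with hP
  set ρ : G → G := fun s => if h : P s then h.choose else 1 with hρ
  have ρ_spec : ∀ s, P s → ρ s ∈ K₁ ∧ ρ s * s⁻¹ ∈ K₂ := by
    intro s hs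
    simp only [hρ, dif_pos hs]
    exact hs.choose_spec
  refine ⟨(S₂.filter P).image ρ, ?_, ?_, ?_⟩
  · have h1 : (1 : G) ∈ H := H.one_mem
    refine ⟨ρ (hS₂.rep 1), Finset.mem_image_of_mem ρ (Finset.mem_filter.2
      ⟨hS₂.rep_mem h1, ⟨1, K₁.one_mem, hS₂.rep_rel h1⟩⟩)⟩
  · intro r hr
    simp only [Finset.coe_image, Set.mem_image, Finset.mem_coe, Finset.mem_filter] at hr
    obtain ⟨s, ⟨_, hPs⟩, rfl⟩ := hr
    exact (ρ_spec s hPs).1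
  · intro k hk
    have hkH : k ∈ H := hK₁ hk
    set s := hS₂.rep k with hs
    have hsP : P s := ⟨k, hk, hS₂.rep_rel hkH⟩
    refine ⟨ρ s, ⟨Finset.mem_image_of_mem ρ (Finset.mem_filter.2 ⟨hS₂.rep_mem hkH, hsP⟩), ?_⟩, ?_⟩
    · constructor
      · exact K₁.mul_mem hk (K₁.inv_mem (ρ_spec s hsP).1)
      · have : k * (ρ s)⁻¹ = (k * s⁻¹) * (ρ s * s⁻¹)⁻¹ := by group
        rw [this]
        exact K₂.mul_mem (hS₂.rep_rel hkH) (K₂.inv_mem (ρ_spec s hsP).2)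
    · rintro r ⟨hrR, hrel⟩
      simp only [Finset.mem_image, Finset.mem_filter] at hrR
      obtain ⟨s', ⟨hs'S, hPs'⟩, rfl⟩ := hrR
      have hss' : s' = s := by
        refine hS₂.rep_eq hkH hs'S ?_
        have h1 : ρ s' * s'⁻¹ ∈ K₂ := (ρ_spec s' hPs').2
        have h2 : k * (ρ s')⁻¹ ∈ K₂ := hrel.2
        have : k * s'⁻¹ = (k * (ρ s')⁻¹) * (ρ s' * s'⁻¹) := by group
        rw [this]
        exact K₂.mul_mem h2 h1
      rw [hss']

/-- Product of a subtransversal and a transversal is a transversal for the smaller group. -/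
lemma prod_trans {H K D : Subgroup G} (hKH : (K : Set G) ⊆ (H : Set G)) (hDK : D ≤ K)
    {R S : Finset G} (hRsub : (↑R : Set G) ⊆ (K : Set G))
    (hR : ∀ k ∈ K, ∃! r, r ∈ R ∧ k * r⁻¹ ∈ D) (hS : IsTransversal H K S)
    (A : Set G) (stab : ∀ κ ∈ K, ∀ a ∈ A, κ * a ∈ A) :
    IsTransversal H D ((R ×ˢ S).image (fun p => p.1 * p.2)) ∧
    ((R ×ˢ S).image (fun p => p.1 * p.2)).card = R.card * S.card ∧
    (((R ×ˢ S).image (fun p => p.1 * p.2)).filter (· ∈ A)).card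
      = R.card * (S.filter (· ∈ A)).card := by
  classical
  set T := (R ×ˢ S).image (fun p => p.1 * p.2) with hT
  have memT : ∀ u, u ∈ T ↔ ∃ r ∈ R, ∃ s ∈ S, r * s = u := by
    intro u
    simp only [hT, Finset.mem_image, Finset.mem_product, Prod.exists]
    constructor
    · rintro ⟨r, s, ⟨hr, hs⟩, h⟩; exact ⟨r, hr, s, hs, h⟩
    · rintro ⟨r, hr, s, hs, h⟩; exact ⟨r, s, ⟨hr, hs⟩, h⟩
  have sEq : ∀ {r s r' s' : G}, r ∈ R → s ∈ S → r' ∈ R → s' ∈ S →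
      (r * s) * (r' * s')⁻¹ ∈ D → r = r' ∧ s = s' := by
    intro r s r' s' hr hs hr' hs' hrel
    have hrK : r ∈ K := hRsub hr
    have hr'K : r' ∈ K := hRsub hr'
    have hss' : s * s'⁻¹ ∈ K := by
      have h1 : (r * s) * (r' * s')⁻¹ ∈ K := hDK hrel
      have : s * s'⁻¹ = r⁻¹ * ((r * s) * (r' * s')⁻¹) * r' := by group
      rw [this]
      exact K.mul_mem (K.mul_mem (K.inv_mem hrK) h1) hr'K
    have hsH : s ∈ H := hS.mem_of_mem hs
    have hs2 : s' = hS.rep s := hS.rep_eq hsH hs' hss'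
    have hs1 : s = hS.rep s := hS.rep_eq hsH hs (by simpa using K.one_mem)
    have hss : s = s' := hs1.trans hs2.symm
    subst hss
    -- now r * r'⁻¹ ∈ D
    have hrr' : r * r'⁻¹ ∈ D := by
      have : r * r'⁻¹ = (r * s) * (r' * s)⁻¹ := by group
      rw [this]; exact hrel
    obtain ⟨r₀, _, hru⟩ := hR r hrK
    have e1 : r = r₀ := hru r ⟨hr, by simpa using D.one_mem⟩
    have e2 : r' = r₀ := hru r' ⟨hr', hrr'⟩
    exact ⟨e1.trans e2.symm, rfl⟩
  have injOn : Set.InjOn (fun p : G × G => p.1 * p.2) (R ×ˢ S : Finset (G × G)) := by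
    rintro ⟨r, s⟩ h1 ⟨r', s'⟩ h2 h
    simp only [Finset.coe_product, Set.mem_prod, Finset.mem_coe] at h1 h2
    have : (r * s) * (r' * s')⁻¹ ∈ D := by
      simp only at h
      rw [h]
      have e : (r' * s') * (r' * s')⁻¹ = 1 := by group
      rw [e]; exact D.one_mem
    obtain ⟨e1, e2⟩ := sEq h1.1 h1.2 h2.1 h2.2 this
    simp [e1, e2]
  refine ⟨⟨?_, ?_⟩, ?_, ?_⟩
  · -- T ⊆ H
    intro u hu
    rw [Finset.mem_coe, memT] at hu
    obtain ⟨r, hr, s, hs, rfl⟩ := hu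
    exact H.mul_mem (hKH (hRsub hr)) (hS.mem_of_mem hs)
  · -- transversal property
    intro g hg
    set s := hS.rep g with hs
    have hsS : s ∈ S := hS.rep_mem hg
    have hgs : g * s⁻¹ ∈ K := hS.rep_rel hg
    obtain ⟨r, ⟨hrR, hrel⟩, hrun⟩ := hR (g * s⁻¹) hgs
    refine ⟨r * s, ⟨(memT _).2 ⟨r, hrR, s, hsS, rfl⟩, ?_⟩, ?_⟩
    · have : g * (r * s)⁻¹ = (g * s⁻¹) * r⁻¹ := by group
      rw [this]; exact hrel
    · rintro u ⟨huT, hurel⟩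
      rw [memT] at huT
      obtain ⟨r', hr', s', hs', rfl⟩ := huT
      -- g (r' s')⁻¹ ∈ D; show r' * s' = r * s
      have hK1 : g * s'⁻¹ ∈ K := by
        have h1 : g * (r' * s')⁻¹ ∈ K := hDK hurel
        have : g * s'⁻¹ = (g * (r' * s')⁻¹) * r' := by group
        rw [this]; exact K.mul_mem h1 (hRsub hr')
      have hs'' : s' = s := hS.rep_eq hg hs' hK1
      subst hs''
      have : (g * s⁻¹) * r'⁻¹ ∈ D := by
        have e : (g * s⁻¹) * r'⁻¹ = g * (r' * s)⁻¹ := by group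
        rw [e]; exact hurel
      have := hrun r' ⟨hr', this⟩
      rw [this]
  · exact (Finset.card_image_of_injOn injOn).trans (by rw [Finset.card_product])
  · -- filter count
    have hfil : T.filter (· ∈ A) = (R ×ˢ (S.filter (· ∈ A))).image (fun p => p.1 * p.2) := by
      ext u
      simp only [Finset.mem_filter, Finset.mem_image, Finset.mem_product, Prod.exists, memT]
      constructor
      · rintro ⟨⟨r, hr, s, hs, rfl⟩, hA⟩
        refine ⟨r, s, ⟨hr, hs, ?_⟩, rfl⟩
        have : s = (r)⁻¹ * (r * s) := by group
        rw [this]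
        exact stab _ (K.inv_mem (hRsub hr)) _ hA
      · rintro ⟨r, s, ⟨hr, hs, hsA⟩, rfl⟩
        exact ⟨⟨r, hr, s, hs, rfl⟩, stab _ (hRsub hr) _ hsA⟩
    rw [hfil]
    have injOn' : Set.InjOn (fun p : G × G => p.1 * p.2)
        (R ×ˢ (S.filter (· ∈ A)) : Finset (G × G)) := by
      intro p h1 q h2 h
      apply injOn _ _ h
      · simp only [Finset.coe_product, Set.mem_prod, Finset.mem_coe, Finset.coe_filter,
          Set.mem_setOf_eq] at h1 ⊢
        exact ⟨h1.1, h1.2.1⟩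
      · simp only [Finset.coe_product, Set.mem_prod, Finset.mem_coe, Finset.coe_filter,
          Set.mem_setOf_eq] at h2 ⊢
        exact ⟨h2.1, h2.2.1⟩
    rw [Finset.card_image_of_injOn injOn', Finset.card_product]

/-- Central counting lemma. -/
lemma count_ratio {H K₁ K₂ : Subgroup G} (hK₁ : (K₁ : Set G) ⊆ (H : Set G))
    (hK₂ : (K₂ : Set G) ⊆ (H : Set G)) {S₁ S₂ : Finset G}
    (h₁ : IsTransversal H K₁ S₁) (h₂ : IsTransversal H K₂ S₂) (A : Set G)
    (stab₁ : ∀ κ ∈ K₁, ∀ a ∈ A, κ * a ∈ A) (stab₂ : ∀ κ ∈ K₂, ∀ a ∈ A, κ * a ∈ A) :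
    (S₁.filter (· ∈ A)).card * S₂.card = (S₂.filter (· ∈ A)).card * S₁.card := by
  classical
  obtain ⟨R₁, hR₁ne, hR₁sub, hR₁⟩ := exists_subtrans H K₁ K₂ hK₁ h₂
  obtain ⟨R₂, hR₂ne, hR₂sub, hR₂⟩ := exists_subtrans H K₂ K₁ hK₂ h₁
  have hR₂' : ∀ k ∈ K₂, ∃! r, r ∈ R₂ ∧ k * r⁻¹ ∈ K₁ ⊓ K₂ := by
    intro k hk
    have := hR₂ k hk
    rwa [inf_comm K₂ K₁] at this
  obtain ⟨hT₁, hT₁card, hT₁fil⟩ :=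
    prod_trans hK₁ (inf_le_left : K₁ ⊓ K₂ ≤ K₁) hR₁sub hR₁ h₁ A stab₁
  obtain ⟨hT₂, hT₂card, hT₂fil⟩ :=
    prod_trans hK₂ (inf_le_right : K₁ ⊓ K₂ ≤ K₂) hR₂sub hR₂' h₂ A stab₂
  have stabD : ∀ κ ∈ K₁ ⊓ K₂, ∀ a ∈ A, κ * a ∈ A := fun κ hκ => stab₁ κ hκ.1
  have e1 : R₁.card * (S₁.filter (· ∈ A)).card = R₂.card * (S₂.filter (· ∈ A)).card := by
    rw [← hT₁fil, ← hT₂fil]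
    exact trans_count_eq hT₁ hT₂ A stabD
  have e2 : R₁.card * S₁.card = R₂.card * S₂.card := by
    rw [← hT₁card, ← hT₂card]
    have := trans_count_eq hT₁ hT₂ (H : Set G) (fun κ hκ a ha => H.mul_mem (hK₁ hκ.1) ha)
    rwa [Finset.filter_true_of_mem (fun u hu => hT₁.1 hu),
      Finset.filter_true_of_mem (fun u hu => hT₂.1 hu)] at this
  have hR₁pos : 0 < R₁.card := Finset.card_pos.2 hR₁ne
  -- R₁.card * (cnt₁ * S₂.card) = R₁.card * (cnt₂ * S₁.card)
  apply Nat.eq_of_mul_eq_mul_left hR₁pos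
  calc R₁.card * ((S₁.filter (· ∈ A)).card * S₂.card)
      = (R₁.card * (S₁.filter (· ∈ A)).card) * S₂.card := by ring
    _ = (R₂.card * (S₂.filter (· ∈ A)).card) * S₂.card := by rw [e1]
    _ = (S₂.filter (· ∈ A)).card * (R₂.card * S₂.card) := by ring
    _ = (S₂.filter (· ∈ A)).card * (R₁.card * S₁.card) := by rw [e2]
    _ = R₁.card * ((S₂.filter (· ∈ A)).card * S₁.card) := by ring


section CPart
/-- The double coset `HxH` as a set. -/
def DCset (H : Subgroup G) (x : G) : Set G :=
  {g | ∃ h₁ ∈ (H : Set G), ∃ h₂ ∈ (H : Set G), g = h₁ * x * h₂}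

lemma DCset_inv {H : Subgroup G} {x u : G} (hu : u ∈ DCset H x) : u⁻¹ ∈ DCset H x⁻¹ := by
  obtain ⟨h₁, hh₁, h₂, hh₂, rfl⟩ := hu
  exact ⟨h₂⁻¹, H.inv_mem hh₂, h₁⁻¹, H.inv_mem hh₁, by group⟩

lemma DCset_inv_iff {H : Subgroup G} {x u : G} : u⁻¹ ∈ DCset H x⁻¹ ↔ u ∈ DCset H x := by
  constructor
  · intro h
    have := DCset_inv h
    rwa [inv_inv, inv_inv] at this
  · exact DCset_inv

/-- The subgroup `L_x = H · x⁻¹Hx` (protonormality makes it a subgroup). -/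
def LL (H : Subgroup G) (x : G)
    (hp : ((fun g => x⁻¹ * g * x) '' (H : Set G)) * (H : Set G)
      = (H : Set G) * ((fun g => x⁻¹ * g * x) '' (H : Set G))) : Subgroup G where
  carrier := (H : Set G) * ((fun g => x⁻¹ * g * x) '' (H : Set G))
  one_mem' := ⟨1, H.one_mem, 1, ⟨1, H.one_mem, by group⟩, mul_one 1⟩
  mul_mem' := by
    rintro a b ⟨h₁, hh₁, c₁, ⟨u₁, hu₁, rfl⟩, rfl⟩ ⟨h₂, hh₂, c₂, ⟨u₂, hu₂, rfl⟩, rfl⟩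
    have hmid : (x⁻¹ * u₁ * x) * h₂ ∈ (H : Set G) * ((fun g => x⁻¹ * g * x) '' (H : Set G)) := by
      rw [← hp]
      exact ⟨x⁻¹ * u₁ * x, ⟨u₁, hu₁, rfl⟩, h₂, hh₂, rfl⟩
    obtain ⟨h₃, hh₃, c₃, ⟨u₃, hu₃, rfl⟩, he⟩ := hmid
    refine ⟨h₁ * h₃, H.mul_mem hh₁ hh₃, (x⁻¹ * u₃ * x) * (x⁻¹ * u₂ * x),
      ⟨u₃ * u₂, H.mul_mem hu₃ hu₂, by group⟩, ?_⟩
    calc (h₁ * h₃) * ((x⁻¹ * u₃ * x) * (x⁻¹ * u₂ * x))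
        = h₁ * ((h₃ * (x⁻¹ * u₃ * x)) * (x⁻¹ * u₂ * x)) := by group
      _ = h₁ * (((x⁻¹ * u₁ * x) * h₂) * (x⁻¹ * u₂ * x)) := by
            have he' : h₃ * (x⁻¹ * u₃ * x) = x⁻¹ * u₁ * x * h₂ := he
            rw [he']
      _ = h₁ * (x⁻¹ * u₁ * x) * (h₂ * (x⁻¹ * u₂ * x)) := by group
  inv_mem' := by
    rintro a ⟨h₁, hh₁, c₁, ⟨u₁, hu₁, rfl⟩, rfl⟩
    have : (x⁻¹ * u₁⁻¹ * x) * h₁⁻¹ ∈ (H : Set G) * ((fun g => x⁻¹ * g * x) '' (H : Set G)) := by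
      rw [← hp]
      exact ⟨x⁻¹ * u₁⁻¹ * x, ⟨u₁⁻¹, H.inv_mem hu₁, rfl⟩, h₁⁻¹, H.inv_mem hh₁, rfl⟩
    obtain ⟨h₃, hh₃, c₃, ⟨u₃, hu₃, rfl⟩, he⟩ := this
    refine ⟨h₃, hh₃, x⁻¹ * u₃ * x, ⟨u₃, hu₃, rfl⟩, ?_⟩
    rw [he]
    group

variable {H : Subgroup G} {x : G}
  {hp : ((fun g => x⁻¹ * g * x) '' (H : Set G)) * (H : Set G)
      = (H : Set G) * ((fun g => x⁻¹ * g * x) '' (H : Set G))}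

lemma mem_LL_iff {u : G} : u ∈ LL H x hp ↔
    ∃ h₁ ∈ (H : Set G), ∃ h₂ ∈ (H : Set G), u = h₁ * (x⁻¹ * h₂ * x) := by
  constructor
  · rintro ⟨h₁, hh₁, c, ⟨h₂, hh₂, rfl⟩, rfl⟩
    exact ⟨h₁, hh₁, h₂, hh₂, rfl⟩
  · rintro ⟨h₁, hh₁, h₂, hh₂, rfl⟩
    exact ⟨h₁, hh₁, x⁻¹ * h₂ * x, ⟨h₂, hh₂, rfl⟩, rfl⟩

lemma H_le_LL {h : G} (hh : h ∈ H) : h ∈ LL H x hp :=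
  mem_LL_iff.2 ⟨h, hh, 1, H.one_mem, by group⟩

lemma conj_mem_LL {h : G} (hh : h ∈ H) : x⁻¹ * h * x ∈ LL H x hp :=
  mem_LL_iff.2 ⟨1, H.one_mem, h, hh, by group⟩

lemma DC_inv_iff_LL {u : G} : u ∈ DCset H x⁻¹ ↔ u * x ∈ LL H x hp := by
  constructor
  · rintro ⟨h₁, hh₁, h₂, hh₂, rfl⟩
    exact mem_LL_iff.2 ⟨h₁, hh₁, h₂, hh₂, by group⟩
  · intro h
    obtain ⟨h₁, hh₁, h₂, hh₂, he⟩ := mem_LL_iff.1 h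
    refine ⟨h₁, hh₁, h₂, hh₂, ?_⟩
    have : u = (u * x) * x⁻¹ := by group
    rw [this, he]
    group

section Coeff

variable {F : Type*} [Field F] [CharZero F]

lemma qm_eq_iff {a b : G} :
    (Quotient.mk (QuotientGroup.rightRel H) a = Quotient.mk (QuotientGroup.rightRel H) b)
      ↔ b * a⁻¹ ∈ H := by
  rw [Quotient.eq]
  exact QuotientGroup.rightRel_apply

lemma deltaH_apply {t w : G} :
    (deltaH H F t) (Quotient.mk (QuotientGroup.rightRel H) w)
      = if w * t⁻¹ ∈ H then (1 : F) else 0 := by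
  rw [deltaH, Finsupp.single_apply]
  exact if_congr qm_eq_iff rfl rfl

/-- The coefficient formula for a Hecke operator. -/
lemma coeff {S : Finset G} {T : Module.End F (HeckeModule H F)}
    (hS : IsTransversal H (KK H x) S)
    (hf : ∀ t, T (deltaH H F t) = (S.card : F)⁻¹ • ∑ h ∈ S, deltaH H F (x * h * t))
    (t w : G) :
    (T (deltaH H F t)) (Quotient.mk (QuotientGroup.rightRel H) w)
      = if w * t⁻¹ ∈ DCset H x then (S.card : F)⁻¹ else 0 := by
  classical
  rw [hf t, Finsupp.smul_apply, Finsupp.finset_sum_apply]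
  have e1 : ∀ h ∈ S, (deltaH H F (x * h * t)) (Quotient.mk (QuotientGroup.rightRel H) w)
      = if w * (x * h * t)⁻¹ ∈ H then (1 : F) else 0 := fun h _ => deltaH_apply
  rw [Finset.sum_congr rfl e1, Finset.sum_boole]
  by_cases hw : w * t⁻¹ ∈ DCset H x
  · rw [if_pos hw]
    obtain ⟨h₁, hh₁, h₂, hh₂, he⟩ := hw
    have hcond : ∀ h ∈ S, (w * (x * h * t)⁻¹ ∈ H ↔ h₂ * h⁻¹ ∈ KK H x) := by
      intro h hhS
      have hhH : h ∈ H := hS.mem_of_mem hhS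
      have e2 : w * (x * h * t)⁻¹ = h₁ * (x * (h₂ * h⁻¹) * x⁻¹) := by
        have : w = (w * t⁻¹) * t := by group
        rw [this, he]; group
      rw [e2, Subgroup.mul_mem_cancel_left _ hh₁, mem_KK]
      exact (and_iff_right (H.mul_mem hh₂ (H.inv_mem hhH))).symm
    have hfil : S.filter (fun h => w * (x * h * t)⁻¹ ∈ H) = {hS.rep h₂} := by
      ext a
      simp only [Finset.mem_filter, Finset.mem_singleton]
      constructor
      · rintro ⟨haS, hcond'⟩
        exact hS.rep_eq hh₂ haS ((hcond a haS).1 hcond')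
      · rintro rfl
        refine ⟨hS.rep_mem hh₂, (hcond _ (hS.rep_mem hh₂)).2 (hS.rep_rel hh₂)⟩
    rw [hfil]
    simp
  · rw [if_neg hw]
    have hfil : S.filter (fun h => w * (x * h * t)⁻¹ ∈ H) = ∅ := by
      rw [Finset.filter_eq_empty_iff]
      intro h hhS hcond'
      apply hw
      refine ⟨w * (x * h * t)⁻¹, hcond', h, hS.mem_of_mem hhS, by group⟩
    rw [hfil]
    simp

lemma finsupp_ext {v u : HeckeModule H F}
    (h : ∀ w : G, v (Quotient.mk (QuotientGroup.rightRel H) w)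
      = u (Quotient.mk (QuotientGroup.rightRel H) w)) : v = u := by
  apply Finsupp.ext
  intro q
  obtain ⟨w, rfl⟩ := Quotient.exists_rep q
  exact h w

lemma end_ext {T U : Module.End F (HeckeModule H F)}
    (h : ∀ t : G, T (deltaH H F t) = U (deltaH H F t)) : T = U := by
  apply LinearMap.ext
  intro v
  induction v using Finsupp.induction_linear with
  | zero => simp
  | add f g hf hg => rw [map_add, map_add, hf, hg]
  | single q c =>
    obtain ⟨t, rfl⟩ := Quotient.exists_rep q
    have e : Finsupp.single (Quotient.mk (QuotientGroup.rightRel H) t) c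
        = c • deltaH H F t := by
      rw [deltaH, Finsupp.smul_single, smul_eq_mul, mul_one]
    rw [e, map_smul, map_smul, h]

end Coeff


end CPart

section DPart
lemma mem_DCset {H : Subgroup G} {x u : G} :
    u ∈ DCset H x ↔ ∃ h₁ ∈ (H : Set G), ∃ h₂ ∈ (H : Set G), u = h₁ * x * h₂ := Iff.rfl

variable {H : Subgroup G}

/-- The transpose map sending the `S_b`-count to the `S_{a⁻¹}`-count. -/
noncomputable def tmap (a b g : G) {SA : Finset G} (hA : IsTransversal H (KK H a⁻¹) SA) :
    G → G := fun k =>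
  if hk : ∃ h₁ ∈ (H : Set G), ∃ h₂ ∈ (H : Set G), g * k⁻¹ * b⁻¹ = h₁ * a * h₂ then
    hA.rep (hk.choose)⁻¹
  else 1

lemma tmap_eq_of (a b g : G) {SA : Finset G} (hA : IsTransversal H (KK H a⁻¹) SA) {k s : G}
    (hcond : ∃ h₁ ∈ (H : Set G), ∃ h₂ ∈ (H : Set G), g * k⁻¹ * b⁻¹ = h₁ * a * h₂)
    (hs : s ∈ SA)
    (hrel : ∀ h₁ h₂ : G, h₁ ∈ H → h₂ ∈ H → g * k⁻¹ * b⁻¹ = h₁ * a * h₂ →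
      h₁⁻¹ * s⁻¹ ∈ KK H a⁻¹) :
    tmap a b g hA k = s := by
  rw [tmap, dif_pos hcond]
  obtain ⟨hh₁, h₂, hh₂, he⟩ := hcond.choose_spec
  exact (hA.rep_eq (H.inv_mem hh₁) hs (hrel _ h₂ hh₁ hh₂ he)).symm

lemma tmap_spec (a b g : G) {SA SB : Finset G}
    (hA : IsTransversal H (KK H a⁻¹) SA) (hB : IsTransversal H (KK H b) SB)
    {k : G} (hk : k ∈ SB)
    (hc : ∃ h₁ ∈ (H : Set G), ∃ h₂ ∈ (H : Set G), g * k⁻¹ * b⁻¹ = h₁ * a * h₂) :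
    (tmap a b g hA k ∈ SA) ∧
    (∃ f₁ ∈ (H : Set G), ∃ f₂ ∈ (H : Set G), g⁻¹ * (tmap a b g hA k)⁻¹ * a = f₁ * b⁻¹ * f₂) ∧
    (∀ f₁ f₂ : G, f₁ ∈ H → f₂ ∈ H → g⁻¹ * (tmap a b g hA k)⁻¹ * a = f₁ * b⁻¹ * f₂ →
      f₁⁻¹ * k⁻¹ ∈ KK H b) := by
  have hkH : k ∈ H := hB.mem_of_mem hk
  set k' := tmap a b g hA k with hk'
  obtain ⟨hh₁, h₂, hh₂, he⟩ := hc.choose_spec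
  set h₁ := hc.choose with hh₁def
  have hk'rep : k' = hA.rep h₁⁻¹ := by rw [hk', tmap, dif_pos hc]
  have hmem : k' ∈ SA := by rw [hk'rep]; exact hA.rep_mem (H.inv_mem hh₁)
  have hd : h₁⁻¹ * k'⁻¹ ∈ KK H a⁻¹ := by rw [hk'rep]; exact hA.rep_rel (H.inv_mem hh₁)
  set d := h₁⁻¹ * k'⁻¹ with hddef
  obtain ⟨hdH, hdconj⟩ := mem_KK.1 hd
  rw [inv_inv] at hdconj   -- a⁻¹ * d * a ∈ H
  have hk'inv : k'⁻¹ = h₁ * d := by rw [hddef]; group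
  have hg : g = h₁ * a * h₂ * (b * k) := by
    have : g = (g * k⁻¹ * b⁻¹) * (b * k) := by group
    rw [this, he]
  have e2 : g⁻¹ * k'⁻¹ * a = k⁻¹ * b⁻¹ * (h₂⁻¹ * (a⁻¹ * d * a)) := by
    rw [hk'inv, hg]; group
  refine ⟨hmem, ⟨k⁻¹, H.inv_mem hkH, h₂⁻¹ * (a⁻¹ * d * a),
    H.mul_mem (H.inv_mem hh₂) hdconj, e2⟩, ?_⟩
  intro f₁ f₂ hf₁ hf₂ hf
  have e3 : k⁻¹ * b⁻¹ * (h₂⁻¹ * (a⁻¹ * d * a)) = f₁ * b⁻¹ * f₂ := by rw [← e2, hf]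
  have e4 : f₁ = k⁻¹ * b⁻¹ * (h₂⁻¹ * (a⁻¹ * d * a)) * f₂⁻¹ * b := by rw [e3]; group
  have e5 : b * (f₁⁻¹ * k⁻¹) * b⁻¹ = f₂ * ((a⁻¹ * d * a)⁻¹ * h₂) := by rw [e4]; group
  rw [mem_KK]
  constructor
  · exact H.mul_mem (H.inv_mem hf₁) (H.inv_mem hkH)
  · rw [e5]
    exact H.mul_mem hf₂ (H.mul_mem (H.inv_mem hdconj) hh₂)

/-- The fundamental transpose symmetry of Hecke-type counts. -/
lemma transpose_count (a b g : G) {SA SB : Finset G}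
    (hA : IsTransversal H (KK H a⁻¹) SA) (hB : IsTransversal H (KK H b) SB) :
    (SB.filter (fun k => g * k⁻¹ * b⁻¹ ∈ DCset H a)).card
      = (SA.filter (fun k => g⁻¹ * k⁻¹ * a ∈ DCset H b⁻¹)).card := by
  classical
  have hB' : IsTransversal H (KK H (b⁻¹)⁻¹) SB := by rwa [inv_inv]
  refine Finset.card_nbij' (tmap a b g hA) (tmap b⁻¹ a⁻¹ g⁻¹ hB') ?_ ?_ ?_ ?_
  · -- forward membership
    intro k hkf
    rw [Finset.mem_coe, Finset.mem_filter] at hkf ⊢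
    obtain ⟨hkS, hkc⟩ := hkf
    obtain ⟨h1, h2, _⟩ := tmap_spec a b g hA hB hkS hkc
    exact ⟨h1, h2⟩
  · -- backward membership
    intro k' hk'f
    rw [Finset.mem_coe, Finset.mem_filter] at hk'f ⊢
    obtain ⟨hk'S, hk'c⟩ := hk'f
    have hk'c' : ∃ h₁ ∈ (H : Set G), ∃ h₂ ∈ (H : Set G),
        g⁻¹ * k'⁻¹ * (a⁻¹)⁻¹ = h₁ * b⁻¹ * h₂ := by rwa [inv_inv]
    obtain ⟨h1, h2, _⟩ := tmap_spec b⁻¹ a⁻¹ g⁻¹ hB' hA hk'S hk'c'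
    refine ⟨h1, ?_⟩
    obtain ⟨f₁, hf₁, f₂, hf₂, hfe⟩ := h2
    rw [inv_inv, inv_inv] at hfe
    exact ⟨f₁, hf₁, f₂, hf₂, hfe⟩
  · -- left inverse
    intro k hkf
    rw [Finset.mem_coe, Finset.mem_filter] at hkf
    obtain ⟨hkS, hkc⟩ := hkf
    obtain ⟨h1, h2, h3⟩ := tmap_spec a b g hA hB hkS hkc
    -- apply tmap_eq_of for the mirror map
    refine tmap_eq_of b⁻¹ a⁻¹ g⁻¹ hB' ?_ hkS ?_
    · obtain ⟨f₁, hf₁, f₂, hf₂, hfe⟩ := h2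
      exact ⟨f₁, hf₁, f₂, hf₂, by rwa [inv_inv]⟩
    · intro f₁ f₂ hf₁ hf₂ hfe
      rw [inv_inv] at hfe
      have := h3 f₁ f₂ hf₁ hf₂ hfe
      rwa [inv_inv]
  · -- right inverse
    intro k' hk'f
    rw [Finset.mem_coe, Finset.mem_filter] at hk'f
    obtain ⟨hk'S, hk'c⟩ := hk'f
    have hk'c' : ∃ h₁ ∈ (H : Set G), ∃ h₂ ∈ (H : Set G),
        g⁻¹ * k'⁻¹ * (a⁻¹)⁻¹ = h₁ * b⁻¹ * h₂ := by rwa [inv_inv]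
    obtain ⟨h1, h2, h3⟩ := tmap_spec b⁻¹ a⁻¹ g⁻¹ hB' hA hk'S hk'c'
    refine tmap_eq_of a b g hA ?_ hk'S ?_
    · obtain ⟨f₁, hf₁, f₂, hf₂, hfe⟩ := h2
      rw [inv_inv, inv_inv] at hfe
      exact ⟨f₁, hf₁, f₂, hf₂, hfe⟩
    · intro f₁ f₂ hf₁ hf₂ hfe
      have hfe'' : (g⁻¹)⁻¹ * (tmap b⁻¹ a⁻¹ g⁻¹ hB' k')⁻¹ * b⁻¹ = f₁ * (a⁻¹)⁻¹ * f₂ := by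
        rw [inv_inv g, inv_inv a]; exact hfe
      exact h3 f₁ f₂ hf₁ hf₂ hfe''

end DPart

variable {H : Subgroup G}

/-- A transversal has cardinality the relative index. -/
lemma card_eq_relindex {z : G} {S : Finset G} (hS : IsTransversal H (KK H z) S) :
    S.card = (KK H z).relIndex H := by
  classical
  have hKle : KK H z ≤ H := inf_le_left
  rw [Subgroup.relIndex, Subgroup.index, ← Nat.card_eq_finsetCard S]
  apply Nat.card_congr
  refine Equiv.ofBijective (fun s =>
    QuotientGroup.mk (⟨(↑s : G)⁻¹, H.inv_mem (hS.mem_of_mem s.2)⟩ :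
      H)) ⟨?_, ?_⟩
  · rintro ⟨s, hs⟩ ⟨s', hs'⟩ h
    rw [QuotientGroup.eq, Subgroup.mem_subgroupOf] at h
    have h' : s * s'⁻¹ ∈ KK H z := by
      simpa using h
    have hsH : s ∈ H := hS.mem_of_mem hs
    have e1 : s' = hS.rep s := hS.rep_eq hsH hs' h'
    have e2 : s = hS.rep s := hS.rep_eq hsH hs (by simpa using (KK H z).one_mem)
    simp only [Subtype.mk_eq_mk]
    exact e2.trans e1.symm
  · intro q
    induction q using QuotientGroup.induction_on with
    | H h =>
      obtain ⟨h, hh⟩ := h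
      have hinv : h⁻¹ ∈ H := H.inv_mem hh
      set s := hS.rep h⁻¹ with hsdef
      have hsS : s ∈ S := hS.rep_mem hinv
      refine ⟨⟨s, hsS⟩, ?_⟩
      rw [QuotientGroup.eq, Subgroup.mem_subgroupOf]
      have : h⁻¹ * s⁻¹ ∈ KK H z := hS.rep_rel hinv
      simpa using (KK H z).inv_mem this
  
lemma comap_conj_conj (X : Subgroup G) (z w : G) :
    (X.comap (MulAut.conj z).toMonoidHom).comap (MulAut.conj w).toMonoidHom
      = X.comap (MulAut.conj (z * w)).toMonoidHom := by
  rw [Subgroup.comap_comap]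
  congr 1
  ext g
  simp only [MonoidHom.comp_apply, MulAut.conj_apply, MulEquiv.coe_toMonoidHom]
  group

lemma comap_conj_one (X : Subgroup G) :
    X.comap (MulAut.conj (1 : G)).toMonoidHom = X := by
  ext g
  simp [MulAut.conj_apply]

lemma relindex_conj (X Y : Subgroup G) (z : G) :
    (X.comap (MulAut.conj z).toMonoidHom).relIndex (Y.comap (MulAut.conj z).toMonoidHom)
      = X.relIndex Y := by
  rw [Subgroup.relIndex_comap]
  congr 1
  exact Subgroup.map_comap_eq_self_of_surjective (MulAut.conj z).surjective Y

/-- Cocycle identity for relative indices of three pairwise commensurable subgroups. -/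
lemma cocycle (A B C' : Subgroup G)
    (h1 : (A ⊓ B).relIndex A ≠ 0) (h2 : (A ⊓ B).relIndex B ≠ 0)
    (h3 : (B ⊓ C').relIndex B ≠ 0) (h4 : (B ⊓ C').relIndex C' ≠ 0)
    (h5 : (A ⊓ C').relIndex A ≠ 0) (h6 : (A ⊓ C').relIndex C' ≠ 0) :
    (B ⊓ C').relIndex B * (A ⊓ B).relIndex A * (A ⊓ C').relIndex C'
      = (B ⊓ C').relIndex C' * (A ⊓ B).relIndex B * (A ⊓ C').relIndex A := by
  set D := A ⊓ B ⊓ C' with hD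
  have hD1 : D = (A ⊓ B) ⊓ (A ⊓ C') := by
    ext g; simp only [hD, Subgroup.mem_inf]; tauto
  have hD2 : D = (A ⊓ B) ⊓ (B ⊓ C') := by
    ext g; simp only [hD, Subgroup.mem_inf]; tauto
  have hD3 : D = (A ⊓ C') ⊓ (B ⊓ C') := by
    ext g; simp only [hD, Subgroup.mem_inf]; tauto
  have hDAB : D ≤ A ⊓ B := le_of_eq_of_le hD1 inf_le_left
  have hDAC : D ≤ A ⊓ C' := le_of_eq_of_le hD1 inf_le_right
  have hDBC : D ≤ B ⊓ C' := le_of_eq_of_le hD3 inf_le_right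
  set pAB := D.relIndex (A ⊓ B) with hpAB
  set pAC := D.relIndex (A ⊓ C') with hpAC
  set pBC := D.relIndex (B ⊓ C') with hpBC
  have cA1 : pAB * (A ⊓ B).relIndex A = D.relIndex A :=
    Subgroup.relIndex_mul_relIndex D (A ⊓ B) A hDAB inf_le_left
  have cA2 : pAC * (A ⊓ C').relIndex A = D.relIndex A :=
    Subgroup.relIndex_mul_relIndex D (A ⊓ C') A hDAC inf_le_left
  have cB1 : pAB * (A ⊓ B).relIndex B = D.relIndex B :=
    Subgroup.relIndex_mul_relIndex D (A ⊓ B) B hDAB inf_le_right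
  have cB2 : pBC * (B ⊓ C').relIndex B = D.relIndex B :=
    Subgroup.relIndex_mul_relIndex D (B ⊓ C') B hDBC inf_le_left
  have cC1 : pAC * (A ⊓ C').relIndex C' = D.relIndex C' :=
    Subgroup.relIndex_mul_relIndex D (A ⊓ C') C' hDAC inf_le_right
  have cC2 : pBC * (B ⊓ C').relIndex C' = D.relIndex C' :=
    Subgroup.relIndex_mul_relIndex D (B ⊓ C') C' hDBC inf_le_right
  have hdA : D.relIndex A ≠ 0 := by
    rw [hD1]; exact Subgroup.relIndex_inf_ne_zero h1 h5
  have hdB : D.relIndex B ≠ 0 := by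
    rw [hD2]; exact Subgroup.relIndex_inf_ne_zero h2 h3
  have hpABne : pAB ≠ 0 := fun h => hdA (by rw [← cA1, h, zero_mul])
  have hpACne : pAC ≠ 0 := fun h => hdA (by rw [← cA2, h, zero_mul])
  have hpBCne : pBC ≠ 0 := fun h => hdB (by rw [← cB2, h, zero_mul])
  have hP : 0 < pAB * pAC * pBC := Nat.pos_of_ne_zero (by
    intro h
    rcases Nat.mul_eq_zero.1 h with h' | h'
    · rcases Nat.mul_eq_zero.1 h' with h'' | h''
      · exact hpABne h''
      · exact hpACne h''
    · exact hpBCne h')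
  apply Nat.eq_of_mul_eq_mul_right hP
  calc (B ⊓ C').relIndex B * (A ⊓ B).relIndex A * (A ⊓ C').relIndex C' * (pAB * pAC * pBC)
      = (pBC * (B ⊓ C').relIndex B) * ((pAB * (A ⊓ B).relIndex A) *
          (pAC * (A ⊓ C').relIndex C')) := by ring
    _ = D.relIndex B * (D.relIndex A * D.relIndex C') := by rw [cB2, cA1, cC1]
    _ = (pBC * (B ⊓ C').relIndex C') * ((pAB * (A ⊓ B).relIndex B) *
          (pAC * (A ⊓ C').relIndex A)) := by rw [cC2, cB1, cA2]; ring
    _ = (B ⊓ C').relIndex C' * (A ⊓ B).relIndex B * (A ⊓ C').relIndex A *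
          (pAB * pAC * pBC) := by ring

/-- Multiplicativity of the modular function (cross-multiplied form). -/
lemma delta_mult (hH : ∀ z : G, (KK H z).relIndex H ≠ 0) (x y : G) :
    (KK H x).relIndex H * (KK H y).relIndex H * (KK H (x * y)⁻¹).relIndex H
      = (KK H x⁻¹).relIndex H * (KK H y⁻¹).relIndex H * (KK H (x * y)).relIndex H := by
  classical
  have hry : (KK H y).relIndex H
      = (H ⊓ H.comap (MulAut.conj y).toMonoidHom).relIndex H := rfl
  have hrxy : (KK H (x * y)).relIndex H
      = (H ⊓ H.comap (MulAut.conj (x * y)).toMonoidHom).relIndex H := rfl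
  have hrx : (KK H x).relIndex H
      = ((H.comap (MulAut.conj y).toMonoidHom) ⊓ (H.comap (MulAut.conj (x * y)).toMonoidHom)).relIndex
          (H.comap (MulAut.conj y).toMonoidHom) := by
    rw [KK, ← relindex_conj (H ⊓ H.comap (MulAut.conj x).toMonoidHom) H y]
    rw [Subgroup.comap_inf, comap_conj_conj]
  have hryinv : (KK H y⁻¹).relIndex H
      = (H ⊓ H.comap (MulAut.conj y).toMonoidHom).relIndex
          (H.comap (MulAut.conj y).toMonoidHom) := by
    rw [KK, ← relindex_conj (H ⊓ H.comap (MulAut.conj y⁻¹).toMonoidHom) H y]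
    rw [Subgroup.comap_inf, comap_conj_conj, inv_mul_cancel, comap_conj_one, inf_comm]
  have hrxinv : (KK H x⁻¹).relIndex H
      = ((H.comap (MulAut.conj y).toMonoidHom) ⊓ (H.comap (MulAut.conj (x * y)).toMonoidHom)).relIndex
          (H.comap (MulAut.conj (x * y)).toMonoidHom) := by
    rw [KK, ← relindex_conj (H ⊓ H.comap (MulAut.conj x⁻¹).toMonoidHom) H (x * y)]
    rw [Subgroup.comap_inf, comap_conj_conj]
    have e : x⁻¹ * (x * y) = y := by group
    rw [e, inf_comm]
  have hrxyinv : (KK H (x * y)⁻¹).relIndex H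
      = (H ⊓ H.comap (MulAut.conj (x * y)).toMonoidHom).relIndex
          (H.comap (MulAut.conj (x * y)).toMonoidHom) := by
    rw [KK, ← relindex_conj (H ⊓ H.comap (MulAut.conj (x * y)⁻¹).toMonoidHom) H (x * y)]
    rw [Subgroup.comap_inf, comap_conj_conj, inv_mul_cancel, comap_conj_one, inf_comm]
  rw [hrx, hry, hrxyinv, hrxinv, hryinv, hrxy]
  exact cocycle H (H.comap (MulAut.conj y).toMonoidHom)
    (H.comap (MulAut.conj (x * y)).toMonoidHom)
    (by rw [← hry]; exact hH y) (by rw [← hryinv]; exact hH y⁻¹)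
    (by rw [← hrx]; exact hH x) (by rw [← hrxinv]; exact hH x⁻¹)
    (by rw [← hrxy]; exact hH (x * y)) (by rw [← hrxyinv]; exact hH (x * y)⁻¹)


section Main2
variable {F : Type*} [Field F] [CharZero F]

/-- The second partial-representation identity. -/
lemma main_two (x y : G)
    (hpx : ((fun g => x⁻¹ * g * x) '' (H : Set G)) * (H : Set G)
      = (H : Set G) * ((fun g => x⁻¹ * g * x) '' (H : Set G)))
    {Sa Sx Sy Sxy : Finset G} {Ta Tx Ty Txy : Module.End F (HeckeModule H F)}
    (ha : IsTransversal H (KK H x⁻¹) Sa)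
    (hfa : ∀ t, Ta (deltaH H F t) = (Sa.card : F)⁻¹ • ∑ h ∈ Sa, deltaH H F (x⁻¹ * h * t))
    (hx : IsTransversal H (KK H x) Sx)
    (hfx : ∀ t, Tx (deltaH H F t) = (Sx.card : F)⁻¹ • ∑ h ∈ Sx, deltaH H F (x * h * t))
    (hy : IsTransversal H (KK H y) Sy)
    (hfy : ∀ t, Ty (deltaH H F t) = (Sy.card : F)⁻¹ • ∑ h ∈ Sy, deltaH H F (y * h * t))
    (hxy : IsTransversal H (KK H (x * y)) Sxy)
    (hfxy : ∀ t, Txy (deltaH H F t)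
      = (Sxy.card : F)⁻¹ • ∑ h ∈ Sxy, deltaH H F ((x * y) * h * t)) :
    Ta * Tx * Ty = Ta * Txy := by
  classical
  apply end_ext
  intro t
  apply finsupp_ext
  intro w
  set q := Quotient.mk (QuotientGroup.rightRel H) w with hq
  set g := w * t⁻¹ with hg
  set Aset : Set G := {h : G | h ∈ (H : Set G) ∧ g * h⁻¹ * y⁻¹ ∈ LL H x hpx} with hAset
  -- stability
  have stab₁ : ∀ κ ∈ KK H y, ∀ a ∈ Aset, κ * a ∈ Aset := by
    intro κ hκ a haA
    obtain ⟨hκH, hκc⟩ := mem_KK.1 hκ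
    obtain ⟨haH, haL⟩ := haA
    refine ⟨H.mul_mem hκH haH, ?_⟩
    have e : g * (κ * a)⁻¹ * y⁻¹ = (g * a⁻¹ * y⁻¹) * (y * κ⁻¹ * y⁻¹) := by group
    rw [e]
    refine (LL H x hpx).mul_mem haL (H_le_LL ?_)
    have : y * κ⁻¹ * y⁻¹ = (y * κ * y⁻¹)⁻¹ := by group
    rw [this]
    exact H.inv_mem hκc
  have stab₂ : ∀ κ ∈ KK H (x * y), ∀ a ∈ Aset, κ * a ∈ Aset := by
    intro κ hκ a haA
    obtain ⟨hκH, hκc⟩ := mem_KK.1 hκ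
    obtain ⟨haH, haL⟩ := haA
    refine ⟨H.mul_mem hκH haH, ?_⟩
    have e : g * (κ * a)⁻¹ * y⁻¹ = (g * a⁻¹ * y⁻¹) * (y * κ⁻¹ * y⁻¹) := by group
    rw [e]
    refine (LL H x hpx).mul_mem haL ?_
    have e2 : y * κ⁻¹ * y⁻¹ = x⁻¹ * ((x * y) * κ * (x * y)⁻¹)⁻¹ * x := by group
    rw [e2]
    exact conj_mem_LL (H.inv_mem hκc)
  -- conditions
  have condA : ∀ k ∈ Sy, ∀ j ∈ Sx,
      (w * (x * j * (y * k * t))⁻¹ ∈ DCset H x⁻¹ ↔ k ∈ Aset) := by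
    intro k hk j hj
    have hkH : k ∈ H := hy.mem_of_mem hk
    have hjH : j ∈ H := hx.mem_of_mem hj
    rw [DC_inv_iff_LL (hp := hpx)]
    have e : w * (x * j * (y * k * t))⁻¹ * x = (g * k⁻¹ * y⁻¹) * j⁻¹ := by
      rw [hg]; group
    rw [e, (LL H x hpx).mul_mem_cancel_right (Subgroup.inv_mem _ (H_le_LL hjH))]
    simp only [hAset, Set.mem_setOf_eq]
    exact (and_iff_right hkH).symm
  have condB : ∀ m ∈ Sxy,
      (w * ((x * y) * m * t)⁻¹ ∈ DCset H x⁻¹ ↔ m ∈ Aset) := by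
    intro m hm
    have hmH : m ∈ H := hxy.mem_of_mem hm
    rw [DC_inv_iff_LL (hp := hpx)]
    have e : w * ((x * y) * m * t)⁻¹ * x = g * m⁻¹ * y⁻¹ := by
      rw [hg]; group
    rw [e]
    simp only [hAset, Set.mem_setOf_eq]
    exact (and_iff_right hmH).symm
  -- compute LHS coefficient
  have lhs : ((Ta * Tx * Ty) (deltaH H F t)) q
      = (Sy.card : F)⁻¹ * (((Sy.filter (· ∈ Aset)).card : F) * (Sa.card : F)⁻¹) := by
    have e0 : (Ta * Tx * Ty) (deltaH H F t) = Ta (Tx (Ty (deltaH H F t))) := by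
      simp [Module.End.mul_apply]
    rw [e0, hfy t, map_smul, map_smul, Finsupp.smul_apply, map_sum, map_sum,
      Finsupp.finset_sum_apply]
    have hSx : (Sx.card : F) ≠ 0 := Nat.cast_ne_zero.2 hx.card_ne_zero
    have e1 : ∀ k ∈ Sy, (Ta (Tx (deltaH H F (y * k * t)))) q
        = if k ∈ Aset then (Sa.card : F)⁻¹ else 0 := by
      intro k hk
      rw [hfx (y * k * t), map_smul, Finsupp.smul_apply, map_sum, Finsupp.finset_sum_apply]
      have e2 : ∀ j ∈ Sx, (Ta (deltaH H F (x * j * (y * k * t)))) q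
          = if k ∈ Aset then (Sa.card : F)⁻¹ else 0 := by
        intro j hj
        rw [hq, coeff ha hfa (x * j * (y * k * t)) w]
        exact if_congr (condA k hk j hj) rfl rfl
      rw [Finset.sum_congr rfl e2, Finset.sum_const, nsmul_eq_mul, smul_eq_mul]
      rcases Classical.em (k ∈ Aset) with hmem | hmem
      · rw [if_pos hmem, inv_mul_cancel_left₀ hSx]
      · rw [if_neg hmem, mul_zero, mul_zero]
    rw [Finset.sum_congr rfl e1, Finset.sum_ite, Finset.sum_const, Finset.sum_const_zero,
      add_zero, nsmul_eq_mul, smul_eq_mul]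
  -- compute RHS coefficient
  have rhs : ((Ta * Txy) (deltaH H F t)) q
      = (Sxy.card : F)⁻¹ * (((Sxy.filter (· ∈ Aset)).card : F) * (Sa.card : F)⁻¹) := by
    have e0 : (Ta * Txy) (deltaH H F t) = Ta (Txy (deltaH H F t)) := by
      simp [Module.End.mul_apply]
    rw [e0, hfxy t, map_smul, Finsupp.smul_apply, map_sum, Finsupp.finset_sum_apply]
    have e1 : ∀ m ∈ Sxy, (Ta (deltaH H F ((x * y) * m * t))) q
        = if m ∈ Aset then (Sa.card : F)⁻¹ else 0 := by
      intro m hm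
      rw [hq, coeff ha hfa ((x * y) * m * t) w]
      exact if_congr (condB m hm) rfl rfl
    rw [Finset.sum_congr rfl e1, Finset.sum_ite, Finset.sum_const, Finset.sum_const_zero,
      add_zero, nsmul_eq_mul, smul_eq_mul]
  rw [lhs, rhs]
  -- use the counting identity
  have key := count_ratio (H := H) KK_le KK_le hy hxy Aset stab₁ stab₂
  rw [Finset.filter_congr_decidable Sy (· ∈ Aset) _, Finset.filter_congr_decidable Sxy (· ∈ Aset) _] at key
  have hSy : (Sy.card : F) ≠ 0 := Nat.cast_ne_zero.2 hy.card_ne_zero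
  have hSxy : (Sxy.card : F) ≠ 0 := Nat.cast_ne_zero.2 hxy.card_ne_zero
  have keyF : ((Sy.filter (· ∈ Aset)).card : F) * (Sxy.card : F)
      = ((Sxy.filter (· ∈ Aset)).card : F) * (Sy.card : F) := by
    exact_mod_cast congrArg (Nat.cast : ℕ → F) key
  apply mul_left_cancel₀ (mul_ne_zero hSy hSxy)
  rw [show ((Sy.card : F) * (Sxy.card : F)) * ((Sy.card : F)⁻¹ *
        (((Sy.filter (· ∈ Aset)).card : F) * (Sa.card : F)⁻¹))
      = ((Sy.card : F) * (Sy.card : F)⁻¹) * ((Sxy.card : F) *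
        ((Sy.filter (· ∈ Aset)).card : F) * (Sa.card : F)⁻¹) from by ring,
    show ((Sy.card : F) * (Sxy.card : F)) * ((Sxy.card : F)⁻¹ *
        (((Sxy.filter (· ∈ Aset)).card : F) * (Sa.card : F)⁻¹))
      = ((Sxy.card : F) * (Sxy.card : F)⁻¹) * ((Sy.card : F) *
        ((Sxy.filter (· ∈ Aset)).card : F) * (Sa.card : F)⁻¹) from by ring,
    mul_inv_cancel₀ hSy, mul_inv_cancel₀ hSxy, one_mul, one_mul]
  linear_combination (Sa.card : F)⁻¹ * keyF

end Main2

section Main3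
variable {H : Subgroup G} {F : Type*} [Field F] [CharZero F]

/-- The third partial-representation identity. -/
lemma main_three (x y : G)
    (hpy : ((fun g => (y⁻¹)⁻¹ * g * y⁻¹) '' (H : Set G)) * (H : Set G)
      = (H : Set G) * ((fun g => (y⁻¹)⁻¹ * g * y⁻¹) '' (H : Set G)))
    {Sx Sy Sb Sxy Sxinv Sxyinv : Finset G}
    {Tx Ty Tb Txy : Module.End F (HeckeModule H F)}
    (hx : IsTransversal H (KK H x) Sx)
    (hfx : ∀ t, Tx (deltaH H F t) = (Sx.card : F)⁻¹ • ∑ h ∈ Sx, deltaH H F (x * h * t))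
    (hy : IsTransversal H (KK H y) Sy)
    (hfy : ∀ t, Ty (deltaH H F t) = (Sy.card : F)⁻¹ • ∑ h ∈ Sy, deltaH H F (y * h * t))
    (hb : IsTransversal H (KK H y⁻¹) Sb)
    (hfb : ∀ t, Tb (deltaH H F t) = (Sb.card : F)⁻¹ • ∑ h ∈ Sb, deltaH H F (y⁻¹ * h * t))
    (hxy : IsTransversal H (KK H (x * y)) Sxy)
    (hfxy : ∀ t, Txy (deltaH H F t)
      = (Sxy.card : F)⁻¹ • ∑ h ∈ Sxy, deltaH H F ((x * y) * h * t))
    (hxinv : IsTransversal H (KK H x⁻¹) Sxinv)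
    (hxyinv : IsTransversal H (KK H (x * y)⁻¹) Sxyinv)
    (hdelta : Sx.card * Sy.card * Sxyinv.card = Sxinv.card * Sb.card * Sxy.card) :
    Tx * Ty * Tb = Txy * Tb := by
  classical
  apply end_ext
  intro t
  apply finsupp_ext
  intro w
  set q := Quotient.mk (QuotientGroup.rightRel H) w with hq
  set g := w * t⁻¹ with hg
  set Bset : Set G := {h : G | h ∈ (H : Set G) ∧ x⁻¹ * h * g ∈ LL H y⁻¹ hpy} with hBset
  -- claim A : flip of the inner condition
  have claimA : ∀ k : G, k ∈ H → ∀ i : G,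
      ((g * k⁻¹ * y)⁻¹ * i⁻¹ * x ∈ DCset H y⁻¹ ↔ x⁻¹ * i * g ∈ LL H y⁻¹ hpy) := by
    intro k hk i
    constructor
    · rintro ⟨h₁, hh₁, h₂, hh₂, E⟩
      have E2 : x⁻¹ * i * g * k⁻¹ = ((g * k⁻¹ * y)⁻¹ * i⁻¹ * x)⁻¹ * y⁻¹ := by group
      rw [E] at E2
      have E3 : x⁻¹ * i * g * k⁻¹ = h₂⁻¹ * ((y⁻¹)⁻¹ * h₁⁻¹ * y⁻¹) := by rw [E2]; group
      have hmem : x⁻¹ * i * g * k⁻¹ ∈ LL H y⁻¹ hpy :=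
        mem_LL_iff.2 ⟨h₂⁻¹, H.inv_mem hh₂, h₁⁻¹, H.inv_mem hh₁, E3⟩
      have := (LL H y⁻¹ hpy).mul_mem hmem (H_le_LL hk)
      have e4 : x⁻¹ * i * g * k⁻¹ * k = x⁻¹ * i * g := by group
      rwa [e4] at this
    · intro hmem
      have hmem' : x⁻¹ * i * g * k⁻¹ ∈ LL H y⁻¹ hpy :=
        (LL H y⁻¹ hpy).mul_mem hmem (H_le_LL (H.inv_mem hk))
      obtain ⟨h₁, hh₁, h₂, hh₂, E⟩ := mem_LL_iff.1 hmem'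
      refine ⟨h₂⁻¹, H.inv_mem hh₂, h₁⁻¹, H.inv_mem hh₁, ?_⟩
      have E3 : (g * k⁻¹ * y)⁻¹ * i⁻¹ * x = (x⁻¹ * i * g * k⁻¹ * y)⁻¹ := by group
      rw [E3, E]
      group
  -- claim B : flip of the right-hand condition
  have claimB : ∀ m : G,
      (g⁻¹ * m⁻¹ * (x * y) ∈ DCset H (y⁻¹)⁻¹ ↔ x⁻¹ * m * g ∈ LL H y⁻¹ hpy) := by
    intro m
    constructor
    · rintro ⟨h₁, hh₁, h₂, hh₂, E⟩
      have E2 : x⁻¹ * m * g = y * (g⁻¹ * m⁻¹ * (x * y))⁻¹ := by group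
      rw [E] at E2
      have hmem : x⁻¹ * m * g ∈ ((fun g => (y⁻¹)⁻¹ * g * y⁻¹) '' (H : Set G)) * (H : Set G) :=
        ⟨(y⁻¹)⁻¹ * h₂⁻¹ * y⁻¹, ⟨h₂⁻¹, H.inv_mem hh₂, rfl⟩, h₁⁻¹, H.inv_mem hh₁,
          by rw [E2]; group⟩
      rw [hpy] at hmem
      obtain ⟨a₁, ha₁, c, ⟨a₂, ha₂, rfl⟩, he⟩ := hmem
      exact mem_LL_iff.2 ⟨a₁, ha₁, a₂, ha₂, he.symm⟩
    · intro hmem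
      obtain ⟨h₁, hh₁, h₂, hh₂, E⟩ := mem_LL_iff.1 hmem
      have hmem' : x⁻¹ * m * g ∈ ((fun g => (y⁻¹)⁻¹ * g * y⁻¹) '' (H : Set G)) * (H : Set G) := by
        rw [hpy]
        exact ⟨h₁, hh₁, (y⁻¹)⁻¹ * h₂ * y⁻¹, ⟨h₂, hh₂, rfl⟩, E.symm⟩
      obtain ⟨c, ⟨a₂, ha₂, rfl⟩, a₁, ha₁, he⟩ := hmem'
      refine ⟨a₁⁻¹, H.inv_mem ha₁, a₂⁻¹, H.inv_mem ha₂, ?_⟩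
      have E3 : g⁻¹ * m⁻¹ * (x * y) = (x⁻¹ * m * g)⁻¹ * y := by group
      rw [E3, ← he]
      group
  -- stability of Bset
  have stab₁ : ∀ κ ∈ KK H x⁻¹, ∀ a ∈ Bset, κ * a ∈ Bset := by
    intro κ hκ a haB
    obtain ⟨hκH, hκc⟩ := mem_KK.1 hκ
    rw [inv_inv] at hκc
    obtain ⟨haH, haL⟩ := haB
    refine ⟨H.mul_mem hκH haH, ?_⟩
    have e : x⁻¹ * (κ * a) * g = (x⁻¹ * κ * x) * (x⁻¹ * a * g) := by group
    rw [e]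
    exact (LL H y⁻¹ hpy).mul_mem (H_le_LL hκc) haL
  have stab₂ : ∀ κ ∈ KK H (x * y)⁻¹, ∀ a ∈ Bset, κ * a ∈ Bset := by
    intro κ hκ a haB
    obtain ⟨hκH, hκc⟩ := mem_KK.1 hκ
    rw [inv_inv] at hκc
    obtain ⟨haH, haL⟩ := haB
    refine ⟨H.mul_mem hκH haH, ?_⟩
    have e : x⁻¹ * (κ * a) * g = (x⁻¹ * κ * x) * (x⁻¹ * a * g) := by group
    rw [e]
    refine (LL H y⁻¹ hpy).mul_mem ?_ haL
    have e2 : x⁻¹ * κ * x = (y⁻¹)⁻¹ * ((x * y)⁻¹ * κ * (x * y)) * y⁻¹ := by group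
    rw [e2]
    exact conj_mem_LL hκc
  -- the two counts
  have c1eq : ∀ k ∈ Sb,
      (Sy.filter (fun j => (g * k⁻¹ * y) * j⁻¹ * y⁻¹ ∈ DCset H x)).card
        = (Sxinv.filter (· ∈ Bset)).card := by
    intro k hk
    have hkH : k ∈ H := hb.mem_of_mem hk
    have tc := transpose_count x y (g * k⁻¹ * y) hxinv hy
    rw [Finset.filter_congr_decidable Sy
        (fun j => (g * k⁻¹ * y) * j⁻¹ * y⁻¹ ∈ DCset H x) _,
      Finset.filter_congr_decidable Sxinv
        (fun i => (g * k⁻¹ * y)⁻¹ * i⁻¹ * x ∈ DCset H y⁻¹) _] at tc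
    rw [tc]
    congr 1
    apply Finset.filter_congr
    intro i hi
    have hiH : i ∈ H := hxinv.mem_of_mem hi
    rw [claimA k hkH i]
    simp only [hBset, Set.mem_setOf_eq]
    exact (and_iff_right hiH).symm
  have c2eq : (Sb.filter (fun k => g * k⁻¹ * (y⁻¹)⁻¹ ∈ DCset H (x * y))).card
      = (Sxyinv.filter (· ∈ Bset)).card := by
    have tc := transpose_count (x * y) y⁻¹ g hxyinv hb
    rw [Finset.filter_congr_decidable Sb
        (fun k => g * k⁻¹ * (y⁻¹)⁻¹ ∈ DCset H (x * y)) _,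
      Finset.filter_congr_decidable Sxyinv
        (fun k => g⁻¹ * k⁻¹ * (x * y) ∈ DCset H (y⁻¹)⁻¹) _] at tc
    rw [tc]
    congr 1
    apply Finset.filter_congr
    intro m hm
    have hmH : m ∈ H := hxyinv.mem_of_mem hm
    rw [claimB m]
    simp only [hBset, Set.mem_setOf_eq]
    exact (and_iff_right hmH).symm
  -- nonvanishing
  have hSx : (Sx.card : F) ≠ 0 := Nat.cast_ne_zero.2 hx.card_ne_zero
  have hSy : (Sy.card : F) ≠ 0 := Nat.cast_ne_zero.2 hy.card_ne_zero
  have hSb : (Sb.card : F) ≠ 0 := Nat.cast_ne_zero.2 hb.card_ne_zero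
  have hSxy : (Sxy.card : F) ≠ 0 := Nat.cast_ne_zero.2 hxy.card_ne_zero
  -- LHS coefficient
  have lhs : ((Tx * Ty * Tb) (deltaH H F t)) q
      = (Sb.card : F)⁻¹ * ((Sb.card : F) * ((Sy.card : F)⁻¹ *
          (((Sxinv.filter (· ∈ Bset)).card : F) * (Sx.card : F)⁻¹))) := by
    have e0 : (Tx * Ty * Tb) (deltaH H F t) = Tx (Ty (Tb (deltaH H F t))) := by
      simp [Module.End.mul_apply]
    rw [e0, hfb t, map_smul, map_smul, Finsupp.smul_apply, map_sum, map_sum,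
      Finsupp.finset_sum_apply]
    have e1 : ∀ k ∈ Sb, (Tx (Ty (deltaH H F (y⁻¹ * k * t)))) q
        = (Sy.card : F)⁻¹ * (((Sxinv.filter (· ∈ Bset)).card : F) * (Sx.card : F)⁻¹) := by
      intro k hk
      rw [hfy (y⁻¹ * k * t), map_smul, Finsupp.smul_apply, map_sum, Finsupp.finset_sum_apply]
      have e2 : ∀ j ∈ Sy, (Tx (deltaH H F (y * j * (y⁻¹ * k * t)))) q
          = if (g * k⁻¹ * y) * j⁻¹ * y⁻¹ ∈ DCset H x then (Sx.card : F)⁻¹ else 0 := by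
        intro j hj
        rw [hq, coeff hx hfx (y * j * (y⁻¹ * k * t)) w]
        have e3 : w * (y * j * (y⁻¹ * k * t))⁻¹ = (g * k⁻¹ * y) * j⁻¹ * y⁻¹ := by
          rw [hg]; group
        rw [e3]
      rw [Finset.sum_congr rfl e2, Finset.sum_ite, Finset.sum_const, Finset.sum_const_zero,
        add_zero, nsmul_eq_mul, smul_eq_mul, c1eq k hk]
    rw [Finset.sum_congr rfl e1, Finset.sum_const, nsmul_eq_mul, smul_eq_mul]
  -- RHS coefficient
  have rhs : ((Txy * Tb) (deltaH H F t)) q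
      = (Sb.card : F)⁻¹ * (((Sxyinv.filter (· ∈ Bset)).card : F) * (Sxy.card : F)⁻¹) := by
    have e0 : (Txy * Tb) (deltaH H F t) = Txy (Tb (deltaH H F t)) := by
      simp [Module.End.mul_apply]
    rw [e0, hfb t, map_smul, Finsupp.smul_apply, map_sum, Finsupp.finset_sum_apply]
    have e1 : ∀ k ∈ Sb, (Txy (deltaH H F (y⁻¹ * k * t))) q
        = if g * k⁻¹ * (y⁻¹)⁻¹ ∈ DCset H (x * y) then (Sxy.card : F)⁻¹ else 0 := by
      intro k hk
      rw [hq, coeff hxy hfxy (y⁻¹ * k * t) w]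
      have e3 : w * (y⁻¹ * k * t)⁻¹ = g * k⁻¹ * (y⁻¹)⁻¹ := by rw [hg]; group
      rw [e3]
    rw [Finset.sum_congr rfl e1, Finset.sum_ite, Finset.sum_const, Finset.sum_const_zero,
      add_zero, nsmul_eq_mul, smul_eq_mul, c2eq]
  rw [lhs, rhs]
  -- counting identity between the two filters
  have key := count_ratio (H := H) KK_le KK_le hxinv hxyinv Bset stab₁ stab₂
  rw [Finset.filter_congr_decidable Sxinv (· ∈ Bset) _,
    Finset.filter_congr_decidable Sxyinv (· ∈ Bset) _] at key
  -- combine with the modular identity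
  have hSxyinvNe : Sxyinv.card ≠ 0 := hxyinv.card_ne_zero
  have main_nat : (Sxinv.filter (· ∈ Bset)).card * Sb.card * Sxy.card
      = (Sxyinv.filter (· ∈ Bset)).card * Sx.card * Sy.card := by
    apply Nat.eq_of_mul_eq_mul_right (Nat.pos_of_ne_zero hSxyinvNe)
    calc (Sxinv.filter (· ∈ Bset)).card * Sb.card * Sxy.card * Sxyinv.card
        = ((Sxinv.filter (· ∈ Bset)).card * Sxyinv.card) * (Sb.card * Sxy.card) := by ring
      _ = ((Sxyinv.filter (· ∈ Bset)).card * Sxinv.card) * (Sb.card * Sxy.card) := by rw [key]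
      _ = (Sxyinv.filter (· ∈ Bset)).card * (Sxinv.card * Sb.card * Sxy.card) := by ring
      _ = (Sxyinv.filter (· ∈ Bset)).card * (Sx.card * Sy.card * Sxyinv.card) := by
            rw [← hdelta]
      _ = (Sxyinv.filter (· ∈ Bset)).card * Sx.card * Sy.card * Sxyinv.card := by ring
  have mainF : ((Sxinv.filter (· ∈ Bset)).card : F) * (Sb.card : F) * (Sxy.card : F)
      = ((Sxyinv.filter (· ∈ Bset)).card : F) * (Sx.card : F) * (Sy.card : F) := by
    exact_mod_cast congrArg (Nat.cast : ℕ → F) main_nat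
  apply mul_left_cancel₀
    (mul_ne_zero (mul_ne_zero (mul_ne_zero hSx hSy) hSb) hSxy)
  rw [show ((Sx.card : F) * (Sy.card : F) * (Sb.card : F) * (Sxy.card : F)) *
        ((Sb.card : F)⁻¹ * ((Sb.card : F) * ((Sy.card : F)⁻¹ *
          (((Sxinv.filter (· ∈ Bset)).card : F) * (Sx.card : F)⁻¹))))
      = ((Sx.card : F) * (Sx.card : F)⁻¹) * (((Sy.card : F) * (Sy.card : F)⁻¹) *
          (((Sb.card : F) * (Sb.card : F)⁻¹) *
          (((Sxinv.filter (· ∈ Bset)).card : F) * (Sb.card : F) * (Sxy.card : F)))) from by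
        ring,
    show ((Sx.card : F) * (Sy.card : F) * (Sb.card : F) * (Sxy.card : F)) *
        ((Sb.card : F)⁻¹ * (((Sxyinv.filter (· ∈ Bset)).card : F) * (Sxy.card : F)⁻¹))
      = ((Sb.card : F) * (Sb.card : F)⁻¹) * (((Sxy.card : F) * (Sxy.card : F)⁻¹) *
          (((Sxyinv.filter (· ∈ Bset)).card : F) * (Sx.card : F) * (Sy.card : F))) from by
        ring,
    mul_inv_cancel₀ hSx, mul_inv_cancel₀ hSy, mul_inv_cancel₀ hSb, mul_inv_cancel₀ hSxy]
  simp only [one_mul]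
  exact mainF

end Main3

end HeckeAux

/-- If `(G, H)` is a Hecke pair with `H` protonormal in `G`, then `x ↦ σ_x` is a
partial representation of `G` in the Hecke algebra: `σ_1 = 1`,
`σ_{x⁻¹} σ_x σ_y = σ_{x⁻¹} σ_{xy}`, and `σ_x σ_y σ_{y⁻¹} = σ_{xy} σ_{y⁻¹}`. -/
theorem stmt15 {G : Type*} [Group G] (H : Subgroup G) (F : Type*) [Field F] [CharZero F]
    (hH : IsHeckePair H)
    (hproto : ∀ x : G,
      ((fun g => x⁻¹ * g * x) '' (H : Set G)) * (H : Set G)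
        = (H : Set G) * ((fun g => x⁻¹ * g * x) '' (H : Set G)))
    (σ : G → Module.End F (HeckeModule H F))
    (hσ : ∀ x : G, IsSigma H F x (σ x)) :
    σ 1 = 1 ∧
    (∀ x y : G, σ x⁻¹ * σ x * σ y = σ x⁻¹ * σ (x * y)) ∧
    (∀ x y : G, σ x * σ y * σ y⁻¹ = σ (x * y) * σ y⁻¹) := by
  classical
  have hS : ∀ z : G, ∃ S : Finset G, HeckeAux.IsTransversal H (HeckeAux.KK H z) S ∧
      ∀ t : G, σ z (deltaH H F t) = (S.card : F)⁻¹ • ∑ h ∈ S, deltaH H F (z * h * t) := by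
    intro z
    obtain ⟨S, h1, h2, h3⟩ := hσ z
    refine ⟨S, ⟨h1, fun g hg => ?_⟩, h3⟩
    have hiff : ∀ s : G, (s ∈ S ∧ g * s⁻¹ ∈ H ∧ z * (g * s⁻¹) * z⁻¹ ∈ H)
        ↔ (s ∈ S ∧ g * s⁻¹ ∈ HeckeAux.KK H z) := by
      intro s
      rw [HeckeAux.mem_KK]
    exact (existsUnique_congr hiff).1 (h2 g hg)
  choose S hTr hFor using hS
  refine ⟨?_, ?_, ?_⟩
  · -- σ 1 = 1
    obtain ⟨s₀, hs₀⟩ := (hTr 1).nonempty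
    have hs₀H : s₀ ∈ H := (hTr 1).mem_of_mem hs₀
    have huniq : ∀ s ∈ S 1, s = s₀ := by
      intro s hs
      have hsH : s ∈ H := (hTr 1).mem_of_mem hs
      obtain ⟨r, _, hr⟩ := (hTr 1).2 s hsH
      have e1 : s = r := hr s ⟨hs, HeckeAux.mem_KK.2 ⟨by simpa using H.one_mem, by simpa using H.one_mem⟩⟩
      have e2 : s₀ = r := hr s₀ ⟨hs₀, HeckeAux.mem_KK.2
        ⟨H.mul_mem hsH (H.inv_mem hs₀H), by
          simpa using H.mul_mem hsH (H.inv_mem hs₀H)⟩⟩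
      exact e1.trans e2.symm
    have hsing : S 1 = {s₀} := Finset.eq_singleton_iff_unique_mem.2 ⟨hs₀, huniq⟩
    apply HeckeAux.end_ext
    intro t
    rw [hFor 1 t, hsing, Finset.sum_singleton, Finset.card_singleton, Nat.cast_one,
      inv_one, one_smul, Module.End.one_apply]
    have hq : Quotient.mk (QuotientGroup.rightRel H) (1 * s₀ * t)
        = Quotient.mk (QuotientGroup.rightRel H) t := by
      rw [HeckeAux.qm_eq_iff]
      rw [show t * (1 * s₀ * t)⁻¹ = s₀⁻¹ from by group]
      exact H.inv_mem hs₀H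
    unfold deltaH
    rw [hq]
  · intro x y
    exact HeckeAux.main_two x y (hproto x) (hTr x⁻¹) (hFor x⁻¹) (hTr x) (hFor x)
      (hTr y) (hFor y) (hTr (x * y)) (hFor (x * y))
  · intro x y
    have hH' : ∀ z : G, (HeckeAux.KK H z).relIndex H ≠ 0 := hH
    have hdelta : (S x).card * (S y).card * (S ((x * y)⁻¹)).card
        = (S x⁻¹).card * (S y⁻¹).card * (S (x * y)).card := by
      rw [HeckeAux.card_eq_relindex (hTr x), HeckeAux.card_eq_relindex (hTr y),
        HeckeAux.card_eq_relindex (hTr ((x * y)⁻¹)), HeckeAux.card_eq_relindex (hTr x⁻¹),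
        HeckeAux.card_eq_relindex (hTr y⁻¹), HeckeAux.card_eq_relindex (hTr (x * y))]
      exact HeckeAux.delta_mult hH' x y
    exact HeckeAux.main_three x y (hproto y⁻¹) (hTr x) (hFor x) (hTr y) (hFor y)
      (hTr y⁻¹) (hFor y⁻¹) (hTr (x * y)) (hFor (x * y)) (hTr x⁻¹) (hTr ((x * y)⁻¹)) hdelta
end

section
/- Let (G,H) be a Hecke pair such that σ_x σ_{x⁻¹} σ_x = σ_x for all x ∈ G. Then H is protonormal in G, i.e., (x⁻¹Hx)H = H(x⁻¹Hx) for all x ∈ G. -/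
open scoped Pointwise Classical


lemma key {G : Type*} [Group G] (H : Subgroup G) (F : Type*) [Field F] [CharZero F]
    (x : G) (σx σx' : Module.End F (HeckeModule H F))
    (hx : IsSigma H F x σx) (hx' : IsSigma H F x⁻¹ σx')
    (hpi : σx * σx' * σx = σx) :
    ∀ h1 ∈ H, ∀ h2 ∈ H, ∀ h3 ∈ H, ∃ a ∈ H, ∃ b ∈ H,
      x * h1 * x⁻¹ * h2 * x * h3 = a * x * b := by
  obtain ⟨S, hSsub, hSrep, hSeval⟩ := hx
  obtain ⟨S', hS'sub, hS'rep, hS'eval⟩ := hx'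
  -- step supp
  have supp : ∀ s1 ∈ S, ∀ s2 ∈ S', ∀ s3 ∈ S, ∃ a ∈ H, ∃ b ∈ S,
      x * s1 * x⁻¹ * s2 * x * s3 = a * (x * b) := by
    intro s1 hs1 s2 hs2 s3 hs3
    set q := Quotient.mk (QuotientGroup.rightRel H) (x * s1 * x⁻¹ * s2 * x * s3) with hq
    have hE := congrArg (fun T : Module.End F (HeckeModule H F) => T (deltaH H F 1) q) hpi
    simp only [Module.End.mul_apply, hSeval, map_smul, map_sum, hS'eval] at hE
    simp only [Finsupp.smul_apply, Finsupp.finset_sum_apply, deltaH, Finsupp.single_apply,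
      smul_eq_mul, Finset.mul_sum] at hE
    by_contra hcon
    push_neg at hcon
    have hRHS : ∀ i ∈ S, ((↑S.card)⁻¹ * if (⟦x * i * 1⟧ : Quotient (QuotientGroup.rightRel H)) = q then (1:F) else 0) = 0 := by
      intro i hi
      rw [if_neg, mul_zero]
      intro hqq
      rw [hq, mul_one, Quotient.eq] at hqq
      rw [QuotientGroup.rightRel_apply] at hqq
      exact hcon _ hqq i hi (by group)
    rw [Finset.sum_congr rfl hRHS, Finset.sum_const_zero] at hE
    simp only [← mul_assoc, ← Finset.mul_sum] at hE
    have hc : ((S.card : F)⁻¹ * (S'.card : F)⁻¹ * (S.card : F)⁻¹) ≠ 0 := by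
      have h1 : (S.card : F) ≠ 0 := by
        have := (hSrep 1 (one_mem H)).exists
        obtain ⟨s, hs, -⟩ := this
        exact Nat.cast_ne_zero.mpr (Finset.card_ne_zero_of_mem hs)
      have h2 : (S'.card : F) ≠ 0 := by
        have := (hS'rep 1 (one_mem H)).exists
        obtain ⟨s, hs, -⟩ := this
        exact Nat.cast_ne_zero.mpr (Finset.card_ne_zero_of_mem hs)
      exact mul_ne_zero (mul_ne_zero (inv_ne_zero h1) (inv_ne_zero h2)) (inv_ne_zero h1)
    have hsum0 : ∑ i ∈ S, ∑ i_1 ∈ S', ∑ i_2 ∈ S,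
        (if (⟦x * i_2 * x⁻¹ * i_1 * x * i * 1⟧ : Quotient (QuotientGroup.rightRel H)) = q then (1:F) else 0) = 0 :=
      (mul_eq_zero.mp hE).resolve_left hc
    have hcast : ((∑ i ∈ S, ∑ i_1 ∈ S', ∑ i_2 ∈ S,
        (if (⟦x * i_2 * x⁻¹ * i_1 * x * i * 1⟧ : Quotient (QuotientGroup.rightRel H)) = q then (1:ℕ) else 0) : ℕ) : F)
        = ∑ i ∈ S, ∑ i_1 ∈ S', ∑ i_2 ∈ S,
        (if (⟦x * i_2 * x⁻¹ * i_1 * x * i * 1⟧ : Quotient (QuotientGroup.rightRel H)) = q then (1:F) else 0) := by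
      push_cast
      rfl
    rw [← hcast, Nat.cast_eq_zero] at hsum0
    rw [Finset.sum_eq_zero_iff] at hsum0
    have h3 := hsum0 s3 hs3
    rw [Finset.sum_eq_zero_iff] at h3
    have h2 := h3 s2 hs2
    rw [Finset.sum_eq_zero_iff] at h2
    have h1 := h2 s1 hs1
    rw [if_pos] at h1
    · exact one_ne_zero h1
    · rw [hq, mul_one]
  have rep : ∀ g ∈ H, ∃ d s, x * d * x⁻¹ ∈ H ∧ s ∈ S ∧ g = d * s := by
    intro g hg
    obtain ⟨s, ⟨hsS, hd, hdc⟩, -⟩ := hSrep g hg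
    exact ⟨g * s⁻¹, s, hdc, hsS, by group⟩
  have rep' : ∀ g ∈ H, ∃ d s, x⁻¹ * d * x ∈ H ∧ s ∈ S' ∧ g = d * s := by
    intro g hg
    obtain ⟨s, ⟨hsS, hd, hdc⟩, -⟩ := hS'rep g hg
    rw [inv_inv] at hdc
    exact ⟨g * s⁻¹, s, hdc, hsS, by group⟩
  intro h1 hh1 h2 hh2 h3 hh3
  obtain ⟨d3, s3, hd3, hs3, he3⟩ := rep h3 hh3
  obtain ⟨d2, s2, hd2, hs2, he2⟩ := rep' (h2 * (x * d3 * x⁻¹)) (H.mul_mem hh2 hd3)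
  obtain ⟨d1, s1, hd1, hs1, he1⟩ := rep (h1 * (x⁻¹ * d2 * x)) (H.mul_mem hh1 hd2)
  obtain ⟨a, ha, b, hb, hab⟩ := supp s1 hs1 s2 hs2 s3 hs3
  refine ⟨(x * d1 * x⁻¹) * a, H.mul_mem hd1 ha, b, hSsub hb, ?_⟩
  calc x * h1 * x⁻¹ * h2 * x * h3
      = x * h1 * x⁻¹ * h2 * x * (d3 * s3) := by rw [he3]
    _ = x * h1 * x⁻¹ * (h2 * (x * d3 * x⁻¹)) * x * s3 := by group
    _ = x * h1 * x⁻¹ * (d2 * s2) * x * s3 := by rw [he2]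
    _ = x * (h1 * (x⁻¹ * d2 * x)) * x⁻¹ * s2 * x * s3 := by group
    _ = x * (d1 * s1) * x⁻¹ * s2 * x * s3 := by rw [he1]
    _ = (x * d1 * x⁻¹) * (x * s1 * x⁻¹ * s2 * x * s3) := by group
    _ = (x * d1 * x⁻¹) * (a * (x * b)) := by rw [hab]
    _ = ((x * d1 * x⁻¹) * a) * x * b := by group

/-- If `(G, H)` is a Hecke pair such that `σ_x σ_{x⁻¹} σ_x = σ_x` for all `x ∈ G`,
then `H` is protonormal in `G`: `(x⁻¹Hx)H = H(x⁻¹Hx)` for all `x ∈ G`. -/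
theorem stmt16 {G : Type*} [Group G] (H : Subgroup G) (F : Type*) [Field F] [CharZero F]
    (hH : IsHeckePair H)
    (σ : G → Module.End F (HeckeModule H F))
    (hσ : ∀ x : G, IsSigma H F x (σ x))
    (hpi : ∀ x : G, σ x * σ x⁻¹ * σ x = σ x) :
    ∀ x : G,
      ((fun g => x⁻¹ * g * x) '' (H : Set G)) * (H : Set G)
        = (H : Set G) * ((fun g => x⁻¹ * g * x) '' (H : Set G)) := by
  have claim : ∀ x : G, ∀ h1 ∈ H, ∀ h2 ∈ H, ∀ h3 ∈ H, ∃ a ∈ H, ∃ b ∈ H,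
      x * h1 * x⁻¹ * h2 * x * h3 = a * x * b :=
    fun x => key H F x (σ x) (σ x⁻¹) (hσ x) (hσ x⁻¹) (hpi x)
  intro x
  ext g
  simp only [Set.mem_mul, Set.mem_image, SetLike.mem_coe]
  constructor
  · rintro ⟨-, ⟨h, hh, rfl⟩, k, hk, rfl⟩
    obtain ⟨a, ha, b, hb, hab⟩ := claim x⁻¹ h hh k hk 1 (one_mem H)
    refine ⟨a, ha, x⁻¹ * b * x, ⟨b, hb, rfl⟩, ?_⟩
    calc a * (x⁻¹ * b * x) = (a * x⁻¹ * b) * x := by group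
      _ = (x⁻¹ * h * x⁻¹⁻¹ * k * x⁻¹ * 1) * x := by rw [hab]
      _ = (x⁻¹ * h * x) * k := by group
  · rintro ⟨k, hk, -, ⟨h, hh, rfl⟩, rfl⟩
    obtain ⟨a, ha, b, hb, hab⟩ := claim x k hk h hh 1 (one_mem H)
    refine ⟨x⁻¹ * a * x, ⟨a, ha, rfl⟩, b, hb, ?_⟩
    calc (x⁻¹ * a * x) * b = x⁻¹ * (a * x * b) := by group
      _ = x⁻¹ * (x * k * x⁻¹ * h * x * 1) := by rw [hab]
      _ = k * (x⁻¹ * h * x) := by group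
end

section
/- Let G be the group of rational matrices [[1, b],[0, a]] with a ∈ Q*, b ∈ Q, and for a set P of primes let H_P be the subgroup of matrices [[1, η],[0, ξ]] with η ∈ A_P and ξ ∈ A_P*, where A_P is the ring of rationals with denominator not divisible by any prime in P. Then (G, H_P) is a Hecke pair: for every x ∈ G, [H_P : H_P ∩ x⁻¹H_P x] is finite. -/
open scoped Pointwise
open Matrix

/-- `A_P`: the rationals whose denominator is divisible by no prime in `P`. -/
def ringAP (P : Set ℕ) : Set ℚ := {q : ℚ | ∀ p ∈ P, ¬ p ∣ q.den}

section RatDen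

variable {p : ℕ} (hp : p.Prime)

lemma den_div_int {z c : ℤ} (hpc : ¬ (p : ℤ) ∣ c) : ¬ (p : ℕ) ∣ ((z : ℚ) / (c : ℚ)).den := by
  intro hd
  apply hpc
  have h1 : ((z : ℚ) / (c : ℚ)) = Rat.divInt z c := (Rat.divInt_eq_div z c).symm
  have h2 : (((Rat.divInt z c).den : ℤ)) ∣ c := Rat.den_dvd z c
  rw [h1] at hd
  exact dvd_trans (Int.natCast_dvd_natCast.mpr hd) h2

include hp in
lemma den_add' {q r : ℚ} (hq : ¬ p ∣ q.den) (hr : ¬ p ∣ r.den) : ¬ p ∣ (q + r).den := by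
  intro h
  rcases (Nat.Prime.dvd_mul hp).mp (h.trans (Rat.add_den_dvd q r)) with h' | h'
  · exact hq h'
  · exact hr h'

include hp in
lemma den_mul' {q r : ℚ} (hq : ¬ p ∣ q.den) (hr : ¬ p ∣ r.den) : ¬ p ∣ (q * r).den := by
  intro h
  rcases (Nat.Prime.dvd_mul hp).mp (h.trans (Rat.mul_den_dvd q r)) with h' | h'
  · exact hq h'
  · exact hr h'

lemma den_neg' {q : ℚ} (hq : ¬ p ∣ q.den) : ¬ p ∣ (-q).den := by rwa [Rat.neg_den]

include hp in
lemma den_int' (z : ℤ) : ¬ p ∣ ((z : ℚ)).den := by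
  rw [Rat.den_intCast]
  exact fun h => hp.one_lt.ne' (Nat.eq_one_of_dvd_one h) |>.elim

include hp in
lemma den_one' : ¬ p ∣ (1 : ℚ).den := by exact_mod_cast den_int' hp 1

include hp in
lemma den_pow_div (z : ℤ) {c : ℤ} (hc0 : c ≠ 0) {n : ℕ}
    (hn : (c.natAbs).factorization p ≤ n) :
    ¬ p ∣ ((z : ℚ) * (p : ℚ) ^ n / (c : ℚ)).den := by
  set j := (c.natAbs).factorization p with hj
  have hcnA : c.natAbs ≠ 0 := Int.natAbs_ne_zero.mpr hc0
  have hdvd : (p : ℤ) ^ j ∣ c := by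
    have h1 : p ^ j ∣ c.natAbs := Nat.ordProj_dvd _ _
    have := (Int.natCast_dvd_natCast.mpr h1).trans (Int.natAbs_dvd.mpr dvd_rfl)
    exact_mod_cast this
  obtain ⟨c', hc'⟩ := hdvd
  have hc'0 : c' ≠ 0 := by rintro rfl; simp at hc'; exact hc0 hc'
  have hpc' : ¬ (p : ℤ) ∣ c' := by
    intro hd
    have h2 : ((p : ℤ)) ^ (j + 1) ∣ c := by
      rw [hc', pow_succ]
      exact mul_dvd_mul (dvd_refl _) hd
    have h3 : p ^ (j + 1) ∣ c.natAbs := by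
      have h4 := Int.natAbs_dvd_natAbs.mpr h2
      rwa [Int.natAbs_pow, Int.natAbs_natCast] at h4
    have := (Nat.Prime.pow_dvd_iff_le_factorization hp hcnA).mp h3
    omega
  have hq : ((z : ℚ) * (p : ℚ) ^ n / (c : ℚ)) = ((z * p ^ (n - j) : ℤ) : ℚ) / ((c' : ℤ) : ℚ) := by
    have hc'Q : (c' : ℚ) ≠ 0 := by exact_mod_cast hc'0
    have hcQ : (c : ℚ) = (p : ℚ) ^ j * (c' : ℚ) := by exact_mod_cast congrArg (Int.cast : ℤ → ℚ) hc'
    have hp0 : (p : ℚ) ≠ 0 := by exact_mod_cast hp.ne_zero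
    have hnj : n = (n - j) + j := by omega
    rw [hcQ]
    push_cast
    rw [hnj, pow_add]
    field_simp
    ring
    rw [Nat.add_sub_cancel]
  rw [hq]
  exact den_div_int hpc'

include hp in
lemma extract_pow {n : ℕ} {q r : ℚ} (hq : ¬ p ∣ q.den) (hr : ¬ p ∣ r.den)
    (hd : (p : ℤ) ^ n ∣ (r.num * q.den - q.num * r.den)) :
    ∃ s : ℚ, ¬ p ∣ s.den ∧ r - q = (p : ℚ) ^ n * s := by
  obtain ⟨c, hc⟩ := hd
  have hq0 : (q.den : ℚ) ≠ 0 := by exact_mod_cast q.den_ne_zero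
  have hr0 : (r.den : ℚ) ≠ 0 := by exact_mod_cast r.den_ne_zero
  refine ⟨(c : ℚ) / (((q.den : ℤ) * (r.den : ℤ) : ℤ) : ℚ), den_div_int ?_, ?_⟩
  · intro h
    have h' : (p : ℤ) ∣ (q.den : ℤ) * (r.den : ℤ) := h
    rcases (Int.Prime.dvd_mul' hp h') with h' | h'
    · exact hq (by exact_mod_cast h')
    · exact hr (by exact_mod_cast h')
  · have key : (r - q) * ((q.den : ℚ) * (r.den : ℚ)) = ((r.num * q.den - q.num * r.den : ℤ) : ℚ) := by
      push_cast
      rw [sub_mul]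
      rw [show (r : ℚ) * (↑q.den * ↑r.den) = (↑r.num / ↑r.den) * (↑q.den * ↑r.den) by rw [Rat.num_div_den]]
      rw [show (q : ℚ) * (↑q.den * ↑r.den) = (↑q.num / ↑q.den) * (↑q.den * ↑r.den) by rw [Rat.num_div_den]]
      field_simp
    rw [hc] at key
    push_cast at key ⊢
    rw [mul_div_assoc'] at *
    rw [eq_div_iff (by positivity)]
    linarith [key]

include hp in
lemma fact_le_of_dvd {m M : ℕ} (hm : m ≠ 0) (hdvd : m ∣ M) (hM : M ≠ 0) :
    m.factorization p ≤ M := by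
  set j := m.factorization p
  have h1 : p ^ j ∣ M := (Nat.ordProj_dvd _ _).trans hdvd
  have h2 : p ^ j ≤ M := Nat.le_of_dvd (Nat.pos_of_ne_zero hM) h1
  have h3 : j < p ^ j := Nat.lt_pow_self hp.one_lt
  omega

end RatDen

noncomputable def fmod (N : ℕ) (q : ℚ) : ZMod N := (q.num : ZMod N) * ((q.den : ZMod N))⁻¹

lemma fmod_eq {N : ℕ} {q r : ℚ} (hq : IsUnit ((q.den : ZMod N))) (hr : IsUnit ((r.den : ZMod N)))
    (h : fmod N q = fmod N r) : (N : ℤ) ∣ (r.num * q.den - q.num * r.den) := by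
  rw [← ZMod.intCast_zmod_eq_zero_iff_dvd]
  push_cast
  unfold fmod at h
  have h2 : (q.num : ZMod N) * ((q.den : ZMod N))⁻¹ * ((q.den : ZMod N) * (r.den : ZMod N))
      = (r.num : ZMod N) * ((r.den : ZMod N))⁻¹ * ((q.den : ZMod N) * (r.den : ZMod N)) := by
    rw [h]
  have e1 : (q.num : ZMod N) * ((q.den : ZMod N))⁻¹ * ((q.den : ZMod N) * (r.den : ZMod N))
      = (q.num : ZMod N) * (r.den : ZMod N) * (((q.den : ZMod N))⁻¹ * (q.den : ZMod N)) := by ring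
  have e2 : (r.num : ZMod N) * ((r.den : ZMod N))⁻¹ * ((q.den : ZMod N) * (r.den : ZMod N))
      = (r.num : ZMod N) * (q.den : ZMod N) * (((r.den : ZMod N))⁻¹ * (r.den : ZMod N)) := by ring
  rw [e1, e2, ZMod.inv_mul_of_unit _ hq, ZMod.inv_mul_of_unit _ hr, mul_one, mul_one] at h2
  rw [sub_eq_zero, ← h2]

lemma gl_inv_coe (M : GL (Fin 2) ℚ) (h1 : (M : Matrix (Fin 2) (Fin 2) ℚ) 0 0 = 1)
    (h0 : (M : Matrix (Fin 2) (Fin 2) ℚ) 1 0 = 0) :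
    (M : Matrix (Fin 2) (Fin 2) ℚ) 1 1 ≠ 0 ∧
    ((M⁻¹ : GL (Fin 2) ℚ) : Matrix (Fin 2) (Fin 2) ℚ)
      = !![1, -((M : Matrix (Fin 2) (Fin 2) ℚ) 0 1) / ((M : Matrix (Fin 2) (Fin 2) ℚ) 1 1);
           0, ((M : Matrix (Fin 2) (Fin 2) ℚ) 1 1)⁻¹] := by
  have hu : IsUnit ((M : Matrix (Fin 2) (Fin 2) ℚ)) := ⟨M, rfl⟩
  have hdet : IsUnit ((M : Matrix (Fin 2) (Fin 2) ℚ).det) :=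
    (Matrix.isUnit_iff_isUnit_det _).mp hu
  have hdet2 : (M : Matrix (Fin 2) (Fin 2) ℚ).det = (M : Matrix (Fin 2) (Fin 2) ℚ) 1 1 := by
    rw [Matrix.det_fin_two, h1, h0]; ring
  have hne : (M : Matrix (Fin 2) (Fin 2) ℚ) 1 1 ≠ 0 := by
    rw [← hdet2]; exact hdet.ne_zero
  refine ⟨hne, ?_⟩
  have hcoe : ((M⁻¹ : GL (Fin 2) ℚ) : Matrix (Fin 2) (Fin 2) ℚ) = (M : Matrix (Fin 2) (Fin 2) ℚ)⁻¹ :=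
    (Matrix.coe_units_inv M)
  rw [hcoe]
  apply Matrix.inv_eq_right_inv
  rw [Matrix.eta_fin_two (M : Matrix (Fin 2) (Fin 2) ℚ), h1, h0]
  ext i j
  fin_cases i <;> fin_cases j <;>
    simp [Matrix.mul_apply, Fin.sum_univ_two] <;>
    field_simp <;> ring

lemma gl_mul_apply (A B : GL (Fin 2) ℚ) (i j : Fin 2) :
    ((A * B : GL (Fin 2) ℚ) : Matrix (Fin 2) (Fin 2) ℚ) i j =
    (A : Matrix (Fin 2) (Fin 2) ℚ) i 0 * (B : Matrix (Fin 2) (Fin 2) ℚ) 0 j +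
    (A : Matrix (Fin 2) (Fin 2) ℚ) i 1 * (B : Matrix (Fin 2) (Fin 2) ℚ) 1 j := by
  show ((A : Matrix (Fin 2) (Fin 2) ℚ) * (B : Matrix (Fin 2) (Fin 2) ℚ)) i j = _
  rw [Matrix.mul_apply, Fin.sum_univ_two]

section Grp
variable (P : Set ℕ) (hP : ∀ p ∈ P, p.Prime)
include hP

lemma apAdd {q r : ℚ} (hq : q ∈ ringAP P) (hr : r ∈ ringAP P) : q + r ∈ ringAP P :=
  fun p hp => den_add' (hP p hp) (hq p hp) (hr p hp)
lemma apMul {q r : ℚ} (hq : q ∈ ringAP P) (hr : r ∈ ringAP P) : q * r ∈ ringAP P :=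
  fun p hp => den_mul' (hP p hp) (hq p hp) (hr p hp)
omit hP in
lemma apNeg {q : ℚ} (hq : q ∈ ringAP P) : -q ∈ ringAP P :=
  fun p hp => den_neg' (hq p hp)
lemma apOne : (1 : ℚ) ∈ ringAP P := fun p hp => den_one' (hP p hp)

omit hP in
def GrpG : Subgroup (GL (Fin 2) ℚ) where
  carrier := {M | (M : Matrix (Fin 2) (Fin 2) ℚ) 0 0 = 1 ∧ (M : Matrix (Fin 2) (Fin 2) ℚ) 1 0 = 0}
  one_mem' := by constructor <;> simp [Units.val_one]
  mul_mem' := by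
    rintro A B ⟨hA1, hA0⟩ ⟨hB1, hB0⟩
    constructor <;> rw [gl_mul_apply, hB0] <;> simp [hA1, hA0, hB1]
  inv_mem' := by
    rintro M ⟨h1, h0⟩
    have h := (gl_inv_coe M h1 h0).2
    constructor <;> rw [h] <;> simp

def GrpH : Subgroup (GL (Fin 2) ℚ) where
  carrier := {M | M ∈ GrpG ∧ (M : Matrix (Fin 2) (Fin 2) ℚ) 0 1 ∈ ringAP P ∧
      (M : Matrix (Fin 2) (Fin 2) ℚ) 1 1 ≠ 0 ∧
      (M : Matrix (Fin 2) (Fin 2) ℚ) 1 1 ∈ ringAP P ∧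
      ((M : Matrix (Fin 2) (Fin 2) ℚ) 1 1)⁻¹ ∈ ringAP P}
  one_mem' := by
    refine ⟨GrpG.one_mem, ?_, ?_, ?_, ?_⟩ <;> simp [Units.val_one]
    · intro p hp; simpa using den_one' (hP p hp)
    · exact apOne P hP
    · exact apOne P hP
  mul_mem' := by
    rintro A B ⟨⟨hA1, hA0⟩, hA01, hA11, hA11m, hA11i⟩ ⟨⟨hB1, hB0⟩, hB01, hB11, hB11m, hB11i⟩
    refine ⟨GrpG.mul_mem ⟨hA1, hA0⟩ ⟨hB1, hB0⟩, ?_, ?_, ?_, ?_⟩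
    · rw [gl_mul_apply, hA1, one_mul]
      exact apAdd P hP hB01 (apMul P hP hA01 hB11m)
    · rw [gl_mul_apply, hA0, zero_mul, zero_add]
      exact mul_ne_zero hA11 hB11
    · rw [gl_mul_apply, hA0, zero_mul, zero_add]
      exact apMul P hP hA11m hB11m
    · rw [gl_mul_apply, hA0, zero_mul, zero_add, mul_inv]
      exact apMul P hP hA11i hB11i
  inv_mem' := by
    rintro M ⟨⟨h1, h0⟩, h01, h11, h11m, h11i⟩
    have h := (gl_inv_coe M h1 h0).2
    refine ⟨GrpG.inv_mem ⟨h1, h0⟩, ?_, ?_, ?_, ?_⟩ <;> rw [h] <;> simp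
    · rw [neg_div, div_eq_mul_inv]
      exact apNeg P (apMul P hP h01 h11i)
    · exact h11
    · exact h11i
    · exact h11m

end Grp

lemma den_sub' {p : ℕ} (hp : p.Prime) {q r : ℚ} (hq : ¬ p ∣ q.den) (hr : ¬ p ∣ r.den) :
    ¬ p ∣ (q - r).den := by
  rw [sub_eq_add_neg]; exact den_add' hp hq (den_neg' hr)

noncomputable def modN (P : Set ℕ) (a b : ℚ) : ℕ := by
  classical
  exact ∏ p ∈ (a.num.natAbs * a.den * b.den).primeFactors.filter (fun p => p ∈ P),
    p ^ (a.num.natAbs * a.den * b.den)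

lemma modN_ne_zero (P : Set ℕ) (a b : ℚ) (ha : a ≠ 0) : modN P a b ≠ 0 := by
  classical
  unfold modN
  rw [Finset.prod_ne_zero_iff]
  intro p hpS
  have hp : p.Prime := Nat.prime_of_mem_primeFactors (Finset.mem_filter.mp hpS).1
  exact pow_ne_zero _ hp.ne_zero

lemma modN_coprime (P : Set ℕ) (hP : ∀ p ∈ P, p.Prime) (a b : ℚ) {q : ℚ}
    (hq : q ∈ ringAP P) : (q.den).Coprime (modN P a b) := by
  classical
  unfold modN
  apply Nat.Coprime.prod_right
  intro p hpS
  obtain ⟨hpf, hpP⟩ := Finset.mem_filter.mp hpS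
  have hp : p.Prime := Nat.prime_of_mem_primeFactors hpf
  exact (Nat.Coprime.pow_right _ ((hp.coprime_iff_not_dvd.mpr (hq p hpP)).symm))

lemma modN_pow_dvd (P : Set ℕ) (a b : ℚ) {p : ℕ} (hp : p.Prime) (hpP : p ∈ P)
    (ha : a ≠ 0) (hpM : p ∣ (a.num.natAbs * a.den * b.den)) :
    (p : ℤ) ^ (a.num.natAbs * a.den * b.den) ∣ (modN P a b : ℤ) := by
  classical
  have hM0 : a.num.natAbs * a.den * b.den ≠ 0 := by
    have h1 : a.num.natAbs ≠ 0 := Int.natAbs_ne_zero.mpr (Rat.num_ne_zero.mpr ha)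
    positivity
  have hpS : p ∈ (a.num.natAbs * a.den * b.den).primeFactors.filter (fun p => p ∈ P) :=
    Finset.mem_filter.mpr ⟨Nat.mem_primeFactors.mpr ⟨hp, hpM, hM0⟩, hpP⟩
  have : p ^ (a.num.natAbs * a.den * b.den) ∣ modN P a b := by
    unfold modN
    exact Finset.dvd_prod_of_mem _ hpS
  exact_mod_cast Int.natCast_dvd_natCast.mpr this

lemma analytic (P : Set ℕ) (hP : ∀ p ∈ P, p.Prime) {a b η1 ξ1 η2 ξ2 ηg ξg : ℚ}
    (ha : a ≠ 0)
    (hη1 : η1 ∈ ringAP P) (hξ1 : ξ1 ∈ ringAP P) (hξ1i : ξ1⁻¹ ∈ ringAP P) (hξ1ne : ξ1 ≠ 0)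
    (hη2 : η2 ∈ ringAP P) (hξ2 : ξ2 ∈ ringAP P)
    (hηg : ηg ∈ ringAP P) (hξg : ξg ∈ ringAP P)
    (e1 : η2 = ηg + η1 * ξg) (e2 : ξ2 = ξ1 * ξg)
    (hdη : (modN P a b : ℤ) ∣ (η2.num * η1.den - η1.num * η2.den))
    (hdξ : (modN P a b : ℤ) ∣ (ξ2.num * ξ1.den - ξ1.num * ξ2.den)) :
    (ηg + b * ξg - b) * a⁻¹ ∈ ringAP P := by
  intro p hpP
  have hp : p.Prime := hP p hpP
  set Mn : ℕ := a.num.natAbs * a.den * b.den with hMn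
  have hanum : a.num ≠ 0 := Rat.num_ne_zero.mpr ha
  have hnA0 : a.num.natAbs ≠ 0 := Int.natAbs_ne_zero.mpr hanum
  have hM0 : Mn ≠ 0 := by positivity
  have hbden0 : (b.den : ℤ) ≠ 0 := by exact_mod_cast b.den_ne_zero
  have haden0 : (a.den : ℤ) ≠ 0 := by exact_mod_cast a.den_ne_zero
  by_cases hpM : p ∣ Mn
  · -- p divides Mn : use the congruences
    have hpow := modN_pow_dvd P a b hp hpP ha hpM
    obtain ⟨s, hs, hηdiff⟩ := extract_pow hp (hη1 p hpP) (hη2 p hpP) (dvd_trans hpow hdη)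
    obtain ⟨t, ht, hξdiff⟩ := extract_pow hp (hξ1 p hpP) (hξ2 p hpP) (dvd_trans hpow hdξ)
    set u : ℚ := (s * ξ1 - η1 * t) * ξ1⁻¹ with hu_def
    set v : ℚ := t * ξ1⁻¹ with hv_def
    have hu : ¬ p ∣ u.den :=
      den_mul' hp (den_sub' hp (den_mul' hp hs (hξ1 p hpP)) (den_mul' hp (hη1 p hpP) ht))
        (hξ1i p hpP)
    have hv : ¬ p ∣ v.den := den_mul' hp ht (hξ1i p hpP)
    have key1 : ηg * ξ1 = (p : ℚ) ^ Mn * (s * ξ1 - η1 * t) := by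
      linear_combination (-ξ1) * e1 + η1 * e2 + ξ1 * hηdiff - η1 * hξdiff
    have hηg_p : ηg = (p : ℚ) ^ Mn * u := by
      rw [hu_def]
      rw [show (p : ℚ) ^ Mn * ((s * ξ1 - η1 * t) * ξ1⁻¹) = ((p : ℚ) ^ Mn * (s * ξ1 - η1 * t)) * ξ1⁻¹ by ring, ← key1]
      field_simp
    have key2 : (ξg - 1) * ξ1 = (p : ℚ) ^ Mn * t := by
      linear_combination hξdiff - e2
    have hξg_p : ξg - 1 = (p : ℚ) ^ Mn * v := by
      rw [hv_def]
      rw [show (p : ℚ) ^ Mn * (t * ξ1⁻¹) = ((p : ℚ) ^ Mn * t) * ξ1⁻¹ by ring, ← key2]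
      field_simp
    -- key rewrite
    have hn1 : (a.num.natAbs).factorization p ≤ Mn :=
      fact_le_of_dvd hp hnA0 ⟨a.den * b.den, by rw [hMn]; ring⟩ hM0
    have hn2 : (((b.den : ℤ) * a.num).natAbs).factorization p ≤ Mn := by
      apply fact_le_of_dvd hp
      · rw [Int.natAbs_mul, Int.natAbs_natCast]
        positivity
      · rw [Int.natAbs_mul, Int.natAbs_natCast]
        exact ⟨a.den, by rw [hMn]; ring⟩
      · exact hM0
    have T1 : ¬ p ∣ ((((a.den : ℤ)) : ℚ) * (p : ℚ) ^ Mn / (((a.num : ℤ)) : ℚ)).den :=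
      den_pow_div hp _ hanum hn1
    have T2 : ¬ p ∣ (((b.num * (a.den : ℤ) : ℤ) : ℚ) * (p : ℚ) ^ Mn / (((b.den : ℤ) * a.num : ℤ) : ℚ)).den :=
      den_pow_div hp _ (mul_ne_zero hbden0 hanum) hn2
    push_cast at T1 T2
    have hadQ : (a.den : ℚ) ≠ 0 := by exact_mod_cast a.den_ne_zero
    have hbdQ : (b.den : ℚ) ≠ 0 := by exact_mod_cast b.den_ne_zero
    have hANQ : (a.num : ℚ) ≠ 0 := by exact_mod_cast hanum
    have hae : (a.num : ℚ) = a * a.den := (div_eq_iff hadQ).mp (Rat.num_div_den a)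
    have hbe : (b.num : ℚ) = b * b.den := (div_eq_iff hbdQ).mp (Rat.num_div_den b)
    have hξg' : ξg = 1 + (p : ℚ) ^ Mn * v := by linarith [hξg_p]
    have r1 : (a.den : ℚ) * (p : ℚ) ^ Mn / (a.num : ℚ) = (p : ℚ) ^ Mn * a⁻¹ := by
      field_simp
      linear_combination (-((p : ℚ) ^ Mn)) * hae
    have r2 : (b.num : ℚ) * (a.den : ℚ) * (p : ℚ) ^ Mn / ((b.den : ℚ) * (a.num : ℚ))
        = b * ((p : ℚ) ^ Mn * a⁻¹) := by
      field_simp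
      linear_combination ((a.den : ℚ) * (p : ℚ) ^ Mn * a) * hbe - ((p : ℚ) ^ Mn * b * (b.den : ℚ)) * hae
    have hwa : (ηg + b * ξg - b) * a⁻¹ =
        u * ((a.den : ℚ) * (p : ℚ) ^ Mn / (a.num : ℚ)) +
        v * ((b.num : ℚ) * (a.den : ℚ) * (p : ℚ) ^ Mn / ((b.den : ℚ) * (a.num : ℚ))) := by
      rw [r1, r2, hηg_p, hξg']
      ring
    rw [hwa]
    exact den_add' hp (den_mul' hp hu T1) (den_mul' hp hv T2)
  · -- p does not divide Mn
    have hpa : ¬ (p : ℤ) ∣ a.num := by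
      intro h
      have h2 : (p : ℤ).natAbs ∣ a.num.natAbs := Int.natAbs_dvd_natAbs.mpr h
      rw [Int.natAbs_natCast] at h2
      exact hpM (Dvd.dvd.mul_right (Dvd.dvd.mul_right h2 _) _)
    have hpbd : ¬ p ∣ b.den := fun h => hpM (Dvd.dvd.mul_left h _)
    have hainv : ¬ p ∣ (a⁻¹).den := by
      have hANQ : (a.num : ℚ) ≠ 0 := by exact_mod_cast hanum
      have hadQ : (a.den : ℚ) ≠ 0 := by exact_mod_cast a.den_ne_zero
      have hae : (a.num : ℚ) = a * a.den := (div_eq_iff hadQ).mp (Rat.num_div_den a)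
      have hinv : a⁻¹ = (((a.den : ℤ)) : ℚ) / (((a.num : ℤ)) : ℚ) := by
        push_cast
        rw [eq_div_iff hANQ, hae]
        field_simp
      rw [hinv]
      exact den_div_int hpa
    exact den_mul' hp
      (den_sub' hp (den_add' hp (hηg p hpP) (den_mul' hp hpbd (hξg p hpP))) hpbd) hainv

/-- Let `G` be the group of rational matrices `[[1, b], [0, a]]` (`a ∈ ℚ*`, `b ∈ ℚ`)
and, for a set `P` of primes, let `H_P ≤ G` consist of the matrices `[[1, η], [0, ξ]]`
with `η ∈ A_P` and `ξ ∈ A_P*`.  Then `(G, H_P)` is a Hecke pair: for every `x ∈ G`,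
the index `[H_P : H_P ∩ x⁻¹ H_P x]` is finite. -/
theorem stmt18 (P : Set ℕ) (hP : ∀ p ∈ P, p.Prime) :
    ∃ G' HP : Subgroup (GL (Fin 2) ℚ),
      (∀ M : GL (Fin 2) ℚ, M ∈ G' ↔
        (M : Matrix (Fin 2) (Fin 2) ℚ) 0 0 = 1 ∧
        (M : Matrix (Fin 2) (Fin 2) ℚ) 1 0 = 0) ∧
      (∀ M : GL (Fin 2) ℚ, M ∈ HP ↔
        M ∈ G' ∧ (M : Matrix (Fin 2) (Fin 2) ℚ) 0 1 ∈ ringAP P ∧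
          (M : Matrix (Fin 2) (Fin 2) ℚ) 1 1 ≠ 0 ∧
          (M : Matrix (Fin 2) (Fin 2) ℚ) 1 1 ∈ ringAP P ∧
          ((M : Matrix (Fin 2) (Fin 2) ℚ) 1 1)⁻¹ ∈ ringAP P) ∧
      ∀ x ∈ G', (HP ⊓ HP.comap (MulAut.conj x).toMonoidHom).relIndex HP ≠ 0 := by
  classical
  refine ⟨GrpG, GrpH P hP, fun M => Iff.rfl, fun M => Iff.rfl, ?_⟩
  intro x hx
  obtain ⟨hx1, hx0⟩ := hx
  obtain ⟨ha, hxinv⟩ := gl_inv_coe x hx1 hx0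
  set K : Subgroup (GL (Fin 2) ℚ) :=
    GrpH P hP ⊓ (GrpH P hP).comap (MulAut.conj x).toMonoidHom with hK
  set N : ℕ := modN P ((x : Matrix (Fin 2) (Fin 2) ℚ) 1 1) ((x : Matrix (Fin 2) (Fin 2) ℚ) 0 1)
    with hNdef
  have hN0 : N ≠ 0 := modN_ne_zero _ _ _ ha
  haveI : NeZero N := ⟨hN0⟩
  have hUnit : ∀ q : ℚ, q ∈ ringAP P → IsUnit ((q.den : ZMod N)) := fun q hq =>
    (ZMod.isUnit_iff_coprime q.den N).mpr (modN_coprime P hP _ _ hq)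
  set Φ : (GrpH P hP) → ZMod N × ZMod N := fun y =>
    (fmod N (((y : GL (Fin 2) ℚ) : Matrix (Fin 2) (Fin 2) ℚ) 0 1),
     fmod N (((y : GL (Fin 2) ℚ) : Matrix (Fin 2) (Fin 2) ℚ) 1 1)) with hΦ
  have key : ∀ y1 y2 : (GrpH P hP), Φ y1 = Φ y2 →
      y1⁻¹ * y2 ∈ K.subgroupOf (GrpH P hP) := by
    intro y1 y2 hF
    obtain ⟨⟨h1a, h1b⟩, hη1, hξ1ne, hξ1, hξ1i⟩ := y1.2
    obtain ⟨⟨h2a, h2b⟩, hη2, hξ2ne, hξ2, hξ2i⟩ := y2.2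
    have hgH : ((y1⁻¹ * y2 : GrpH P hP) : GL (Fin 2) ℚ) ∈ GrpH P hP := (y1⁻¹ * y2).2
    obtain ⟨⟨hga, hgb⟩, hηg, hξgne, hξg, hξgi⟩ := hgH
    rw [Subgroup.mem_subgroupOf]
    rw [hK]
    refine Subgroup.mem_inf.mpr ⟨(y1⁻¹ * y2).2, Subgroup.mem_comap.mpr ?_⟩
    have hconj : (MulAut.conj x).toMonoidHom ((y1⁻¹ * y2 : GrpH P hP) : GL (Fin 2) ℚ)
        = x * ((y1⁻¹ * y2 : GrpH P hP) : GL (Fin 2) ℚ) * x⁻¹ := rfl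
    rw [hconj]
    -- product equation
    have hprod : (y1 : GL (Fin 2) ℚ) * ((y1⁻¹ * y2 : GrpH P hP) : GL (Fin 2) ℚ)
        = (y2 : GL (Fin 2) ℚ) := by
      rw [show ((y1⁻¹ * y2 : GrpH P hP) : GL (Fin 2) ℚ)
        = ((y1 : GL (Fin 2) ℚ))⁻¹ * (y2 : GL (Fin 2) ℚ) from rfl]
      group
    have e1 : ((y2 : GL (Fin 2) ℚ) : Matrix (Fin 2) (Fin 2) ℚ) 0 1 =
        (((y1⁻¹ * y2 : GrpH P hP) : GL (Fin 2) ℚ) : Matrix (Fin 2) (Fin 2) ℚ) 0 1 +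
        ((y1 : GL (Fin 2) ℚ) : Matrix (Fin 2) (Fin 2) ℚ) 0 1 *
        (((y1⁻¹ * y2 : GrpH P hP) : GL (Fin 2) ℚ) : Matrix (Fin 2) (Fin 2) ℚ) 1 1 := by
      have h := gl_mul_apply (y1 : GL (Fin 2) ℚ) ((y1⁻¹ * y2 : GrpH P hP) : GL (Fin 2) ℚ) 0 1
      rw [hprod, h1a, one_mul] at h
      exact h
    have e2 : ((y2 : GL (Fin 2) ℚ) : Matrix (Fin 2) (Fin 2) ℚ) 1 1 =
        ((y1 : GL (Fin 2) ℚ) : Matrix (Fin 2) (Fin 2) ℚ) 1 1 *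
        (((y1⁻¹ * y2 : GrpH P hP) : GL (Fin 2) ℚ) : Matrix (Fin 2) (Fin 2) ℚ) 1 1 := by
      have h := gl_mul_apply (y1 : GL (Fin 2) ℚ) ((y1⁻¹ * y2 : GrpH P hP) : GL (Fin 2) ℚ) 1 1
      rw [hprod, h1b, zero_mul, zero_add] at h
      exact h
    -- the congruences
    have hFη : fmod N (((y1 : GL (Fin 2) ℚ) : Matrix (Fin 2) (Fin 2) ℚ) 0 1)
        = fmod N (((y2 : GL (Fin 2) ℚ) : Matrix (Fin 2) (Fin 2) ℚ) 0 1) := congrArg Prod.fst hF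
    have hFξ : fmod N (((y1 : GL (Fin 2) ℚ) : Matrix (Fin 2) (Fin 2) ℚ) 1 1)
        = fmod N (((y2 : GL (Fin 2) ℚ) : Matrix (Fin 2) (Fin 2) ℚ) 1 1) := congrArg Prod.snd hF
    have hdη := fmod_eq (hUnit _ hη1) (hUnit _ hη2) hFη
    have hdξ := fmod_eq (hUnit _ hξ1) (hUnit _ hξ2) hFξ
    -- entries of x⁻¹
    have hi00 : ((x⁻¹ : GL (Fin 2) ℚ) : Matrix (Fin 2) (Fin 2) ℚ) 0 0 = 1 := by rw [hxinv]; simp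
    have hi01 : ((x⁻¹ : GL (Fin 2) ℚ) : Matrix (Fin 2) (Fin 2) ℚ) 0 1 =
        -((x : Matrix (Fin 2) (Fin 2) ℚ) 0 1) / ((x : Matrix (Fin 2) (Fin 2) ℚ) 1 1) := by
      rw [hxinv]; simp
    have hi10 : ((x⁻¹ : GL (Fin 2) ℚ) : Matrix (Fin 2) (Fin 2) ℚ) 1 0 = 0 := by rw [hxinv]; simp
    have hi11 : ((x⁻¹ : GL (Fin 2) ℚ) : Matrix (Fin 2) (Fin 2) ℚ) 1 1 =
        ((x : Matrix (Fin 2) (Fin 2) ℚ) 1 1)⁻¹ := by rw [hxinv]; simp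
    -- entries of x * g
    have hD00 : ((x * ((y1⁻¹ * y2 : GrpH P hP) : GL (Fin 2) ℚ) : GL (Fin 2) ℚ) :
        Matrix (Fin 2) (Fin 2) ℚ) 0 0 = 1 := by
      rw [gl_mul_apply, hx1, hga, hgb, one_mul, mul_zero, add_zero]
    have hD01 : ((x * ((y1⁻¹ * y2 : GrpH P hP) : GL (Fin 2) ℚ) : GL (Fin 2) ℚ) :
        Matrix (Fin 2) (Fin 2) ℚ) 0 1 =
        (((y1⁻¹ * y2 : GrpH P hP) : GL (Fin 2) ℚ) : Matrix (Fin 2) (Fin 2) ℚ) 0 1 +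
        ((x : Matrix (Fin 2) (Fin 2) ℚ) 0 1) *
        (((y1⁻¹ * y2 : GrpH P hP) : GL (Fin 2) ℚ) : Matrix (Fin 2) (Fin 2) ℚ) 1 1 := by
      rw [gl_mul_apply, hx1, one_mul]
    have hD10 : ((x * ((y1⁻¹ * y2 : GrpH P hP) : GL (Fin 2) ℚ) : GL (Fin 2) ℚ) :
        Matrix (Fin 2) (Fin 2) ℚ) 1 0 = 0 := by
      rw [gl_mul_apply, hx0, hga, hgb, zero_mul, mul_zero, add_zero]
    have hD11 : ((x * ((y1⁻¹ * y2 : GrpH P hP) : GL (Fin 2) ℚ) : GL (Fin 2) ℚ) :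
        Matrix (Fin 2) (Fin 2) ℚ) 1 1 =
        ((x : Matrix (Fin 2) (Fin 2) ℚ) 1 1) *
        (((y1⁻¹ * y2 : GrpH P hP) : GL (Fin 2) ℚ) : Matrix (Fin 2) (Fin 2) ℚ) 1 1 := by
      rw [gl_mul_apply, hx0, zero_mul, zero_add]
    -- entries of C = (x*g) * x⁻¹
    have c00 : ((x * ((y1⁻¹ * y2 : GrpH P hP) : GL (Fin 2) ℚ) * x⁻¹ : GL (Fin 2) ℚ) :
        Matrix (Fin 2) (Fin 2) ℚ) 0 0 = 1 := by
      rw [gl_mul_apply, hD00, hD01, hi00, hi10, mul_zero, add_zero, one_mul]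
    have c10 : ((x * ((y1⁻¹ * y2 : GrpH P hP) : GL (Fin 2) ℚ) * x⁻¹ : GL (Fin 2) ℚ) :
        Matrix (Fin 2) (Fin 2) ℚ) 1 0 = 0 := by
      rw [gl_mul_apply, hD10, hD11, hi00, hi10, mul_zero, add_zero, zero_mul]
    have c11 : ((x * ((y1⁻¹ * y2 : GrpH P hP) : GL (Fin 2) ℚ) * x⁻¹ : GL (Fin 2) ℚ) :
        Matrix (Fin 2) (Fin 2) ℚ) 1 1 =
        (((y1⁻¹ * y2 : GrpH P hP) : GL (Fin 2) ℚ) : Matrix (Fin 2) (Fin 2) ℚ) 1 1 := by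
      rw [gl_mul_apply, hD10, hD11, hi01, hi11, zero_mul, zero_add,
        mul_comm ((x : Matrix (Fin 2) (Fin 2) ℚ) 1 1), mul_assoc, mul_inv_cancel₀ ha, mul_one]
    have c01 : ((x * ((y1⁻¹ * y2 : GrpH P hP) : GL (Fin 2) ℚ) * x⁻¹ : GL (Fin 2) ℚ) :
        Matrix (Fin 2) (Fin 2) ℚ) 0 1 =
        ((((y1⁻¹ * y2 : GrpH P hP) : GL (Fin 2) ℚ) : Matrix (Fin 2) (Fin 2) ℚ) 0 1 +
         ((x : Matrix (Fin 2) (Fin 2) ℚ) 0 1) *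
         (((y1⁻¹ * y2 : GrpH P hP) : GL (Fin 2) ℚ) : Matrix (Fin 2) (Fin 2) ℚ) 1 1 -
         ((x : Matrix (Fin 2) (Fin 2) ℚ) 0 1)) *
        ((x : Matrix (Fin 2) (Fin 2) ℚ) 1 1)⁻¹ := by
      rw [gl_mul_apply, hD00, hD01, hi01, hi11, one_mul]
      field_simp
      ring
    refine ⟨⟨c00, c10⟩, ?_, ?_, ?_, ?_⟩
    · rw [c01]
      exact analytic P hP ha hη1 hξ1 hξ1i hξ1ne hη2 hξ2 hηg hξg e1 e2 hdη hdξ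
    · rw [c11]; exact hξgne
    · rw [c11]; exact hξg
    · rw [c11]; exact hξgi
  -- finiteness of the quotient
  have hfin : Finite ((GrpH P hP) ⧸ (K.subgroupOf (GrpH P hP))) := by
    apply Finite.of_surjective (f := fun v : ZMod N × ZMod N =>
      if h : ∃ y : (GrpH P hP), Φ y = v then
        (QuotientGroup.mk h.choose : (GrpH P hP) ⧸ (K.subgroupOf (GrpH P hP)))
      else QuotientGroup.mk 1)
    intro q
    induction q using QuotientGroup.induction_on with
    | H y =>
      refine ⟨Φ y, ?_⟩
      have hex : ∃ y' : (GrpH P hP), Φ y' = Φ y := ⟨y, rfl⟩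
      dsimp only
      rw [dif_pos hex]
      exact QuotientGroup.eq.mpr (key _ _ hex.choose_spec)
  show (K.subgroupOf (GrpH P hP)).index ≠ 0
  exact Subgroup.index_ne_zero_of_finite
end

section
/- Let G be the group of matrices [[1,b],[0,a]] with a ∈ Q*, b ∈ Q, and let H be the subgroup of matrices [[1,η],[0,ξ]] with η ∈ Z_(2) (rationals with odd denominator) and ξ a unit of Z_(2) (odd numerator and denominator). Then H is protonormal in G: for every x ∈ G, (x⁻¹Hx)H = H(x⁻¹Hx); but H is not subnormal in G: there exist x ∈ G and h, k ∈ H with (xhx⁻¹)k(xhx⁻¹)⁻¹ ∉ H. -/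
open scoped Pointwise
open Matrix

namespace S19

def Z2 (q : ℚ) : Prop := ∃ n d : ℤ, Odd d ∧ q = (n : ℚ) / d

def U (q : ℚ) : Prop := ∃ n d : ℤ, Odd n ∧ Odd d ∧ q = (n : ℚ) / d

lemma odd_int_of_dvd {a b : ℤ} (h : a ∣ b) (hb : Odd b) : Odd a := by
  obtain ⟨c, rfl⟩ := h
  exact (Int.odd_mul.mp hb).1

lemma odd_ne_zero {d : ℤ} (hd : Odd d) : d ≠ 0 := by
  rintro rfl; simp [Int.odd_iff] at hd

lemma Z2.den {q : ℚ} (h : Z2 q) : Odd q.den := by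
  obtain ⟨n, d, hd, rfl⟩ := h
  rw [← Rat.divInt_eq_div]
  exact (Int.odd_coe_nat _).mp (odd_int_of_dvd (Rat.den_dvd n d) hd)

lemma U.num_den {q : ℚ} (h : U q) : Odd q.num ∧ Odd q.den := by
  obtain ⟨n, d, hn, hd, rfl⟩ := h
  rw [← Rat.divInt_eq_div]
  exact ⟨odd_int_of_dvd (Rat.num_dvd n (odd_ne_zero hd)) hn,
    (Int.odd_coe_nat _).mp (odd_int_of_dvd (Rat.den_dvd n d) hd)⟩

lemma z2_of_den {q : ℚ} (h : Odd q.den) : Z2 q :=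
  ⟨q.num, q.den, (Int.odd_coe_nat _).mpr h, by rw [Int.cast_natCast, Rat.num_div_den]⟩

lemma u_of_num_den {q : ℚ} (hn : Odd q.num) (hd : Odd q.den) : U q :=
  ⟨q.num, q.den, hn, (Int.odd_coe_nat _).mpr hd, by rw [Int.cast_natCast, Rat.num_div_den]⟩

lemma U.z2 {q : ℚ} (h : U q) : Z2 q := by obtain ⟨n, d, _, hd, hq⟩ := h; exact ⟨n, d, hd, hq⟩

lemma U.ne_zero {q : ℚ} (h : U q) : q ≠ 0 := by
  obtain ⟨n, d, hn, hd, rfl⟩ := h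
  simp [div_eq_zero_iff, odd_ne_zero hn, odd_ne_zero hd]

lemma Z2.add {a b : ℚ} (ha : Z2 a) (hb : Z2 b) : Z2 (a + b) := by
  obtain ⟨n, d, hd, rfl⟩ := ha; obtain ⟨m, e, he, rfl⟩ := hb
  have hd0 := odd_ne_zero hd; have he0 := odd_ne_zero he
  exact ⟨n * e + m * d, d * e, hd.mul he, by push_cast; field_simp⟩

lemma Z2.mul {a b : ℚ} (ha : Z2 a) (hb : Z2 b) : Z2 (a * b) := by
  obtain ⟨n, d, hd, rfl⟩ := ha; obtain ⟨m, e, he, rfl⟩ := hb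
  have hd0 := odd_ne_zero hd; have he0 := odd_ne_zero he
  exact ⟨n * m, d * e, hd.mul he, by push_cast; field_simp⟩

lemma Z2.neg {a : ℚ} (ha : Z2 a) : Z2 (-a) := by
  obtain ⟨n, d, hd, rfl⟩ := ha
  exact ⟨-n, d, hd, by push_cast; ring⟩

lemma U.mul {a b : ℚ} (ha : U a) (hb : U b) : U (a * b) := by
  obtain ⟨n, d, hn, hd, rfl⟩ := ha; obtain ⟨m, e, hm, he, rfl⟩ := hb
  have hd0 := odd_ne_zero hd; have he0 := odd_ne_zero he
  exact ⟨n * m, d * e, hn.mul hm, hd.mul he, by push_cast; field_simp⟩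

lemma U.inv {a : ℚ} (ha : U a) : U a⁻¹ := by
  obtain ⟨n, d, hn, hd, rfl⟩ := ha
  exact ⟨d, n, hd, hn, by
    rw [inv_div]⟩

lemma U.one : U (1 : ℚ) := ⟨1, 1, odd_one, odd_one, by norm_num⟩

/-- key parity fact: `1 - a + a * b` is again a unit when `a, b` are. -/
lemma U.combo {a b : ℚ} (ha : U a) (hb : U b) : U (1 - a + a * b) := by
  obtain ⟨n, d, hn, hd, rfl⟩ := ha; obtain ⟨m, e, hm, he, rfl⟩ := hb
  refine ⟨d * e - n * e + n * m, d * e, ?_, hd.mul he, ?_⟩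
  · obtain ⟨i, hi⟩ := hn; obtain ⟨j, hj⟩ := hd; obtain ⟨k, hk⟩ := hm; obtain ⟨l, hl⟩ := he
    exact ⟨2*j*l + j + l - 2*i*l - i - l + 2*i*k + i + k, by subst hi hj hk hl; ring⟩
  · have := odd_ne_zero hd; have := odd_ne_zero he
    push_cast; field_simp
def mk (b a : ℚ) (ha : a ≠ 0) : GL (Fin 2) ℚ :=
  ⟨!![1, b; 0, a], !![1, -b / a; 0, a⁻¹],
    by ext i j; fin_cases i <;> fin_cases j <;>
      simp [Matrix.mul_apply, Fin.sum_univ_two] <;> field_simp <;> ring,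
    by ext i j; fin_cases i <;> fin_cases j <;>
      simp [Matrix.mul_apply, Fin.sum_univ_two] <;> field_simp <;> ring⟩

@[simp] lemma mk_val (b a : ℚ) (ha : a ≠ 0) : ((mk b a ha : GL (Fin 2) ℚ) : Matrix (Fin 2) (Fin 2) ℚ) = !![1, b; 0, a] := rfl

lemma mk_eq_mk {b a b' a' : ℚ} {ha : a ≠ 0} {ha' : a' ≠ 0} :
    mk b a ha = mk b' a' ha' ↔ b = b' ∧ a = a' := by
  constructor
  · intro h
    have hv : (!![1, b; 0, a] : Matrix (Fin 2) (Fin 2) ℚ) = !![1, b'; 0, a'] :=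
      congrArg Units.val h
    constructor
    · have := congrArg (fun m : Matrix (Fin 2) (Fin 2) ℚ => m 0 1) hv; simpa using this
    · have := congrArg (fun m : Matrix (Fin 2) (Fin 2) ℚ => m 1 1) hv; simpa using this
  · rintro ⟨rfl, rfl⟩; rfl

lemma mk_mul (b a b' a' : ℚ) (ha : a ≠ 0) (ha' : a' ≠ 0) :
    mk b a ha * mk b' a' ha' = mk (b' + b * a') (a * a') (mul_ne_zero ha ha') := by
  apply Units.ext
  show (!![1, b; 0, a] : Matrix (Fin 2) (Fin 2) ℚ) * !![1, b'; 0, a'] = _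
  ext i j; fin_cases i <;> fin_cases j <;> simp [Matrix.mul_apply, Fin.sum_univ_two]

lemma mk_inv (b a : ℚ) (ha : a ≠ 0) :
    (mk b a ha)⁻¹ = mk (-b / a) a⁻¹ (inv_ne_zero ha) := by
  apply Units.ext; rfl

lemma mk_mem_G_entries (b a : ℚ) (ha : a ≠ 0) :
    ((mk b a ha : GL (Fin 2) ℚ) : Matrix (Fin 2) (Fin 2) ℚ) 0 0 = 1 ∧
    ((mk b a ha : GL (Fin 2) ℚ) : Matrix (Fin 2) (Fin 2) ℚ) 1 0 = 0 ∧
    ((mk b a ha : GL (Fin 2) ℚ) : Matrix (Fin 2) (Fin 2) ℚ) 0 1 = b ∧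
    ((mk b a ha : GL (Fin 2) ℚ) : Matrix (Fin 2) (Fin 2) ℚ) 1 1 = a := by
  simp

lemma d_ne_zero {M : GL (Fin 2) ℚ} (h0 : (M : Matrix (Fin 2) (Fin 2) ℚ) 1 0 = 0) :
    (M : Matrix (Fin 2) (Fin 2) ℚ) 1 1 ≠ 0 := by
  have h := congrFun (congrFun M.val_inv 1) 1
  simp [Matrix.mul_apply, Fin.sum_univ_two, h0] at h
  intro hz; rw [hz] at h; simp at h

lemma eq_mk {M : GL (Fin 2) ℚ} (h1 : (M : Matrix (Fin 2) (Fin 2) ℚ) 0 0 = 1)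
    (h0 : (M : Matrix (Fin 2) (Fin 2) ℚ) 1 0 = 0) :
    M = mk ((M : Matrix (Fin 2) (Fin 2) ℚ) 0 1) ((M : Matrix (Fin 2) (Fin 2) ℚ) 1 1)
      (d_ne_zero h0) := by
  apply Units.ext
  ext i j; fin_cases i <;> fin_cases j <;> simp [h1, h0]
def Gsub : Subgroup (GL (Fin 2) ℚ) where
  carrier := {M | (M : Matrix (Fin 2) (Fin 2) ℚ) 0 0 = 1 ∧
      (M : Matrix (Fin 2) (Fin 2) ℚ) 1 0 = 0}
  one_mem' := by simp
  mul_mem' := by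
    rintro A B ⟨hA1, hA0⟩ ⟨hB1, hB0⟩
    constructor <;>
      simp [Units.val_mul, Matrix.mul_apply, Fin.sum_univ_two, hA1, hA0, hB1, hB0]
  inv_mem' := by
    rintro A ⟨hA1, hA0⟩
    rw [eq_mk hA1 hA0, mk_inv]
    simp

lemma mk_mem_G (b a : ℚ) (ha : a ≠ 0) : mk b a ha ∈ Gsub := by
  constructor <;> simp

def Hsub : Subgroup (GL (Fin 2) ℚ) where
  carrier := {M | M ∈ Gsub ∧ Odd ((M : Matrix (Fin 2) (Fin 2) ℚ) 0 1).den ∧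
      Odd ((M : Matrix (Fin 2) (Fin 2) ℚ) 1 1).den ∧
      Odd ((M : Matrix (Fin 2) (Fin 2) ℚ) 1 1).num}
  one_mem' := by
    refine ⟨Gsub.one_mem, ?_⟩
    norm_num
  mul_mem' := by
    rintro A B ⟨hAG, hA1, hA2, hA3⟩ ⟨hBG, hB1, hB2, hB3⟩
    refine ⟨Gsub.mul_mem hAG hBG, ?_⟩
    have hA := eq_mk hAG.1 hAG.2
    have hB := eq_mk hBG.1 hBG.2
    rw [hA, hB, mk_mul]
    simp only [mk_val, Matrix.cons_val', Matrix.cons_val_zero, Matrix.cons_val_one,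
      Matrix.head_cons, Matrix.head_fin_const, Matrix.cons_val_fin_one, Matrix.empty_val']
    have hZ : Z2 ((B : Matrix (Fin 2) (Fin 2) ℚ) 0 1 +
        (A : Matrix (Fin 2) (Fin 2) ℚ) 0 1 * (B : Matrix (Fin 2) (Fin 2) ℚ) 1 1) :=
      (z2_of_den hB1).add ((z2_of_den hA1).mul (u_of_num_den hB3 hB2).z2)
    have hU : U ((A : Matrix (Fin 2) (Fin 2) ℚ) 1 1 * (B : Matrix (Fin 2) (Fin 2) ℚ) 1 1) :=
      (u_of_num_den hA3 hA2).mul (u_of_num_den hB3 hB2)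
    exact ⟨hZ.den, hU.num_den.2, hU.num_den.1⟩
  inv_mem' := by
    rintro A ⟨hAG, hA1, hA2, hA3⟩
    refine ⟨Gsub.inv_mem hAG, ?_⟩
    rw [eq_mk hAG.1 hAG.2, mk_inv]
    simp only [mk_val, Matrix.cons_val', Matrix.cons_val_zero, Matrix.cons_val_one,
      Matrix.head_cons, Matrix.head_fin_const, Matrix.cons_val_fin_one, Matrix.empty_val']
    have hUA : U ((A : Matrix (Fin 2) (Fin 2) ℚ) 1 1) := u_of_num_den hA3 hA2
    have hZ : Z2 (-(A : Matrix (Fin 2) (Fin 2) ℚ) 0 1 / (A : Matrix (Fin 2) (Fin 2) ℚ) 1 1) := by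
      rw [div_eq_mul_inv]
      exact ((z2_of_den hA1).neg).mul hUA.inv.z2
    exact ⟨hZ.den, hUA.inv.num_den.2, hUA.inv.num_den.1⟩

lemma mk_mem_H {b a : ℚ} (ha : a ≠ 0) (hb : Z2 b) (hA : U a) : mk b a ha ∈ Hsub := by
  refine ⟨mk_mem_G b a ha, ?_⟩
  simp only [mk_val, Matrix.cons_val', Matrix.cons_val_zero, Matrix.cons_val_one,
    Matrix.head_cons, Matrix.head_fin_const, Matrix.cons_val_fin_one, Matrix.empty_val']
  exact ⟨hb.den, hA.num_den.2, hA.num_den.1⟩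

lemma mem_H_elim {M : GL (Fin 2) ℚ} (h : M ∈ Hsub) :
    ∃ (b a : ℚ) (ha : a ≠ 0), M = mk b a ha ∧ Z2 b ∧ U a := by
  obtain ⟨hG, h1, h2, h3⟩ := h
  exact ⟨_, _, d_ne_zero hG.2, eq_mk hG.1 hG.2, z2_of_den h1, u_of_num_den h3 h2⟩

/-- conjugation formula -/
lemma conj_mk (c d η ξ : ℚ) (hd : d ≠ 0) (hξ : ξ ≠ 0) :
    (mk c d hd)⁻¹ * mk η ξ hξ * mk c d hd
      = mk (c * (1 - ξ) + η * d) ξ hξ := by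
  rw [mk_inv, mk_mul, mk_mul, mk_eq_mk]
  constructor
  · field_simp; ring
  · field_simp

lemma not_z2_half : ¬ Z2 (1 / 2 : ℚ) := by
  rintro ⟨n, d, hd, h⟩
  have hd0 := odd_ne_zero hd
  have h2 : (d : ℚ) = 2 * n := by field_simp at h; linarith
  have h3 : d = 2 * n := by exact_mod_cast h2
  rw [Int.odd_iff] at hd; omega
lemma U.three : U (3 : ℚ) := ⟨3, 1, ⟨1, by ring⟩, odd_one, by norm_num⟩

end S19

open S19 in
/-- Let `G` be the group of rational matrices `[[1, b], [0, a]]` (`a ∈ ℚ*`, `b ∈ ℚ`),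
and let `H ≤ G` consist of the matrices `[[1, η], [0, ξ]]` with `η ∈ ℤ_(2)` (odd
denominator) and `ξ` a unit of `ℤ_(2)` (odd numerator and denominator).  Then `H` is
protonormal in `G`: for every `x ∈ G`, `(x⁻¹Hx)H = H(x⁻¹Hx)` as subsets of `G`;
but `H` is not subnormal in `G`: there exist `x ∈ G` and `h, k ∈ H` with
`(xhx⁻¹)k(xhx⁻¹)⁻¹ ∉ H`. -/
theorem stmt19 :
    ∃ G' H' : Subgroup (GL (Fin 2) ℚ),
      (∀ M : GL (Fin 2) ℚ, M ∈ G' ↔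
        (M : Matrix (Fin 2) (Fin 2) ℚ) 0 0 = 1 ∧
        (M : Matrix (Fin 2) (Fin 2) ℚ) 1 0 = 0) ∧
      (∀ M : GL (Fin 2) ℚ, M ∈ H' ↔
        M ∈ G' ∧ Odd ((M : Matrix (Fin 2) (Fin 2) ℚ) 0 1).den ∧
          Odd ((M : Matrix (Fin 2) (Fin 2) ℚ) 1 1).den ∧
          Odd ((M : Matrix (Fin 2) (Fin 2) ℚ) 1 1).num) ∧
      H' ≤ G' ∧
      (∀ x ∈ G',
        ((fun g => x⁻¹ * g * x) '' (H' : Set (GL (Fin 2) ℚ))) * (H' : Set (GL (Fin 2) ℚ))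
          = (H' : Set (GL (Fin 2) ℚ)) *
              ((fun g => x⁻¹ * g * x) '' (H' : Set (GL (Fin 2) ℚ)))) ∧
      (∃ x ∈ G', ∃ h ∈ H', ∃ k ∈ H',
        (x * h * x⁻¹) * k * (x * h * x⁻¹)⁻¹ ∉ H') := by
  refine ⟨Gsub, Hsub, fun M => Iff.rfl, fun M => Iff.rfl, fun M hM => hM.1, ?_, ?_⟩
  · -- protonormal
    intro x hxG
    obtain ⟨c, d, hd, rfl⟩ : ∃ (c : ℚ) (d : ℚ) (hd : d ≠ 0), x = mk c d hd :=
      ⟨_, _, d_ne_zero hxG.2, eq_mk hxG.1 hxG.2⟩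
    ext z
    simp only [Set.mem_mul, Set.mem_image, SetLike.mem_coe]
    constructor
    · rintro ⟨u, ⟨h₁, h₁H, rfl⟩, v, hvH, rfl⟩
      obtain ⟨η, ξ, hξ0, rfl, hη, hξ⟩ := mem_H_elim h₁H
      obtain ⟨η', ξ', hξ'0, rfl, hη', hξ'⟩ := mem_H_elim hvH
      have hU4 : U (1 - ξ' + ξ' * ξ) := hξ'.combo hξ
      have h40 : (1 - ξ' + ξ' * ξ) ≠ 0 := hU4.ne_zero
      refine ⟨mk (η' / (1 - ξ' + ξ' * ξ)) (ξ * ξ' / (1 - ξ' + ξ' * ξ))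
          (div_ne_zero (mul_ne_zero hξ0 hξ'0) h40),
        mk_mem_H _ (by rw [div_eq_mul_inv]; exact hη'.mul hU4.inv.z2)
          (by rw [div_eq_mul_inv]; exact (hξ.mul hξ').mul hU4.inv),
        _, ⟨mk (η * ξ') (1 - ξ' + ξ' * ξ) h40,
          mk_mem_H _ (hη.mul hξ'.z2) hU4, rfl⟩, ?_⟩
      rw [conj_mk, conj_mk, mk_mul, mk_mul, mk_eq_mk]
      constructor
      · field_simp; ring
      · field_simp
        exact div_self (by rw [mul_comm]; exact h40)
    · rintro ⟨h₃, h₃H, v, ⟨h₄, h₄H, rfl⟩, rfl⟩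
      obtain ⟨η₃, ξ₃, hξ₃0, rfl, hη₃, hξ₃⟩ := mem_H_elim h₃H
      obtain ⟨η₄, ξ₄, hξ₄0, rfl, hη₄, hξ₄⟩ := mem_H_elim h₄H
      have hU2 : U (1 - ξ₄ + ξ₄ * ξ₃) := hξ₄.combo hξ₃
      have h20 : (1 - ξ₄ + ξ₄ * ξ₃) ≠ 0 := hU2.ne_zero
      refine ⟨_, ⟨mk (η₄ / (1 - ξ₄ + ξ₄ * ξ₃)) (ξ₃ * ξ₄ / (1 - ξ₄ + ξ₄ * ξ₃))
          (div_ne_zero (mul_ne_zero hξ₃0 hξ₄0) h20),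
        mk_mem_H _ (by rw [div_eq_mul_inv]; exact hη₄.mul hU2.inv.z2)
          (by rw [div_eq_mul_inv]; exact (hξ₃.mul hξ₄).mul hU2.inv), rfl⟩,
        mk (η₃ * ξ₄) (1 - ξ₄ + ξ₄ * ξ₃) h20,
        mk_mem_H _ (hη₃.mul hξ₄.z2) hU2, ?_⟩
      rw [conj_mk, conj_mk, mk_mul, mk_mul, mk_eq_mk]
      constructor
      · field_simp; ring
      · field_simp
        exact div_self (by rw [mul_comm]; exact h20)
  · -- not subnormal
    refine ⟨mk 0 4 (by norm_num), mk_mem_G 0 4 (by norm_num),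
      mk 1 1 one_ne_zero, mk_mem_H _ U.one.z2 U.one,
      mk 0 3 (by norm_num), mk_mem_H _ ⟨0, 1, odd_one, by norm_num⟩ U.three, ?_⟩
    have e1 : mk 0 4 (by norm_num) * mk 1 1 one_ne_zero * (mk 0 4 (by norm_num))⁻¹
        = mk (1/4) 1 one_ne_zero := by
      rw [mk_inv, mk_mul, mk_mul, mk_eq_mk]; norm_num
    rw [e1]
    have e2 : mk (1/4) 1 one_ne_zero * mk 0 3 (by norm_num) * (mk (1/4) 1 one_ne_zero)⁻¹
        = mk (1/2) 3 (by norm_num) := by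
      rw [mk_inv, mk_mul, mk_mul, mk_eq_mk]; norm_num
    rw [e2]
    intro hmem
    have h1 : Odd (((mk (1/2) 3 (by norm_num) : GL (Fin 2) ℚ) :
        Matrix (Fin 2) (Fin 2) ℚ) 0 1).den := hmem.2.1
    simp only [mk_val, Matrix.cons_val', Matrix.cons_val_zero, Matrix.cons_val_one,
      Matrix.head_cons, Matrix.head_fin_const, Matrix.cons_val_fin_one,
      Matrix.empty_val'] at h1
    exact not_z2_half (z2_of_den h1)
end
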